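/- arXiv:2307.00244 — 7 statements merged into one kernel-verified Lean document; each statement's English description precedes it below -/
import Mathlib

section
/- Define F(x) = Θ_q(x)² / (q x Θ_q(−x)) for x ∈ ℂ ∖ {0}. Then F is meromorphic on ℂ ∖ {0}, and for every x ≠ 0 with Θ_q(−x) ≠ 0 one has F(qx) = x · F(x); that is, F is a solution of the q-difference equation y(qx) = x y(x). -/
/-- The Jacobi `q`-theta function `Θ_q(x) = ∑_{n ∈ ℤ} (−1)ⁿ q^{−n(n−1)/2} xⁿ`. -/
noncomputable def thetaQ (q x : ℂ) : ℂ :=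
  ∑' n : ℤ, (-1 : ℂ) ^ n * q ^ (-(n * (n - 1) / 2)) * x ^ n

/-- Ratio-test summability helper. -/
lemma thetaQ_aux_summable {A M : ℝ} (hA : 1 < A) (hM : 0 < M) (e : ℕ → ℤ)
    (he : ∀ n : ℕ, e (n + 1) ≤ e n - n) :
    Summable fun n : ℕ => A ^ e n * M ^ n := by
  have hA0 : (0 : ℝ) < A := lt_trans one_pos hA
  have hinv : A⁻¹ < 1 := inv_lt_one_of_one_lt₀ hA
  have htend : Filter.Tendsto (fun n : ℕ => A⁻¹ ^ n * M) Filter.atTop (nhds 0) := by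
    simpa using (tendsto_pow_atTop_nhds_zero_of_lt_one (by positivity) hinv).mul_const M
  have hev : ∀ᶠ n : ℕ in Filter.atTop, A⁻¹ ^ n * M ≤ 1 / 2 :=
    htend.eventually (eventually_le_nhds (by norm_num))
  refine summable_of_ratio_norm_eventually_le (r := 1 / 2) (by norm_num) ?_
  filter_upwards [hev] with n hn
  have hfpos : ∀ m : ℕ, 0 < A ^ e m * M ^ m := fun m => by positivity
  rw [Real.norm_of_nonneg (hfpos (n + 1)).le, Real.norm_of_nonneg (hfpos n).le]
  have h1 : A ^ e (n + 1) ≤ A ^ (e n - n) := zpow_le_zpow_right₀ hA.le (he n)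
  have h2 : A ^ (e n - (n : ℤ)) * M ^ (n + 1) = (A ^ e n * M ^ n) * (A⁻¹ ^ n * M) := by
    rw [zpow_sub₀ (ne_of_gt hA0)]
    rw [div_eq_mul_inv, ← inv_zpow, zpow_natCast]
    ring
  calc A ^ e (n + 1) * M ^ (n + 1) ≤ A ^ (e n - (n : ℤ)) * M ^ (n + 1) := by
        exact mul_le_mul_of_nonneg_right h1 (by positivity)
    _ = (A ^ e n * M ^ n) * (A⁻¹ ^ n * M) := h2
    _ ≤ (A ^ e n * M ^ n) * (1 / 2) := by
        exact mul_le_mul_of_nonneg_left hn (hfpos n).le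
    _ = 1 / 2 * (A ^ e n * M ^ n) := by ring

/-- Summability of the dominating series over `ℤ`. -/
lemma thetaQ_aux_summable_int {A M : ℝ} (hA : 1 < A) (hM : 0 < M) :
    Summable fun n : ℤ => A ^ (-(n * (n - 1) / 2)) * M ^ n.natAbs := by
  apply Summable.of_nat_of_neg
  · refine (thetaQ_aux_summable hA hM (fun n : ℕ => -((n : ℤ) * ((n : ℤ) - 1) / 2))
      (fun n => ?_)).congr (fun n => by simp)
    push_cast
    rw [show ((n : ℤ) + 1) * ((n : ℤ) + 1 - 1) = (n : ℤ) * ((n : ℤ) - 1) + n * 2 by ring,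
      Int.add_mul_ediv_right _ _ (by norm_num : (2:ℤ) ≠ 0)]
    omega
  · refine (thetaQ_aux_summable hA hM (fun n : ℕ => -((-(n : ℤ)) * ((-(n : ℤ)) - 1) / 2))
      (fun n => ?_)).congr (fun n => by simp)
    push_cast
    rw [show (-((n : ℤ) + 1)) * (-((n : ℤ) + 1) - 1) = (-(n : ℤ)) * (-(n : ℤ) - 1) + (n + 1) * 2 by
        ring,
      Int.add_mul_ediv_right _ _ (by norm_num : (2:ℤ) ≠ 0)]
    omega

/-- `thetaQ q` is differentiable away from the origin. -/
lemma thetaQ_differentiableOn {q : ℂ} (hq : 1 < ‖q‖) :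
    DifferentiableOn ℂ (thetaQ q) {x : ℂ | x ≠ 0} := by
  have hs : IsOpen {x : ℂ | x ≠ 0} := isOpen_compl_singleton
  have hTLU : TendstoLocallyUniformlyOn
      (fun (t : Finset ℤ) (x : ℂ) => ∑ n ∈ t, (-1 : ℂ) ^ n * q ^ (-(n * (n - 1) / 2)) * x ^ n)
      (thetaQ q) Filter.atTop {x : ℂ | x ≠ 0} := by
    rw [tendstoLocallyUniformlyOn_iff_forall_isCompact hs]
    intro K hK hKc
    rcases K.eq_empty_or_nonempty with rfl | hne
    · refine (tendstoUniformlyOn_tsum (u := fun _ => (0:ℝ)) summable_zero ?_).congr_right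
        (fun x hx => rfl)
      intro n x hx; exact absurd hx (Set.notMem_empty x)
    · obtain ⟨x0, hx0K, hx0'⟩ := hKc.exists_isMinOn hne continuous_norm.continuousOn
      obtain ⟨x1, hx1K, hx1'⟩ := hKc.exists_isMaxOn hne continuous_norm.continuousOn
      have hx0 : ∀ y ∈ K, ‖x0‖ ≤ ‖y‖ := fun y hy => hx0' hy
      have hx1 : ∀ y ∈ K, ‖y‖ ≤ ‖x1‖ := fun y hy => hx1' hy
      have hx0ne : x0 ≠ 0 := hK hx0K
      have hx0pos : 0 < ‖x0‖ := norm_pos_iff.mpr hx0ne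
      set M : ℝ := max ‖x1‖ ‖x0‖⁻¹ with hM
      have hMpos : 0 < M := lt_max_of_lt_right (by positivity)
      have hbound : ∀ (n : ℤ), ∀ x ∈ K,
          ‖(-1 : ℂ) ^ n * q ^ (-(n * (n - 1) / 2)) * x ^ n‖
            ≤ ‖q‖ ^ (-(n * (n - 1) / 2)) * M ^ n.natAbs := by
        intro n x hx
        have hxne : x ≠ 0 := hK hx
        have hxpos : 0 < ‖x‖ := norm_pos_iff.mpr hxne
        have hxn : ‖x‖ ^ n ≤ M ^ n.natAbs := by
          rcases le_or_gt 0 n with hn | hn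
          · lift n to ℕ using hn
            rw [zpow_natCast, Int.natAbs_natCast]
            exact pow_le_pow_left₀ hxpos.le (le_trans (hx1 x hx) (le_max_left _ _)) n
          · have hxM : ‖x‖⁻¹ ≤ M := le_trans (by gcongr; exact hx0 x hx) (le_max_right _ _)
            have h1 : ‖x‖ ^ n = (‖x‖⁻¹) ^ (n.natAbs) := by
              rw [inv_pow, ← zpow_natCast, ← zpow_neg]
              congr 1
              omega
            rw [h1]
            exact pow_le_pow_left₀ (by positivity) hxM _
        rw [norm_mul, norm_mul, norm_zpow, norm_zpow, norm_neg, norm_one, one_zpow, one_mul, norm_zpow]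
        exact mul_le_mul_of_nonneg_left hxn (zpow_nonneg (norm_nonneg q) _)
      exact tendstoUniformlyOn_tsum (thetaQ_aux_summable_int hq hMpos) hbound
  refine hTLU.differentiableOn ?_ hs
  filter_upwards with t
  refine DifferentiableOn.fun_sum fun n _ => ?_
  intro x hx
  exact ((differentiableAt_const _).mul
    ((differentiableAt_zpow.mpr (Or.inl hx)))).differentiableWithinAt

/-- The key functional equation `Θ_q(qx) = -qx Θ_q(x)`. -/
lemma thetaQ_q_mul {q x : ℂ} (hq : q ≠ 0) (hx : x ≠ 0) :
    thetaQ q (q * x) = -(q * x) * thetaQ q x := by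
  unfold thetaQ
  rw [← tsum_mul_left]
  rw [← (Equiv.addRight (1 : ℤ)).tsum_eq
    (fun n => (-1 : ℂ) ^ n * q ^ (-(n * (n - 1) / 2)) * (q * x) ^ n)]
  congr 1
  ext n
  simp only [Equiv.coe_addRight]
  set k : ℤ := n * (n - 1) / 2 with hk
  have he : (-((n + 1) * (n + 1 - 1) / 2)) = -k - n := by
    rw [hk, show (n + 1) * (n + 1 - 1) = n * (n - 1) + n * 2 by ring,
      Int.add_mul_ediv_right _ _ (by norm_num : (2:ℤ) ≠ 0)]
    ring
  rw [he, zpow_sub₀ hq, zpow_add₀ (show (-1 : ℂ) ≠ 0 by norm_num),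
    mul_zpow, zpow_add₀ hq, zpow_add₀ hx, zpow_one, zpow_one]
  have hqn : (q : ℂ) ^ n ≠ 0 := zpow_ne_zero n hq
  have hqk : (q : ℂ) ^ k ≠ 0 := zpow_ne_zero k hq
  field_simp

/-- The function `F(x) = Θ_q(x)² / (q x Θ_q(−x))` is meromorphic on
`ℂ ∖ {0}` and satisfies `F(qx) = x F(x)` whenever `x ≠ 0` and `Θ_q(−x) ≠ 0`. -/
theorem meromorphic_solution_y_qx_eq_x_y (q : ℂ) (hq : 1 < ‖q‖) :
    MeromorphicOn (fun x : ℂ => thetaQ q x ^ 2 / (q * x * thetaQ q (-x))) {x : ℂ | x ≠ 0} ∧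
      ∀ x : ℂ, x ≠ 0 → thetaQ q (-x) ≠ 0 →
        thetaQ q (q * x) ^ 2 / (q * (q * x) * thetaQ q (-(q * x)))
          = x * (thetaQ q x ^ 2 / (q * x * thetaQ q (-x))) := by
  have hq0 : q ≠ 0 := by
    intro h; rw [h] at hq; simp at hq; linarith
  have hs : IsOpen {x : ℂ | x ≠ 0} := isOpen_compl_singleton
  have hdiff := thetaQ_differentiableOn hq
  have hA : AnalyticOnNhd ℂ (thetaQ q) {x : ℂ | x ≠ 0} := hdiff.analyticOnNhd hs
  constructor
  · apply MeromorphicOn.div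
    · exact (hA.pow 2).meromorphicOn
    · apply MeromorphicOn.mul
      · exact ((analyticOnNhd_const.mul analyticOnNhd_id
          : AnalyticOnNhd ℂ (fun x : ℂ => q * x) {x : ℂ | x ≠ 0})).meromorphicOn
      · refine (AnalyticOnNhd.meromorphicOn ?_)
        have : AnalyticOnNhd ℂ (fun x : ℂ => -x) {x : ℂ | x ≠ 0} := analyticOnNhd_id.neg
        refine hA.comp this ?_
        intro x hx
        simpa using hx
  · intro x hx hθ
    have h1 : thetaQ q (q * x) = -(q * x) * thetaQ q x := thetaQ_q_mul hq0 hx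
    have h2 : thetaQ q (-(q * x)) = q * x * thetaQ q (-x) := by
      have := thetaQ_q_mul hq0 (neg_ne_zero.mpr hx) (q := q)
      rw [show q * -x = -(q * x) by ring] at this
      rw [this]; ring
    rw [h1, h2]
    field_simp
end

section
/- Let a ∈ ℂ ∖ {0}. The zeros of the entire function f_a are exactly the points a q^n with n an integer ≥ 1: for z ∈ ℂ one has f_a(z) = 0 if and only if z = a q^n for some integer n ≥ 1. Moreover every such zero is simple, i.e. the complex derivative satisfies f_a'(a q^n) ≠ 0 for every integer n ≥ 1. -/
/-- The `q`-Pochhammer symbol `(q;q)_n = ∏_{k=1}^n (1 − qᵏ)`. -/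
noncomputable def qPoch (q : ℂ) (n : ℕ) : ℂ :=
  ∏ k ∈ Finset.range n, (1 - q ^ (k + 1))

open Filter Topology

lemma qpow_ne_one {q : ℂ} (hq : 1 < ‖q‖) {m : ℕ} (hm : 1 ≤ m) : q ^ m ≠ 1 := by
  intro h
  have h1 : ‖q ^ m‖ = 1 := by rw [h]; simp
  rw [norm_pow] at h1
  have h2 : 1 < ‖q‖ ^ m := one_lt_pow₀ hq (by omega)
  linarith

lemma one_sub_qpow_ne_zero {q : ℂ} (hq : 1 < ‖q‖) (k : ℕ) :
    1 - q ^ (k + 1) ≠ 0 := by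
  intro h
  exact qpow_ne_one hq (Nat.le_add_left 1 k) (by linear_combination -h)

lemma qPoch_ne_zero {q : ℂ} (hq : 1 < ‖q‖) (n : ℕ) : qPoch q n ≠ 0 :=
  Finset.prod_ne_zero_iff.2 fun k _ => one_sub_qpow_ne_zero hq k

lemma qPoch_succ (q : ℂ) (n : ℕ) : qPoch q (n + 1) = qPoch q n * (1 - q ^ (n + 1)) :=
  Finset.prod_range_succ _ _

lemma tendsto_norm_one_sub_qpow {q : ℂ} (hq : 1 < ‖q‖) :
    Tendsto (fun n : ℕ => ‖(1 : ℂ) - q ^ (n + 1)‖) atTop atTop := by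
  apply tendsto_atTop_mono (f := fun n : ℕ => ‖q‖ ^ (n + 1) - 1)
  · intro n
    calc ‖q‖ ^ (n + 1) - 1 = ‖q ^ (n + 1)‖ - ‖(1 : ℂ)‖ := by
          simp [norm_pow]
      _ ≤ ‖q ^ (n + 1) - 1‖ := norm_sub_norm_le _ _
      _ = ‖(1 : ℂ) - q ^ (n + 1)‖ := norm_sub_rev _ _
  · have h1 : Tendsto (fun n : ℕ => ‖q‖ ^ (n + 1)) atTop atTop :=
      (tendsto_pow_atTop_atTop_of_one_lt hq).comp (tendsto_add_atTop_nat 1)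
    simpa [sub_eq_add_neg] using tendsto_atTop_add_const_right atTop (-1) h1

lemma summable_term {q : ℂ} (hq : 1 < ‖q‖) (z : ℂ) :
    Summable (fun n : ℕ => z ^ n / qPoch q n) := by
  rcases eq_or_ne z 0 with rfl | hz
  · apply summable_of_ne_finset_zero (s := {0})
    intro n hn
    simp only [Finset.mem_singleton] at hn
    simp [zero_pow hn]
  · apply summable_of_ratio_test_tendsto_lt_one zero_lt_one
    · exact Eventually.of_forall fun n => div_ne_zero (pow_ne_zero _ hz) (qPoch_ne_zero hq n)
    · have h1 : Tendsto (fun n : ℕ => ‖z‖ * ‖(1 : ℂ) - q ^ (n + 1)‖⁻¹) atTop (𝓝 (‖z‖ * 0)) :=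
        tendsto_const_nhds.mul (tendsto_norm_one_sub_qpow hq).inv_tendsto_atTop
      rw [mul_zero] at h1
      apply Tendsto.congr _ h1
      intro n
      have hP := qPoch_ne_zero hq n
      have h1s := one_sub_qpow_ne_zero hq n
      have key : z ^ (n+1) / qPoch q (n+1) / (z ^ n / qPoch q n) = z / (1 - q ^ (n+1)) := by
        rw [qPoch_succ, pow_succ z n]
        field_simp
      calc ‖z‖ * ‖(1:ℂ) - q ^ (n+1)‖⁻¹ = ‖z / (1 - q ^ (n+1))‖ := by
            rw [norm_div, div_eq_mul_inv]
        _ = ‖z ^ (n+1) / qPoch q (n+1) / (z ^ n / qPoch q n)‖ := by rw [key]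
        _ = ‖z ^ (n+1) / qPoch q (n+1)‖ / ‖z ^ n / qPoch q n‖ := norm_div _ _

/-- The entire function `f_a(x) = ∑_{n≥0} (x/a)ⁿ/(q;q)_n`. -/
noncomputable def fA (q a x : ℂ) : ℂ :=
  ∑' n : ℕ, (x / a) ^ n / qPoch q n

lemma fA_eq_S (q a x : ℂ) : fA q a x = ∑' n : ℕ, (x / a) ^ n / qPoch q n := rfl

lemma S_feq {q : ℂ} (hq : 1 < ‖q‖) (z : ℂ) :
    (∑' n : ℕ, (q * z) ^ n / qPoch q n) = (1 - z) * ∑' n : ℕ, z ^ n / qPoch q n := by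
  have hs := summable_term hq z
  have hs2 := summable_term hq (q * z)
  have hv : (fun n : ℕ => (1 - q ^ n) * z ^ n / qPoch q n)
      = fun n : ℕ => z ^ n / qPoch q n - (q * z) ^ n / qPoch q n := by
    funext n; rw [mul_pow]; ring
  have hsv : Summable (fun n : ℕ => (1 - q ^ n) * z ^ n / qPoch q n) := by
    rw [hv]; exact hs.sub hs2
  have key : (∑' n : ℕ, (1 - q ^ n) * z ^ n / qPoch q n)
      = z * ∑' n : ℕ, z ^ n / qPoch q n := by
    rw [Summable.tsum_eq_zero_add hsv]
    have h0 : (1 - q ^ 0) * z ^ 0 / qPoch q 0 = 0 := by simp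
    have hterm : ∀ n : ℕ, (1 - q ^ (n + 1)) * z ^ (n + 1) / qPoch q (n + 1)
        = z * (z ^ n / qPoch q n) := by
      intro n
      rw [qPoch_succ, pow_succ z n]
      have hP := qPoch_ne_zero hq n
      have h1s := one_sub_qpow_ne_zero hq n
      field_simp
    rw [h0, zero_add, tsum_congr hterm, tsum_mul_left]
  have hsub : (∑' n : ℕ, z ^ n / qPoch q n) - (∑' n : ℕ, (q * z) ^ n / qPoch q n)
      = z * ∑' n : ℕ, z ^ n / qPoch q n := by
    rw [← Summable.tsum_sub hs hs2, ← key]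
    exact tsum_congr fun n => congrFun hv.symm n
  linear_combination -hsub

lemma fA_feq {q : ℂ} (hq : 1 < ‖q‖) {a : ℂ} (ha : a ≠ 0) (x : ℂ) :
    fA q a (q * x) = (1 - x / a) * fA q a x := by
  rw [fA_eq_S, fA_eq_S, mul_div_assoc]
  exact S_feq hq (x / a)

lemma fA_zero_val (q a : ℂ) (ha : a ≠ 0) : fA q a 0 = 1 := by
  rw [fA_eq_S, tsum_eq_single 0]
  · simp [qPoch]
  · intro n hn
    rw [zero_div, zero_pow hn, zero_div]

noncomputable def qCoef (q a : ℂ) : ℕ → ℂ := fun n => (a ^ n * qPoch q n)⁻¹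

lemma fA_eq_ofScalarsSum (q a : ℂ) :
    fA q a = FormalMultilinearSeries.ofScalarsSum (E := ℂ) (qCoef q a) := by
  funext x
  rw [FormalMultilinearSeries.ofScalars_sum_eq, fA_eq_S]
  refine tsum_congr fun n => ?_
  rw [qCoef, smul_eq_mul, div_pow, div_div, mul_comm ((a ^ n * qPoch q n)⁻¹), div_eq_mul_inv]

lemma qRadius_top {q : ℂ} (hq : 1 < ‖q‖) {a : ℂ} (ha : a ≠ 0) :
    (FormalMultilinearSeries.ofScalars ℂ (qCoef q a)).radius = ⊤ := by
  apply FormalMultilinearSeries.ofScalars_radius_eq_top_of_tendsto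
  · exact Filter.Eventually.of_forall fun n =>
      inv_ne_zero (mul_ne_zero (pow_ne_zero _ ha) (qPoch_ne_zero hq n))
  · have h1 : Filter.Tendsto (fun n : ℕ => ‖a‖⁻¹ * ‖(1 : ℂ) - q ^ (n + 1)‖⁻¹)
        Filter.atTop (nhds (‖a‖⁻¹ * 0)) :=
      tendsto_const_nhds.mul (tendsto_norm_one_sub_qpow hq).inv_tendsto_atTop
    rw [mul_zero] at h1
    apply Filter.Tendsto.congr _ h1
    intro n
    have hP := qPoch_ne_zero hq n
    have h1s := one_sub_qpow_ne_zero hq n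
    have key : qCoef q a (n + 1) / qCoef q a n = (a * (1 - q ^ (n + 1)))⁻¹ := by
      rw [qCoef, qCoef, qPoch_succ, pow_succ a n]
      field_simp
    have hne : qCoef q a n ≠ 0 := inv_ne_zero (mul_ne_zero (pow_ne_zero _ ha) hP)
    calc ‖a‖⁻¹ * ‖(1 : ℂ) - q ^ (n + 1)‖⁻¹ = ‖(a * (1 - q ^ (n + 1)))⁻¹‖ := by
          rw [norm_inv, norm_mul, mul_inv]
      _ = ‖qCoef q a (n + 1) / qCoef q a n‖ := by rw [key]
      _ = ‖qCoef q a n.succ‖ / ‖qCoef q a n‖ := by rw [norm_div]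

lemma fA_analytic {q : ℂ} (hq : 1 < ‖q‖) {a : ℂ} (ha : a ≠ 0) (z : ℂ) :
    AnalyticAt ℂ (fA q a) z := by
  have hball : HasFPowerSeriesOnBall (fA q a)
      (FormalMultilinearSeries.ofScalars ℂ (qCoef q a)) 0
      (FormalMultilinearSeries.ofScalars ℂ (qCoef q a)).radius := by
    rw [fA_eq_ofScalarsSum]
    exact FormalMultilinearSeries.hasFPowerSeriesOnBall _ (by rw [qRadius_top hq ha]; simp)
  exact hball.analyticAt_of_mem (by rw [qRadius_top hq ha]; exact edist_lt_top z 0)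

/-- For `a ≠ 0`, the zeros of `f_a` are exactly the points `a qⁿ`
with `n ≥ 1`, and each of these zeros is simple. -/
theorem fA_zeros (q : ℂ) (hq : 1 < ‖q‖) (a : ℂ) (ha : a ≠ 0) :
    (∀ z : ℂ, fA q a z = 0 ↔ ∃ n : ℕ, 1 ≤ n ∧ z = a * q ^ n) ∧
      ∀ n : ℕ, 1 ≤ n → deriv (fA q a) (a * q ^ n) ≠ 0 := by
  have hq0 : q ≠ 0 := by
    intro h
    rw [h] at hq
    simp at hq
    linarith
  have hdiff : Differentiable ℂ (fA q a) := fun z => (fA_analytic hq ha z).differentiableAt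
  have hqpow : ∀ m : ℕ, 1 ≤ m → q ^ m ≠ 1 := fun m hm => qpow_ne_one hq hm
  have forward : ∀ n : ℕ, 1 ≤ n → fA q a (a * q ^ n) = 0 := by
    intro n
    induction n with
    | zero => intro h; omega
    | succ m ih =>
      intro _
      have e : a * q ^ (m + 1) = q * (a * q ^ m) := by ring
      rw [e, fA_feq hq ha]
      rcases Nat.eq_zero_or_pos m with rfl | hm
      · rw [pow_zero, mul_one, div_self ha]
        ring
      · rw [ih hm, mul_zero]
  have zero_iff : ∀ z : ℂ, fA q a z = 0 ↔ ∃ n : ℕ, 1 ≤ n ∧ z = a * q ^ n := by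
    intro z
    constructor
    · intro hz
      by_contra hcon
      push_neg at hcon
      have claim : ∀ N : ℕ, fA q a (z / q ^ N) = 0 := by
        intro N
        induction N with
        | zero => simpa using hz
        | succ m ih =>
          have e : z / q ^ m = q * (z / q ^ (m + 1)) := by
            field_simp
            ring
          rw [e, fA_feq hq ha] at ih
          have hfac : (1 : ℂ) - z / q ^ (m + 1) / a ≠ 0 := by
            intro h
            have h3 : z / (q ^ (m + 1) * a) = 1 := by
              rw [← div_div]
              linear_combination -h
            have h4 : z = q ^ (m + 1) * a :=
              (div_eq_one_iff_eq (mul_ne_zero (pow_ne_zero _ hq0) ha)).mp h3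
            exact hcon (m + 1) (by omega) (by rw [h4]; ring)
          rcases mul_eq_zero.mp ih with h | h
          · exact absurd h hfac
          · exact h
      have hlt : ‖q⁻¹‖ < 1 := by
        rw [norm_inv]
        exact inv_lt_one_of_one_lt₀ hq
      have ht : Filter.Tendsto (fun N : ℕ => z / q ^ N) Filter.atTop (nhds 0) := by
        have h0 : Filter.Tendsto (fun N : ℕ => z * (q⁻¹) ^ N) Filter.atTop (nhds (z * 0)) :=
          tendsto_const_nhds.mul (tendsto_pow_atTop_nhds_zero_of_norm_lt_one hlt)
        rw [mul_zero] at h0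
        apply Filter.Tendsto.congr _ h0
        intro N
        rw [inv_pow, div_eq_mul_inv]
      have h1 : Filter.Tendsto (fun N : ℕ => fA q a (z / q ^ N)) Filter.atTop (nhds 1) := by
        have hc := (hdiff.continuous.tendsto 0).comp ht
        rwa [fA_zero_val q a ha] at hc
      have h2 : Filter.Tendsto (fun N : ℕ => fA q a (z / q ^ N)) Filter.atTop (nhds 0) := by
        simp only [claim]
        exact tendsto_const_nhds
      exact one_ne_zero (tendsto_nhds_unique h1 h2)
    · rintro ⟨n, hn, rfl⟩
      exact forward n hn
  refine ⟨zero_iff, ?_⟩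
  have hfa : fA q a a ≠ 0 := by
    intro h
    obtain ⟨n, hn, he⟩ := (zero_iff a).mp h
    have h2 := mul_left_cancel₀ ha (show a * 1 = a * q ^ n by rw [mul_one]; exact he)
    exact hqpow n hn h2.symm
  have hD : ∀ x : ℂ, deriv (fA q a) (q * x) * q
      = -(1/a) * fA q a x + (1 - x / a) * deriv (fA q a) x := by
    intro x
    have hg : HasDerivAt (fun y => fA q a (q * y)) (deriv (fA q a) (q * x) * q) x := by
      have h1 : HasDerivAt (fun y : ℂ => q * y) q x := by
        simpa using (hasDerivAt_id x).const_mul q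
      exact (hdiff (q * x)).hasDerivAt.comp x h1
    have hh : HasDerivAt (fun y => (1 - y / a) * fA q a y)
        (-(1/a) * fA q a x + (1 - x / a) * deriv (fA q a) x) x := by
      have h1 : HasDerivAt (fun y : ℂ => 1 - y / a) (-(1/a)) x := by
        simpa using ((hasDerivAt_id x).div_const a).const_sub 1
      exact h1.mul (hdiff x).hasDerivAt
    have heq : (fun y => fA q a (q * y)) = fun y => (1 - y / a) * fA q a y :=
      funext fun y => fA_feq hq ha y
    rw [heq] at hg
    exact hg.unique hh
  intro n
  induction n with
  | zero => intro h; omega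
  | succ m ih =>
    intro _
    rcases Nat.eq_zero_or_pos m with rfl | hm
    · have h := hD a
      rw [div_self ha] at h
      have h' : deriv (fA q a) (q * a) * q = -(1/a) * fA q a a := by
        rw [h]; ring
      intro h0
      rw [show a * q ^ 1 = q * a by ring] at h0
      rw [h0, zero_mul] at h'
      rcases mul_eq_zero.mp h'.symm with hc | hc
      · have : (1 : ℂ) / a ≠ 0 := one_div_ne_zero ha
        exact this (by linear_combination -hc)
      · exact hfa hc
    · have h := hD (a * q ^ m)
      rw [forward m hm] at h
      have hdiv : a * q ^ m / a = q ^ m := by field_simp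
      rw [hdiv] at h
      rw [show q * (a * q ^ m) = a * q ^ (m + 1) by ring] at h
      intro h0
      rw [h0, zero_mul] at h
      have hne : (1 : ℂ) - q ^ m ≠ 0 := fun hc => hqpow m hm (by linear_combination -hc)
      have h2 : (1 - q ^ m) * deriv (fA q a) (a * q ^ m) = 0 := by
        linear_combination -h
      rcases mul_eq_zero.mp h2 with hc | hc
      · exact absurd hc hne
      · exact ih hm hc
end

section
/- Let g be an entire function with g(0) = 0, and let (g_n)_{n≥1} be its Taylor coefficients at 0, so that g(x) = ∑_{n≥1} g_n x^n for all x ∈ ℂ. Then the power series G_g(x) = ∑_{n≥1} (g_n/(q^n − 1)) x^n converges for every x ∈ ℂ, G_g is entire, and G_g(qx) = g(x) + G_g(x) for all x ∈ ℂ. Consequently the entire, nowhere vanishing function e^{G_g(x)} satisfies e^{G_g(qx)} = e^{g(x)} e^{G_g(x)} for all x ∈ ℂ, i.e. it is an entire zero-free solution of the q-difference equation y(qx) = e^{g(x)} y(x). -/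
/-- If `g` is entire with `g(0) = 0` and Taylor coefficients `(gₙ)`
(so `g(x) = ∑_{n≥1} gₙ xⁿ`), then `G_g(x) = ∑_{n≥1} (gₙ/(qⁿ−1)) xⁿ` converges
everywhere, defines an entire function with `G_g(qx) = g(x) + G_g(x)`, and
`exp(G_g)` is an entire zero-free solution of `y(qx) = e^{g(x)} y(x)`. -/
theorem exp_Gg_solution (q : ℂ) (hq : 1 < ‖q‖)
    (g : ℂ → ℂ) (hg : AnalyticOnNhd ℂ g Set.univ) (hg0 : g 0 = 0)
    (gc : ℕ → ℂ) (hgc0 : gc 0 = 0)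
    (hgsum : ∀ x : ℂ, HasSum (fun n : ℕ => gc n * x ^ n) (g x)) :
    (∀ x : ℂ, Summable (fun n : ℕ => gc n / (q ^ n - 1) * x ^ n)) ∧
      AnalyticOnNhd ℂ (fun x : ℂ => ∑' n : ℕ, gc n / (q ^ n - 1) * x ^ n) Set.univ ∧
      (∀ x : ℂ, (∑' n : ℕ, gc n / (q ^ n - 1) * (q * x) ^ n)
          = g x + ∑' n : ℕ, gc n / (q ^ n - 1) * x ^ n) ∧
      (∀ x : ℂ, Complex.exp (∑' n : ℕ, gc n / (q ^ n - 1) * x ^ n) ≠ 0) ∧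
      (∀ x : ℂ, Complex.exp (∑' n : ℕ, gc n / (q ^ n - 1) * (q * x) ^ n)
          = Complex.exp (g x) * Complex.exp (∑' n : ℕ, gc n / (q ^ n - 1) * x ^ n)) := by
  set c : ℕ → ℂ := fun n => gc n / (q ^ n - 1) with hc
  have hqpos : (0 : ℝ) < ‖q‖ - 1 := by linarith
  -- key norm bound
  have hbound : ∀ n : ℕ, ‖c n‖ ≤ (‖q‖ - 1)⁻¹ * ‖gc n‖ := by
    intro n
    rcases Nat.eq_zero_or_pos n with rfl | hn
    · simp [hc, hgc0]
    · have h1 : ‖q‖ - 1 ≤ ‖q ^ n - 1‖ := by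
        have hle : ‖q‖ ≤ ‖q‖ ^ n := by
          calc ‖q‖ = ‖q‖ ^ 1 := (pow_one _).symm
          _ ≤ ‖q‖ ^ n := pow_le_pow_right₀ (le_of_lt hq) hn
        have h2 : ‖q ^ n‖ - ‖(1 : ℂ)‖ ≤ ‖q ^ n - 1‖ := norm_sub_norm_le _ _
        simp only [norm_pow, norm_one] at h2 ⊢
        linarith
      rw [hc]
      simp only [norm_div]
      rw [div_le_iff₀ (by linarith)]
      calc ‖gc n‖ = (‖q‖ - 1)⁻¹ * ‖gc n‖ * (‖q‖ - 1) := by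
            field_simp
        _ ≤ (‖q‖ - 1)⁻¹ * ‖gc n‖ * ‖q ^ n - 1‖ := by
            apply mul_le_mul_of_nonneg_left h1; positivity
  -- summability
  have hsummg : ∀ x : ℂ, Summable (fun n : ℕ => ‖gc n * x ^ n‖) :=
    fun x => summable_norm_iff.mpr (hgsum x).summable
  have hsumm : ∀ x : ℂ, Summable (fun n : ℕ => ‖c n * x ^ n‖) := by
    intro x
    refine Summable.of_nonneg_of_le (fun n => norm_nonneg _) (fun n => ?_)
      ((hsummg x).mul_left ((‖q‖ - 1)⁻¹))
    simp only [norm_mul]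
    calc ‖c n‖ * ‖x ^ n‖ ≤ (‖q‖ - 1)⁻¹ * ‖gc n‖ * ‖x ^ n‖ :=
          mul_le_mul_of_nonneg_right (hbound n) (norm_nonneg _)
      _ = (‖q‖ - 1)⁻¹ * (‖gc n‖ * ‖x ^ n‖) := by ring
  have hsumm' : ∀ x : ℂ, Summable (fun n : ℕ => c n * x ^ n) :=
    fun x => summable_norm_iff.mp (hsumm x)
  -- functional equation
  have hfe : ∀ x : ℂ, (∑' n : ℕ, c n * (q * x) ^ n) = g x + ∑' n : ℕ, c n * x ^ n := by
    intro x
    have key : ∀ n : ℕ, c n * (q * x) ^ n - c n * x ^ n = gc n * x ^ n := by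
      intro n
      rcases Nat.eq_zero_or_pos n with rfl | hn
      · simp [hgc0, hc]
      · have hne : q ^ n - 1 ≠ 0 := by
          intro h
          have h1 : q ^ n = 1 := by linear_combination h
          have h2 := congrArg norm h1
          rw [norm_pow, norm_one] at h2
          have h3 : 1 < ‖q‖ ^ n := one_lt_pow₀ hq hn.ne'
          linarith
        rw [hc]
        field_simp [mul_pow]
        ring
    have h1 : HasSum (fun n : ℕ => c n * (q * x) ^ n - c n * x ^ n)
        ((∑' n : ℕ, c n * (q * x) ^ n) - ∑' n : ℕ, c n * x ^ n) :=
      (hsumm' (q * x)).hasSum.sub (hsumm' x).hasSum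
    have h2 : HasSum (fun n : ℕ => c n * (q * x) ^ n - c n * x ^ n) (g x) := by
      simpa only [key] using hgsum x
    have h3 := h1.unique h2
    linear_combination h3
  -- analyticity
  have hanal : AnalyticOnNhd ℂ (fun x : ℂ => ∑' n : ℕ, c n * x ^ n) Set.univ := by
    set p : FormalMultilinearSeries ℂ ℂ ℂ := FormalMultilinearSeries.ofScalars ℂ c with hp
    have hrad : p.radius = ⊤ := by
      refine ENNReal.eq_top_of_forall_nnreal_le fun r => p.le_radius_of_summable_norm ?_
      have := hsumm (r : ℂ)
      refine Summable.of_nonneg_of_le (fun n => by positivity) (fun n => ?_) this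
      have hn := FormalMultilinearSeries.ofScalars_norm (E := ℂ) (c := c) (n := n)
      rw [hn]
      simp only [norm_mul, norm_pow, Complex.norm_real, Real.norm_eq_abs,
        NNReal.abs_eq, Complex.norm_natCast]
      exact le_of_eq (by norm_num [abs_of_nonneg r.coe_nonneg])
    have hball : HasFPowerSeriesOnBall p.sum p 0 ⊤ := by
      have := p.hasFPowerSeriesOnBall (by rw [hrad]; exact ENNReal.zero_lt_top)
      rwa [hrad] at this
    have heq : (fun x : ℂ => ∑' n : ℕ, c n * x ^ n) = p.sum := by
      funext x
      rw [FormalMultilinearSeries.sum]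
      congr 1
      ext n
      rw [FormalMultilinearSeries.ofScalars_apply_eq]
      simp [smul_eq_mul]
    rw [heq]
    intro x _
    exact hball.analyticOnNhd x (EMetric.mem_ball.mpr (edist_lt_top _ _))
  refine ⟨hsumm', hanal, hfe, fun x => Complex.exp_ne_zero _, fun x => ?_⟩
  rw [hfe x, Complex.exp_add]
end

section
/- Let Θ_q' denote the complex derivative of Θ_q on ℂ ∖ {0}. Then for every x ≠ 0 one has q Θ_q'(qx) = −q Θ_q(x) − q x Θ_q'(x). Consequently, for every α ∈ ℂ, the function z(x) = α x Θ_q'(x)/Θ_q(x) satisfies z(qx) = z(x) + α for every x ≠ 0 with Θ_q(x) ≠ 0; that is, z is a solution of the q-difference equation y(qx) = y(x) + α, meromorphic on ℂ ∖ {0}. -/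
open Filter Topology

lemma half_lemma (n : ℤ) : (n + 1) * n / 2 = n * (n - 1) / 2 + n := by
  have h2 : 2 ∣ n * (n - 1) := by
    have := Int.even_mul_succ_self (n - 1)
    simpa [mul_comm] using this.two_dvd
  obtain ⟨a, ha⟩ := h2
  have h1 : (n + 1) * n = 2 * a + 2 * n := by rw [← ha]; ring
  rw [h1, ha]
  omega

lemma aux_nat_summable (A M : ℝ) (hA : 1 < A) (hM : 0 < M) (e : ℕ → ℤ)
    (he : ∀ n : ℕ, ∃ k : ℤ, (n : ℤ) ≤ k ∧ e (n + 1) = e n - k) :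
    Summable (fun n : ℕ => A ^ e n * M ^ n) := by
  have hA0 : (0 : ℝ) < A := lt_trans zero_lt_one hA
  have htend : Tendsto (fun n : ℕ => A ^ (-(n : ℤ)) * M) atTop (𝓝 0) := by
    have h := (tendsto_pow_atTop_nhds_zero_of_lt_one (by positivity)
      (inv_lt_one_of_one_lt₀ hA)).mul_const M
    rw [zero_mul] at h
    refine h.congr fun n => ?_
    rw [inv_pow, ← zpow_natCast A n, ← zpow_neg]
  apply summable_of_ratio_norm_eventually_le (r := 1 / 2) (by norm_num)
  filter_upwards [htend.eventually_le_const (by norm_num : (0 : ℝ) < 1 / 2)] with n hn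
  obtain ⟨k, hk, hek⟩ := he n
  have h1 : A ^ e (n + 1) * M ^ (n + 1) = (A ^ (-k) * M) * (A ^ e n * M ^ n) := by
    rw [hek, sub_eq_add_neg, zpow_add₀ (ne_of_gt hA0)]
    ring
  have h2 : A ^ (-k) * M ≤ 1 / 2 := by
    refine le_trans (mul_le_mul_of_nonneg_right ?_ hM.le) hn
    exact zpow_le_zpow_right₀ hA.le (neg_le_neg hk)
  have h3 : (0 : ℝ) ≤ A ^ e n * M ^ n := by positivity
  rw [Real.norm_eq_abs, Real.norm_eq_abs, abs_of_nonneg (by positivity), abs_of_nonneg h3, h1]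
  exact mul_le_mul_of_nonneg_right h2 h3

lemma aux_int_summable (A M : ℝ) (hA : 1 < A) (hM : 0 < M) :
    Summable (fun n : ℤ => A ^ (-(n * (n - 1) / 2)) * M ^ n.natAbs) := by
  apply Summable.of_nat_of_neg
  · have := aux_nat_summable A M hA hM (fun n : ℕ => -((n : ℤ) * ((n : ℤ) - 1) / 2)) ?_
    · refine this.congr fun n => ?_
      simp
    · intro n
      refine ⟨(n : ℤ), le_refl _, ?_⟩
      have h := half_lemma (n : ℤ)
      push_cast
      ring_nf
      ring_nf at h
      linarith [h]
  · have := aux_nat_summable A M hA hM (fun n : ℕ => -((-(n : ℤ)) * ((-(n : ℤ)) - 1) / 2)) ?_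
    · refine this.congr fun n => ?_
      simp
    · intro n
      refine ⟨(n : ℤ) + 1, by omega, ?_⟩
      have h := half_lemma (-(n : ℤ) - 1)
      have h2 : (-(n : ℤ) - 1 + 1) = -(n : ℤ) := by ring
      rw [h2] at h
      push_cast
      ring_nf
      ring_nf at h
      linarith [h]

lemma theta_diffOn (q : ℂ) (hq : 1 < ‖q‖) {r R : ℝ} (hr : 0 < r) :
    DifferentiableOn ℂ (thetaQ q)
      {x : ℂ | r < ‖x‖ ∧ ‖x‖ < R} := by
  set U : Set ℂ := {x : ℂ | r < ‖x‖ ∧ ‖x‖ < R} with hU_def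
  have hU : IsOpen U :=
    (isOpen_lt continuous_const continuous_norm).inter
      (isOpen_lt continuous_norm continuous_const)
  set M : ℝ := max R r⁻¹ with hM_def
  have hM : 0 < M := lt_max_of_lt_right (by positivity)
  have hsum := aux_int_summable (‖q‖) M hq hM
  have key : DifferentiableOn ℂ
      (fun x : ℂ => ∑' n : ℤ, (-1 : ℂ) ^ n * q ^ (-(n * (n - 1) / 2)) * x ^ n) U := by
    apply Complex.differentiableOn_tsum_of_summable_norm hsum _ hU
    · intro n w hw
      have hw0 : w ≠ 0 := by
        intro h
        rw [h] at hw
        simp only [hU_def, Set.mem_setOf_eq, norm_zero] at hw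
        linarith [hw.1]
      have h1 : ‖(-1 : ℂ) ^ n * q ^ (-(n * (n - 1) / 2)) * w ^ n‖
          = ‖q‖ ^ (-(n * (n - 1) / 2)) * ‖w‖ ^ n := by
        rw [norm_mul, norm_mul, norm_zpow, norm_zpow, norm_zpow]
        simp
      rw [h1]
      refine mul_le_mul_of_nonneg_left ?_ (by positivity)
      have hw1 : ‖w‖ ≤ R := le_of_lt hw.2
      have hw2 : r ≤ ‖w‖ := le_of_lt hw.1
      have hw3 : 0 < ‖w‖ := lt_of_lt_of_le hr hw2
      rcases le_or_gt 0 n with hn | hn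
      · lift n to ℕ using hn
        rw [zpow_natCast, Int.natAbs_natCast]
        calc ‖w‖ ^ n ≤ R ^ n := pow_le_pow_left₀ hw3.le hw1 n
          _ ≤ M ^ n := pow_le_pow_left₀ (le_trans hw3.le hw1) (le_max_left _ _) n
      · obtain ⟨m, rfl⟩ : ∃ m : ℕ, n = -(m : ℤ) := ⟨n.natAbs, by omega⟩
        rw [zpow_neg, zpow_natCast, Int.natAbs_neg, Int.natAbs_natCast]
        calc (‖w‖ ^ m)⁻¹ ≤ (r ^ m)⁻¹ := by
              apply inv_anti₀ (by positivity)
              exact pow_le_pow_left₀ hr.le hw2 m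
          _ = (r⁻¹) ^ m := by rw [inv_pow]
          _ ≤ M ^ m := pow_le_pow_left₀ (by positivity) (le_max_right _ _) m
    · intro n
      intro w hw
      have hw0 : w ≠ 0 := by
        intro h
        rw [h] at hw
        simp only [hU_def, Set.mem_setOf_eq, norm_zero] at hw
        linarith [hw.1]
      exact (((differentiableAt_id.zpow (Or.inl hw0)).const_mul _).differentiableWithinAt)
  exact key

lemma theta_analytic (q : ℂ) (hq : 1 < ‖q‖) :
    AnalyticOnNhd ℂ (thetaQ q) {x : ℂ | x ≠ 0} := by
  have hdiff : DifferentiableOn ℂ (thetaQ q) {x : ℂ | x ≠ 0} := by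
    intro x hx
    have hx0 : ‖x‖ ≠ 0 := by simpa using hx
    have hx1 : 0 < ‖x‖ := lt_of_le_of_ne (by positivity) (Ne.symm hx0)
    have h := theta_diffOn q hq (r := ‖x‖ / 2) (R := ‖x‖ + 1)
      (by positivity)
    have hmem : x ∈ {y : ℂ | ‖x‖ / 2 < ‖y‖ ∧
        ‖y‖ < ‖x‖ + 1} := ⟨by linarith, by linarith⟩
    have hopen : IsOpen {y : ℂ | ‖x‖ / 2 < ‖y‖ ∧
        ‖y‖ < ‖x‖ + 1} :=
      (isOpen_lt continuous_const continuous_norm).inter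
        (isOpen_lt continuous_norm continuous_const)
    exact ((h.differentiableAt (hopen.mem_nhds hmem)).differentiableWithinAt)
  exact hdiff.analyticOnNhd isOpen_ne

lemma theta_funeq (q : ℂ) (hq0 : q ≠ 0) (x : ℂ) (hx : x ≠ 0) :
    thetaQ q (q * x) = -q * x * thetaQ q x := by
  have hneg : (-1 : ℂ) ≠ 0 := by norm_num
  unfold thetaQ
  rw [← tsum_mul_left]
  have := (Equiv.subRight (1 : ℤ)).tsum_eq
    (fun n : ℤ => -q * x * ((-1 : ℂ) ^ n * q ^ (-(n * (n - 1) / 2)) * x ^ n))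
  rw [← this]
  apply tsum_congr
  intro n
  simp only [Equiv.subRight_apply]
  have he : -((n - 1) * (n - 1 - 1) / 2) = -(n * (n - 1) / 2) + (n - 1) := by
    have h := half_lemma (n - 1)
    have h2 : (n - 1 + 1) = n := by ring
    rw [h2] at h
    omega
  rw [he, mul_zpow, zpow_add₀ hq0, zpow_sub₀ hneg, zpow_sub₀ hx, zpow_sub₀ hq0]
  field_simp

/-- The derivative of `Θ_q` satisfies
`q Θ_q'(qx) = −q Θ_q(x) − q x Θ_q'(x)` for `x ≠ 0`; consequently, for any `α ∈ ℂ`,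
the function `z(x) = α x Θ_q'(x)/Θ_q(x)` satisfies `z(qx) = z(x) + α` whenever `x ≠ 0`
and `Θ_q(x) ≠ 0`, and is meromorphic on `ℂ ∖ {0}`. -/
theorem theta_log_deriv_solution (q : ℂ) (hq : 1 < ‖q‖) :
    (∀ x : ℂ, x ≠ 0 →
        q * deriv (thetaQ q) (q * x) = -q * thetaQ q x - q * x * deriv (thetaQ q) x) ∧
      ∀ α : ℂ,
        (∀ x : ℂ, x ≠ 0 → thetaQ q x ≠ 0 →
          α * (q * x) * deriv (thetaQ q) (q * x) / thetaQ q (q * x)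
            = α * x * deriv (thetaQ q) x / thetaQ q x + α) ∧
        MeromorphicOn (fun x : ℂ => α * x * deriv (thetaQ q) x / thetaQ q x)
          {x : ℂ | x ≠ 0} := by
  have hq0 : q ≠ 0 := by
    intro h
    rw [h] at hq
    simp at hq
    linarith
  have hA := theta_analytic q hq
  have hderiv : ∀ x : ℂ, x ≠ 0 →
      q * deriv (thetaQ q) (q * x) = -q * thetaQ q x - q * x * deriv (thetaQ q) x := by
    intro x hx
    have hqx : q * x ≠ 0 := mul_ne_zero hq0 hx
    have hd1 : DifferentiableAt ℂ (thetaQ q) (q * x) :=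
      (hA (q * x) hqx).differentiableAt
    have hd2 : DifferentiableAt ℂ (thetaQ q) x := (hA x hx).differentiableAt
    have H1 : HasDerivAt (fun y => thetaQ q (q * y)) (deriv (thetaQ q) (q * x) * q) x := by
      have hmul : HasDerivAt (fun y : ℂ => q * y) q x := by
        simpa using (hasDerivAt_id x).const_mul q
      exact (hd1.hasDerivAt).comp x hmul
    have H2 : HasDerivAt (fun y => -q * y * thetaQ q y)
        (-q * 1 * thetaQ q x + -q * x * deriv (thetaQ q) x) x := by
      have h1 : HasDerivAt (fun y : ℂ => -q * y) (-q * 1) x := by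
        simpa using (hasDerivAt_id x).const_mul (-q)
      exact h1.mul hd2.hasDerivAt
    have heq : (fun y => -q * y * thetaQ q y) =ᶠ[𝓝 x] (fun y => thetaQ q (q * y)) := by
      filter_upwards [isOpen_ne.mem_nhds hx] with y hy
      exact (theta_funeq q hq0 y hy).symm
    have H2' : HasDerivAt (fun y => thetaQ q (q * y))
        (-q * 1 * thetaQ q x + -q * x * deriv (thetaQ q) x) x :=
      H2.congr_of_eventuallyEq heq.symm
    have := H1.unique H2'
    rw [mul_comm] at this
    rw [this]
    ring
  refine ⟨hderiv, fun α => ⟨?_, ?_⟩⟩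
  · intro x hx hθ
    have hqx : q * x ≠ 0 := mul_ne_zero hq0 hx
    have hfe := theta_funeq q hq0 x hx
    have hθqx : thetaQ q (q * x) ≠ 0 := by
      rw [hfe]
      exact mul_ne_zero (mul_ne_zero (neg_ne_zero.mpr hq0) hx) hθ
    have h1 := hderiv x hx
    rw [hfe]
    rw [div_add' _ _ _ hθ, div_eq_div_iff (mul_ne_zero (mul_ne_zero (neg_ne_zero.mpr hq0) hx) hθ) hθ]
    linear_combination (α * x * thetaQ q x) * h1
  · have hnum : AnalyticOnNhd ℂ (fun x : ℂ => α * x * deriv (thetaQ q) x)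
        {x : ℂ | x ≠ 0} :=
      ((analyticOnNhd_const.mul analyticOnNhd_id).mul hA.deriv)
    exact hnum.meromorphicOn.div hA.meromorphicOn
end

section
/- Let h be an entire function, not identically zero, with h(0) = 1. Then there exists an entire function y with y(0) = 1 such that y(qx) = h(x) y(x) for all x ∈ ℂ, whose zeros are exactly the points a q^n with a a zero of h and n an integer ≥ 1: for every z ∈ ℂ, y(z) = 0 if and only if h(q^{−n} z) = 0 for some integer n ≥ 1; moreover, for every z ∈ ℂ the order of vanishing of y at z equals the sum over integers n ≥ 1 of the orders of vanishing of h at q^{−n} z (a sum with only finitely many nonzero terms). -/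
open Complex Filter Topology

namespace Stmt10aux

lemma order_congr {f g : ℂ → ℂ} {z₀ : ℂ} (hf : AnalyticAt ℂ f z₀) (hg : AnalyticAt ℂ g z₀)
    (e : f = g) : analyticOrderAt f z₀ = analyticOrderAt g z₀ := by subst e; rfl

lemma order_congr_ev {f g : ℂ → ℂ} {z₀ : ℂ} (hf : AnalyticAt ℂ f z₀) (hg : AnalyticAt ℂ g z₀)
    (e : f =ᶠ[𝓝 z₀] g) : analyticOrderAt f z₀ = analyticOrderAt g z₀ :=
  analyticOrderAt_congr e

lemma order_eq_zero {f : ℂ → ℂ} {z₀ : ℂ} (hf : AnalyticAt ℂ f z₀) (h0 : f z₀ ≠ 0) :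
    analyticOrderAt f z₀ = 0 :=
  analyticOrderAt_eq_zero.mpr (Or.inr h0)

lemma order_mul' {f g : ℂ → ℂ} {z₀ : ℂ} (hf : AnalyticAt ℂ f z₀) (hg : AnalyticAt ℂ g z₀) :
    analyticOrderAt (f * g) z₀ = analyticOrderAt f z₀ + analyticOrderAt g z₀ :=
  analyticOrderAt_mul hf hg

lemma order_comp_mul {f : ℂ → ℂ} {c z₀ : ℂ} (hc : c ≠ 0)
    (hf : AnalyticAt ℂ f (c * z₀)) (hg : AnalyticAt ℂ (fun z => f (c * z)) z₀) :
    analyticOrderAt (fun z => f (c * z)) z₀ = analyticOrderAt f (c * z₀) := by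
  have hcont : ContinuousAt (fun z : ℂ => c * z) z₀ := by fun_prop
  by_cases hft : analyticOrderAt f (c * z₀) = ⊤
  · rw [hft, analyticOrderAt_eq_top]
    rw [analyticOrderAt_eq_top] at hft
    exact hcont.tendsto (hft)
  obtain ⟨n, hn⟩ := WithTop.ne_top_iff_exists.mp hft
  obtain ⟨gf, hgf, hgf0, hgfe⟩ := (hf.analyticOrderAt_eq_natCast (n := n)).mp hn.symm
  have key : analyticOrderAt (fun z => f (c * z)) z₀ = ((n : ℕ) : ℕ∞) := by
    rw [hg.analyticOrderAt_eq_natCast]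
    refine ⟨fun z => c ^ n * gf (c * z), by
        apply AnalyticAt.mul analyticAt_const
        exact hgf.comp ((analyticAt_const.mul (analyticAt_id))),
      by simpa using mul_ne_zero (pow_ne_zero n hc) hgf0, ?_⟩
    have : ∀ᶠ z in 𝓝 z₀, f (c * z) = (c * z - c * z₀) ^ n • gf (c * z) := hcont.tendsto hgfe
    filter_upwards [this] with z hz
    rw [hz]
    simp only [smul_eq_mul]
    rw [← mul_sub, mul_pow]
    ring
  rw [key, ← hn]
  norm_cast

lemma analyticAt_finprod {ι : Type*} [DecidableEq ι] (F : ι → ℂ → ℂ) {z₀ : ℂ}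
    (hF : ∀ i, AnalyticAt ℂ (F i) z₀) (s : Finset ι) :
    AnalyticAt ℂ (fun z => ∏ i ∈ s, F i z) z₀ := by
  induction s using Finset.induction_on with
  | empty => simpa using analyticAt_const
  | insert _ _ ha ih =>
    simp only [Finset.prod_insert ha]
    exact (hF _).mul ih

lemma order_finprod {ι : Type*} [DecidableEq ι] (F : ι → ℂ → ℂ) {z₀ : ℂ}
    (hF : ∀ i, AnalyticAt ℂ (F i) z₀) (s : Finset ι) :
    analyticOrderAt (fun z => ∏ i ∈ s, F i z) z₀ = ∑ i ∈ s, analyticOrderAt (F i) z₀ := by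
  induction s using Finset.induction_on with
  | empty =>
    rw [Finset.sum_empty]
    exact order_eq_zero (analyticAt_finprod F hF ∅) (by simp)
  | insert a s ha ih =>
    rw [Finset.sum_insert ha, ← ih, ← order_mul' (hF a) (analyticAt_finprod F hF s)]
    exact order_congr (analyticAt_finprod F hF _) ((hF a).mul (analyticAt_finprod F hF s)) (by funext z; simp [Finset.prod_insert ha])

end Stmt10aux

open Stmt10aux

/-- If `h` is entire, not identically zero, with `h(0) = 1`, then
there is an entire `y` with `y(0) = 1`, `y(qx) = h(x) y(x)`, whose zeros are exactly
the points `a qⁿ` (`a` a zero of `h`, `n ≥ 1`), and whose order of vanishing at any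
point `z` is the (finitely supported) sum over `n ≥ 1` of the orders of vanishing of
`h` at `q⁻ⁿ z`. -/
theorem entire_solution_homogeneous (q : ℂ) (hq : 1 < ‖q‖)
    (h : ℂ → ℂ) (hh : AnalyticOnNhd ℂ h Set.univ)
    (hne : ∃ x : ℂ, h x ≠ 0) (h0 : h 0 = 1) :
    ∃ y : ℂ → ℂ, ∃ hy : AnalyticOnNhd ℂ y Set.univ,
      y 0 = 1 ∧
      (∀ x : ℂ, y (q * x) = h x * y x) ∧
      (∀ z : ℂ, y z = 0 ↔ ∃ n : ℕ, 1 ≤ n ∧ h (q ^ (-(n : ℤ)) * z) = 0) ∧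
      (∀ z : ℂ,
        (Function.support fun n : ℕ =>
          analyticOrderAt h (q ^ (-(n : ℤ) - 1) * z)).Finite ∧
        analyticOrderAt y z
          = ∑ᶠ n : ℕ, analyticOrderAt h (q ^ (-(n : ℤ) - 1) * z)) := by
  classical
  have hA1 : 1 < ‖q‖ := by exact hq
  have hA0 : (0:ℝ) < ‖q‖ := lt_trans one_pos hA1
  have hq0 : q ≠ 0 := by
    intro e; rw [e] at hA1; simp at hA1; linarith
  set r : ℝ := ‖q‖⁻¹ with hrdef
  have hr0 : 0 < r := inv_pos.mpr hA0
  have hr1 : r < 1 := by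
    rw [hrdef]
    exact inv_lt_one_of_one_lt₀ hA1
  have keyz : ∀ (a b : ℤ) (w : ℂ), q ^ a * (q ^ b * w) = q ^ (a + b) * w := by
    intro a b w
    rw [← mul_assoc, ← zpow_add₀ hq0]
  have keyq : ∀ (a : ℤ) (w : ℂ), q ^ a * (q * w) = q ^ (a + 1) * w := by
    intro a w
    rw [← mul_assoc, ← zpow_add_one₀ hq0]
  have hzpow : ∀ (m : ℕ) (z : ℂ), ‖q ^ (-(m:ℤ)) * z‖ = r ^ m * ‖z‖ := by
    intro m z
    rw [norm_mul, norm_zpow, zpow_neg, zpow_natCast, ← inv_pow]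
  have habsf : ∀ (n : ℕ) (z : ℂ), ‖q ^ (-(n:ℤ) - 1) * z‖ = r ^ (n+1) * ‖z‖ := by
    intro n z
    have := hzpow (n+1) z
    rwa [show (-((n+1:ℕ):ℤ)) = -(n:ℤ) - 1 by push_cast; ring] at this
  -- the bound near 0
  obtain ⟨C, hC0, hCb⟩ : ∃ C : ℝ, 0 < C ∧ ∀ᶠ w in 𝓝 (0:ℂ), ‖h w - 1‖ ≤ C * ‖w‖ := by
    have hd : (fun w => h w - 1) =O[𝓝 (0:ℂ)] (fun w => w) := by
      have := (hh 0 (Set.mem_univ 0)).differentiableAt.isBigO_sub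
      simpa [h0] using this
    obtain ⟨C, hC⟩ := hd.bound
    refine ⟨max C 1, by positivity, hC.mono fun w hw => le_trans hw ?_⟩
    exact mul_le_mul_of_nonneg_right (le_max_left _ _) (norm_nonneg _)
  obtain ⟨ε, hε0, hball⟩ := Metric.eventually_nhds_iff.mp hCb
  set δ : ℝ := min (ε/2) (1/(2*C)) with hδdef
  have hδ0 : 0 < δ := by
    apply lt_min
    · linarith
    · positivity
  have hδ : ∀ w : ℂ, ‖w‖ ≤ δ → ‖h w - 1‖ ≤ C * ‖w‖ ∧ ‖h w - 1‖ ≤ 1/2 := by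
    intro w hw
    have h1 : ‖w‖ < ε := by
      have h2 : ‖w‖ ≤ ε/2 := le_trans hw (min_le_left _ _)
      linarith
    have hb := hball (show dist w 0 < ε by rwa [dist_zero_right])
    refine ⟨hb, le_trans hb ?_⟩
    have h2 : ‖w‖ ≤ 1/(2*C) := le_trans hw (min_le_right _ _)
    calc C * ‖w‖ ≤ C * (1/(2*C)) := by gcongr
      _ = 1/2 := by field_simp
  have hne0 : ∀ w : ℂ, ‖w‖ ≤ δ → h w ≠ 0 := by
    intro w hw he
    have := (hδ w hw).2
    rw [he] at this
    simp at this
    linarith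
  -- the factors
  set f : ℕ → ℂ → ℂ := fun n z => h (q ^ (-(n:ℤ) - 1) * z) with hfdef
  have hfanal : ∀ (n : ℕ) (z : ℂ), AnalyticAt ℂ (f n) z := by
    intro n z
    exact (hh _ (Set.mem_univ _)).comp (analyticAt_const.mul analyticAt_id)
  have hfsmall : ∀ (n : ℕ) (z : ℂ), ‖z‖ ≤ δ → ‖q ^ (-(n:ℤ) - 1) * z‖ ≤ δ := by
    intro n z hz
    rw [habsf]
    calc r ^ (n+1) * ‖z‖ ≤ 1 * δ := by
          apply mul_le_mul _ hz (norm_nonneg _) zero_le_one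
          exact pow_le_one₀ hr0.le hr1.le
      _ = δ := one_mul δ
  have hfbound : ∀ (n : ℕ) (z : ℂ), ‖z‖ ≤ δ → ‖f n z - 1‖ ≤ C * δ * r ^ (n+1) ∧
      ‖f n z - 1‖ ≤ 1/2 := by
    intro n z hz
    have h1 := hδ _ (hfsmall n z hz)
    refine ⟨le_trans h1.1 ?_, h1.2⟩
    rw [habsf]
    calc C * (r ^ (n+1) * ‖z‖) ≤ C * (r ^ (n+1) * δ) := by gcongr
      _ = C * δ * r ^ (n+1) := by ring
  have hfne : ∀ (n : ℕ) (z : ℂ), ‖z‖ ≤ δ → f n z ≠ 0 :=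
    fun n z hz => hne0 _ (hfsmall n z hz)
  have hfslit : ∀ (n : ℕ) (z : ℂ), ‖z‖ ≤ δ → f n z ∈ Complex.slitPlane := by
    intro n z hz
    rw [Complex.mem_slitPlane_iff]
    left
    have h1 := (hfbound n z hz).2
    have h2 : |(f n z - 1).re| ≤ 1/2 := by
      refine le_trans ?_ h1
      exact Complex.abs_re_le_norm _
    have h3 : (f n z).re = (f n z - 1).re + 1 := by simp [Complex.sub_re]
    rw [h3]
    have := abs_le.mp h2
    linarith [this.1]
  -- the log bound
  set u : ℕ → ℝ := fun n => (3/2 * (C * δ) * r) * r ^ n with hudef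
  have hu : Summable u := (summable_geometric_of_lt_one hr0.le hr1).mul_left _
  have hlogb : ∀ (n : ℕ) (z : ℂ), ‖z‖ ≤ δ → ‖Complex.log (f n z)‖ ≤ u n := by
    intro n z hz
    have e : Complex.log (f n z) = Complex.log (1 + (f n z - 1)) := by congr 1; ring
    rw [e]
    refine le_trans (Complex.norm_log_one_add_half_le_self (hfbound n z hz).2) ?_
    have := (hfbound n z hz).1
    calc 3/2 * ‖f n z - 1‖ ≤ 3/2 * (C * δ * r ^ (n+1)) := by gcongr
      _ = (3/2 * (C * δ) * r) * r ^ n := by ring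
  have hgsum : ∀ z : ℂ, ‖z‖ ≤ δ → Summable (fun n => Complex.log (f n z)) := by
    intro z hz
    exact Summable.of_norm_bounded hu (fun n => hlogb n z hz)
  -- the tail function
  set S : ℂ → ℂ := fun z => ∑' n, Complex.log (f n z) with hSdef
  have hSdiff : DifferentiableOn ℂ S (Metric.ball (0:ℂ) δ) := by
    apply differentiableOn_tsum_of_summable_norm hu
    · intro n z hz
      have hz' : ‖z‖ ≤ δ := by
        rw [Metric.mem_ball, dist_zero_right] at hz
        exact hz.le
      exact (((analyticAt_clog (hfslit n z hz')).comp
        (hfanal n z)).differentiableAt).differentiableWithinAt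
    · exact Metric.isOpen_ball
    · intro n z hz
      apply hlogb
      rw [Metric.mem_ball, dist_zero_right] at hz
      exact hz.le
  have hSan : ∀ z : ℂ, ‖z‖ < δ → AnalyticAt ℂ S z := by
    intro z hz
    apply hSdiff.analyticAt
    apply Metric.isOpen_ball.mem_nhds
    rwa [Metric.mem_ball, dist_zero_right]
  set y₀ : ℂ → ℂ := fun z => Complex.exp (S z) with hy₀def
  have hy₀an : ∀ z : ℂ, ‖z‖ < δ → AnalyticAt ℂ y₀ z := fun z hz => (hSan z hz).cexp
  have hy₀ne : ∀ z : ℂ, y₀ z ≠ 0 := fun z => Complex.exp_ne_zero _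
  have hy₀0 : y₀ 0 = 1 := by
    have e : (fun n => Complex.log (f n 0)) = fun _ => 0 := by
      funext n
      simp only [hfdef, mul_zero, h0, Complex.log_one]
    simp only [hy₀def, hSdef, e, tsum_zero, Complex.exp_zero]
  -- recursion for y₀
  have hstep : ∀ w : ℂ, ‖w‖ ≤ δ → y₀ w = f 0 w * y₀ (q ^ (-1:ℤ) * w) := by
    intro w hw
    have hw' : ‖q ^ (-1:ℤ) * w‖ ≤ δ := by
      rw [show (-1:ℤ) = -((1:ℕ):ℤ) by norm_num, hzpow, pow_one]
      calc r * ‖w‖ ≤ 1 * δ := by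
            apply mul_le_mul hr1.le hw (norm_nonneg _) zero_le_one
        _ = δ := one_mul δ
    have hshift : ∀ n : ℕ, f (n+1) w = f n (q ^ (-1:ℤ) * w) := by
      intro n
      simp only [hfdef]
      rw [keyz]
      rw [show (-(n:ℤ) - 1 + -1) = -((n+1:ℕ):ℤ) - 1 by push_cast; ring]
    have hsum := hgsum w hw
    have e1 : S w = Complex.log (f 0 w) + S (q ^ (-1:ℤ) * w) := by
      simp only [hSdef]
      rw [hsum.tsum_eq_zero_add]
      congr 1
      exact tsum_congr fun n => by rw [hshift n]
    simp only [hy₀def]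
    rw [e1, Complex.exp_add, Complex.exp_log (hfne 0 w hw)]
  -- partial representation
  set P : ℕ → ℂ → ℂ := fun k z => (∏ n ∈ Finset.range k, f n z) * y₀ (q ^ (-(k:ℤ)) * z)
    with hPdef
  have hPstep : ∀ (k : ℕ) (z : ℂ), r ^ k * ‖z‖ ≤ δ → P (k+1) z = P k z := by
    intro k z hkz
    have hw : ‖q ^ (-(k:ℤ)) * z‖ ≤ δ := by rw [hzpow]; exact hkz
    have e1 : f 0 (q ^ (-(k:ℤ)) * z) = f k z := by
      simp only [hfdef]
      rw [keyz]
      rw [show (-((0:ℕ):ℤ) - 1 + -(k:ℤ)) = -(k:ℤ) - 1 by push_cast; ring]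
    have e2 : q ^ (-1:ℤ) * (q ^ (-(k:ℤ)) * z) = q ^ (-((k+1:ℕ)):ℤ) * z := by
      rw [keyz]
      congr 1
      push_cast
      ring
    have hst := hstep (q ^ (-(k:ℤ)) * z) hw
    rw [e1, e2] at hst
    simp only [hPdef]
    rw [Finset.prod_range_succ, mul_assoc, ← hst]
  have hPle : ∀ (k m : ℕ), k ≤ m → ∀ z : ℂ, r ^ k * ‖z‖ ≤ δ → P m z = P k z := by
    intro k m hkm
    induction m, hkm using Nat.le_induction with
    | base => intro z _; rfl
    | succ m hm ih =>
      intro z hz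
      rw [← ih z hz]
      apply hPstep
      calc r ^ m * ‖z‖ ≤ r ^ k * ‖z‖ := by
            apply mul_le_mul_of_nonneg_right _ (norm_nonneg _)
            exact pow_le_pow_of_le_one hr0.le hr1.le hm
        _ ≤ δ := hz
  have hex : ∀ R : ℝ, ∃ k : ℕ, r ^ k * R < δ := by
    intro R
    have h1 : Tendsto (fun k : ℕ => r ^ k * R) atTop (𝓝 (0 * R)) :=
      (tendsto_pow_atTop_nhds_zero_of_lt_one hr0.le hr1).mul_const R
    rw [zero_mul] at h1
    exact (h1.eventually_lt_const hδ0).exists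
  set K : ℂ → ℕ := fun z => Nat.find (hex (‖z‖ + 1)) with hKdef
  have hKspec : ∀ z : ℂ, r ^ (K z) * (‖z‖ + 1) < δ := fun z => Nat.find_spec (hex (‖z‖ + 1))
  set y : ℂ → ℂ := fun z => P (K z) z with hydef
  have hyrep : ∀ (z : ℂ) (k : ℕ), r ^ k * (‖z‖ + 1) < δ → y z = P k z := by
    intro z k hk
    have h1 : K z ≤ k := Nat.find_min' (hex (‖z‖ + 1)) hk
    have h2 : r ^ (K z) * ‖z‖ ≤ δ := by
      have := hKspec z
      nlinarith [pow_nonneg hr0.le (K z), norm_nonneg z]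
    exact (hPle (K z) k h1 z h2).symm
  -- analyticity of P k
  have hy₀comp : ∀ (k : ℕ) (z : ℂ), r ^ k * ‖z‖ < δ →
      AnalyticAt ℂ (fun z' => y₀ (q ^ (-(k:ℤ)) * z')) z := by
    intro k z hz
    have h1 : ‖q ^ (-(k:ℤ)) * z‖ < δ := by rw [hzpow]; exact hz
    exact (hy₀an _ h1).comp (analyticAt_const.mul analyticAt_id)
  -- local representation near any point
  have hlocal : ∀ z₀ : ℂ, ∃ k : ℕ, r ^ k * (‖z₀‖ + 2) < δ ∧
      (∀ z ∈ Metric.ball z₀ 1, y z = P k z) := by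
    intro z₀
    obtain ⟨k, hk⟩ := hex (‖z₀‖ + 2)
    refine ⟨k, hk, fun z hz => ?_⟩
    apply hyrep
    have h1 : ‖z‖ < ‖z₀‖ + 1 := by
      rw [Metric.mem_ball] at hz
      calc ‖z‖ = ‖z₀ + (z - z₀)‖ := by ring_nf
        _ ≤ ‖z₀‖ + ‖z - z₀‖ := norm_add_le _ _
        _ < ‖z₀‖ + 1 := by
            have : ‖z - z₀‖ < 1 := by rwa [dist_eq_norm] at hz
            linarith
    have h2 : r ^ k * (‖z‖ + 1) ≤ r ^ k * (‖z₀‖ + 2) := by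
      apply mul_le_mul_of_nonneg_left _ (pow_nonneg hr0.le k)
      linarith
    linarith
  have hyanal : ∀ z₀ : ℂ, AnalyticAt ℂ y z₀ := by
    intro z₀
    obtain ⟨k, hk, hloc⟩ := hlocal z₀
    have h1 : r ^ k * ‖z₀‖ < δ := by
      have h2 : r ^ k * ‖z₀‖ ≤ r ^ k * (‖z₀‖ + 2) := by
        apply mul_le_mul_of_nonneg_left _ (pow_nonneg hr0.le k)
        linarith
      linarith
    have hPk : AnalyticAt ℂ (P k) z₀ :=
      (analyticAt_finprod f (fun n => hfanal n z₀) (Finset.range k)).mul (hy₀comp k z₀ h1)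
    apply hPk.congr
    filter_upwards [Metric.ball_mem_nhds z₀ one_pos] with z hz
    exact (hloc z hz).symm
  refine ⟨y, fun z _ => hyanal z, ?_, ?_, ?_, ?_⟩
  · -- y 0 = 1
    simp only [hydef, hPdef, hfdef, mul_zero, h0, hy₀0, mul_one, Finset.prod_const_one]
  · -- functional equation
    intro x
    have hKx := hKspec x
    have hyx : y x = P (K x) x := rfl
    set k := K x with hkdef
    have hrA : r * ‖q‖ = 1 := inv_mul_cancel₀ (ne_of_gt hA0)
    have hyqx : y (q * x) = P (k+1) (q * x) := by
      apply hyrep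
      rw [norm_mul]
      have e2 : r ^ (k+1) * (‖q‖ * ‖x‖) = r ^ k * ‖x‖ := by
        calc r ^ (k+1) * (‖q‖ * ‖x‖) = (r ^ k * ‖x‖) * (r * ‖q‖) := by ring
          _ = r ^ k * ‖x‖ := by rw [hrA, mul_one]
      rw [mul_add, mul_one, e2]
      have h3 : r ^ (k+1) ≤ r ^ k := pow_le_pow_of_le_one hr0.le hr1.le (Nat.le_succ k)
      nlinarith [norm_nonneg x, pow_nonneg hr0.le k]
    rw [hyqx, hyx]
    simp only [hPdef]
    have e3 : ∀ n : ℕ, f n (q * x) = h (q ^ (-(n:ℤ)) * x) := by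
      intro n
      simp only [hfdef]
      rw [keyq, show (-(n:ℤ) - 1 + 1) = -(n:ℤ) by ring]
    have e4 : q ^ (-((k+1:ℕ)):ℤ) * (q * x) = q ^ (-(k:ℤ)) * x := by
      rw [keyq]
      congr 1
      push_cast
      ring
    rw [e4]
    have e5 : (∏ n ∈ Finset.range (k+1), f n (q * x))
        = h x * ∏ n ∈ Finset.range k, f n x := by
      rw [Finset.prod_congr rfl (fun n _ => e3 n), Finset.prod_range_succ']
      rw [mul_comm]
      congr 1
      · simp
      · apply Finset.prod_congr rfl
        intro n _
        simp only [hfdef]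
        congr 2
        push_cast
        ring
    rw [e5]
    ring
  · -- zero set
    intro z
    obtain ⟨k, hk, hloc⟩ := hlocal z
    have hrep : y z = P k z := hloc z (Metric.mem_ball_self one_pos)
    have htail : ∀ m : ℕ, k ≤ m → ‖q ^ (-(m:ℤ)) * z‖ ≤ δ := by
      intro m hm
      rw [hzpow]
      have h1 : r ^ m * ‖z‖ ≤ r ^ k * ‖z‖ :=
        mul_le_mul_of_nonneg_right (pow_le_pow_of_le_one hr0.le hr1.le hm) (norm_nonneg _)
      have h2 : r ^ k * ‖z‖ ≤ r ^ k * (‖z‖ + 2) := by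
        apply mul_le_mul_of_nonneg_left _ (pow_nonneg hr0.le k)
        linarith
      linarith
    rw [hrep]
    simp only [hPdef]
    constructor
    · intro hy0
      rcases mul_eq_zero.mp hy0 with hp | ht
      · obtain ⟨n, _, hfn⟩ := Finset.prod_eq_zero_iff.mp hp
        refine ⟨n+1, Nat.succ_le_succ (Nat.zero_le n), ?_⟩
        rw [show (-(((n+1:ℕ)):ℤ)) = -(n:ℤ) - 1 by push_cast; ring]
        exact hfn
      · exact absurd ht (hy₀ne _)
    · rintro ⟨m, hm1, hm0⟩
      rcases le_or_gt m k with hmk | hmk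
      · apply mul_eq_zero_of_left
        apply Finset.prod_eq_zero (i := m - 1) (Finset.mem_range.mpr (by omega))
        simp only [hfdef]
        rw [show (-((m-1:ℕ):ℤ) - 1) = -(m:ℤ) by
          push_cast [Nat.cast_sub hm1]; ring]
        exact hm0
      · exact absurd hm0 (hne0 _ (htail m hmk.le))
  · -- order
    intro z
    obtain ⟨k, hk, hloc⟩ := hlocal z
    have htail : ∀ n : ℕ, k ≤ n + 1 → ‖q ^ (-(n:ℤ) - 1) * z‖ ≤ δ := by
      intro n hn
      rw [habsf]
      have h1 : r ^ (n+1) * ‖z‖ ≤ r ^ k * ‖z‖ :=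
        mul_le_mul_of_nonneg_right (pow_le_pow_of_le_one hr0.le hr1.le hn) (norm_nonneg _)
      have h2 : r ^ k * ‖z‖ ≤ r ^ k * (‖z‖ + 2) := by
        apply mul_le_mul_of_nonneg_left _ (pow_nonneg hr0.le k)
        linarith
      linarith
    have hordzero : ∀ n : ℕ, k ≤ n →
        analyticOrderAt h (q ^ (-(n:ℤ) - 1) * z) = 0 := by
      intro n hn
      exact order_eq_zero (hh _ (Set.mem_univ _)) (hne0 _ (htail n (by omega)))
    have hsupp : (Function.support fun n : ℕ =>
        analyticOrderAt h (q ^ (-(n:ℤ) - 1) * z)) ⊆ ↑(Finset.range k) := by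
      intro n hn
      simp only [Function.mem_support] at hn
      simp only [Finset.coe_range, Set.mem_Iio]
      by_contra hc
      exact hn (hordzero n (by omega))
    refine ⟨Set.Finite.subset (Finset.range k).finite_toSet hsupp, ?_⟩
    have h1 : r ^ k * ‖z‖ < δ := by
      have h2 : r ^ k * ‖z‖ ≤ r ^ k * (‖z‖ + 2) := by
        apply mul_le_mul_of_nonneg_left _ (pow_nonneg hr0.le k)
        linarith
      linarith
    have hprod := analyticAt_finprod f (fun n => hfanal n z) (Finset.range k)
    have htl := hy₀comp k z h1
    have hev : y =ᶠ[𝓝 z] P k := by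
      filter_upwards [Metric.ball_mem_nhds z one_pos] with w hw
      exact hloc w hw
    calc analyticOrderAt y z
          = analyticOrderAt ((fun z => ∏ n ∈ Finset.range k, f n z) *
              (fun z' => y₀ (q ^ (-(k:ℤ)) * z'))) z := order_congr_ev (hyanal z) (hprod.mul htl) hev
      _ = analyticOrderAt (fun z => ∏ n ∈ Finset.range k, f n z) z +
            analyticOrderAt (fun z' => y₀ (q ^ (-(k:ℤ)) * z')) z := order_mul' hprod htl
      _ = (∑ n ∈ Finset.range k, analyticOrderAt (f n) z) + 0 := by
          rw [order_finprod f (fun n => hfanal n z) (Finset.range k), order_eq_zero htl (hy₀ne _)]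
      _ = ∑ n ∈ Finset.range k,
            analyticOrderAt h (q ^ (-(n:ℤ) - 1) * z) := by
          rw [add_zero]
          exact Finset.sum_congr rfl fun n _ =>
            order_comp_mul (zpow_ne_zero _ hq0) (hh _ (Set.mem_univ _)) (hfanal n z)
      _ = ∑ᶠ n : ℕ, analyticOrderAt h (q ^ (-(n:ℤ) - 1) * z) :=
          (finsum_eq_sum_of_support_subset _ hsupp).symm
end

section
/- Let h be an entire function, not identically zero. Let μ ∈ ℕ be the order of vanishing of h at 0 and let α = lim_{x→0} h(x)/x^{μ} (a nonzero complex number). Then there exists a function y meromorphic on ℂ ∖ {0}, not identically zero on ℂ ∖ {0}, such that y(qx) = h(x) y(x) holds for every x ∈ ℂ ∖ {0} at which y is analytic at x and at qx, and such that y is analytic at every point of ℂ ∖ {0} lying neither in {−q^n : n ∈ ℤ} nor in {α q^n : n ∈ ℤ}. Moreover, if h(0) = 1 then y can be chosen entire with y(0) = 1. -/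
open Filter Finset Topology Complex

namespace ProdAux

lemma norm_prod_sub_one_le {f : ℕ → ℂ} {u : ℕ → ℝ} (t : Finset ℕ)
    (hb : ∀ n ∈ t, ‖f n - 1‖ ≤ u n) :
    ‖(∏ n ∈ t, f n) - 1‖ ≤ (∏ n ∈ t, (1 + u n)) - 1 := by
  classical
  induction t using Finset.cons_induction with
  | empty => simp
  | cons a t ha ih =>
    rw [Finset.prod_cons, Finset.prod_cons]
    have hua : ‖f a - 1‖ ≤ u a := hb a (Finset.mem_cons_self a t)
    have h0a : (0:ℝ) ≤ u a := le_trans (norm_nonneg _) hua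
    have iht : ‖(∏ n ∈ t, f n) - 1‖ ≤ (∏ n ∈ t, (1 + u n)) - 1 :=
      ih (fun n hn => hb n (Finset.mem_cons_of_mem hn))
    have hP : ‖∏ n ∈ t, f n‖ ≤ ∏ n ∈ t, (1 + u n) := by
      have h1 : ‖∏ n ∈ t, f n‖ ≤ ‖(∏ n ∈ t, f n) - 1‖ + 1 := by
        calc ‖∏ n ∈ t, f n‖ = ‖((∏ n ∈ t, f n) - 1) + 1‖ := by ring_nf
        _ ≤ ‖(∏ n ∈ t, f n) - 1‖ + ‖(1:ℂ)‖ := norm_add_le _ _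
        _ = ‖(∏ n ∈ t, f n) - 1‖ + 1 := by simp
      linarith
    have key : ‖f a * ∏ n ∈ t, f n - 1‖
        ≤ ‖(f a - 1) * ∏ n ∈ t, f n‖ + ‖(∏ n ∈ t, f n) - 1‖ := by
      calc ‖f a * ∏ n ∈ t, f n - 1‖
          = ‖(f a - 1) * ∏ n ∈ t, f n + ((∏ n ∈ t, f n) - 1)‖ := by ring_nf
        _ ≤ _ := norm_add_le _ _
    have hmul : ‖(f a - 1) * ∏ n ∈ t, f n‖ ≤ u a * ∏ n ∈ t, (1 + u n) := by
      rw [norm_mul]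
      exact mul_le_mul hua hP (norm_nonneg _) h0a
    have hprodnn : (0:ℝ) ≤ ∏ n ∈ t, (1 + u n) := le_trans (norm_nonneg _) hP
    calc ‖f a * ∏ n ∈ t, f n - 1‖ ≤ u a * ∏ n ∈ t, (1 + u n) + ((∏ n ∈ t, (1 + u n)) - 1) := by
          linarith
      _ = (1 + u a) * ∏ n ∈ t, (1 + u n) - 1 := by ring

lemma norm_prod_le {f : ℕ → ℂ} {u : ℕ → ℝ} (t : Finset ℕ)
    (hb : ∀ n ∈ t, ‖f n - 1‖ ≤ u n) :
    ‖∏ n ∈ t, f n‖ ≤ ∏ n ∈ t, (1 + u n) := by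
  have h1 := norm_prod_sub_one_le t hb
  have h2 : ‖∏ n ∈ t, f n‖ ≤ ‖(∏ n ∈ t, f n) - 1‖ + 1 := by
    calc ‖∏ n ∈ t, f n‖ = ‖((∏ n ∈ t, f n) - 1) + 1‖ := by ring_nf
    _ ≤ ‖(∏ n ∈ t, f n) - 1‖ + ‖(1:ℂ)‖ := norm_add_le _ _
    _ = ‖(∏ n ∈ t, f n) - 1‖ + 1 := by simp
  linarith

lemma prod_one_add_le_exp {u : ℕ → ℝ} (h0 : ∀ n, 0 ≤ u n) (t : Finset ℕ) :
    (∏ n ∈ t, (1 + u n)) ≤ Real.exp (∑ n ∈ t, u n) := by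
  rw [Real.exp_sum]
  exact Finset.prod_le_prod (fun n _ => by linarith [h0 n])
    (fun n _ => by have := Real.add_one_le_exp (u n); linarith)

lemma sum_le_tail {u : ℕ → ℝ} (hu : Summable u) (h0 : ∀ n, 0 ≤ u n) (N : ℕ) (t : Finset ℕ)
    (ht : ∀ n ∈ t, N ≤ n) : ∑ n ∈ t, u n ≤ ∑' k, u (k + N) := by
  classical
  have himg : ∑ n ∈ t, u n = ∑ m ∈ t.image (fun n => n - N), u (m + N) := by
    rw [Finset.sum_image ?_]
    · exact Finset.sum_congr rfl (fun n hn => by have := ht n hn; congr 1; omega)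
    · intro a ha b hb hab
      simp only at hab
      have := ht a ha; have := ht b hb; omega
  rw [himg]
  exact Summable.sum_le_tsum _ (fun k _ => h0 _) ((summable_nat_add_iff N).2 hu)

lemma dist_prod_est {f : ℕ → ℂ} {u : ℕ → ℝ} (hu : Summable u) (h0 : ∀ n, 0 ≤ u n)
    (hb : ∀ n, ‖f n - 1‖ ≤ u n) (N : ℕ) (t : Finset ℕ) (ht : Finset.range N ⊆ t) :
    dist (∏ n ∈ t, f n) (∏ n ∈ Finset.range N, f n)
      ≤ Real.exp (∑' n, u n) * (Real.exp (∑' k, u (k + N)) - 1) := by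
  classical
  rw [dist_eq_norm]
  have hsplit : (∏ n ∈ t, f n) = (∏ n ∈ t \ Finset.range N, f n) * ∏ n ∈ Finset.range N, f n :=
    (Finset.prod_sdiff ht).symm
  have heq : (∏ n ∈ t, f n) - ∏ n ∈ Finset.range N, f n
      = (∏ n ∈ Finset.range N, f n) * ((∏ n ∈ t \ Finset.range N, f n) - 1) := by
    rw [hsplit]; ring
  rw [heq, norm_mul]
  have h1 : ‖∏ n ∈ Finset.range N, f n‖ ≤ Real.exp (∑' n, u n) := by
    refine le_trans (norm_prod_le _ (fun n _ => hb n)) ?_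
    refine le_trans (prod_one_add_le_exp h0 _) (Real.exp_le_exp.2 ?_)
    exact Summable.sum_le_tsum _ (fun n _ => h0 n) hu
  have h2 : ‖(∏ n ∈ t \ Finset.range N, f n) - 1‖ ≤ Real.exp (∑' k, u (k + N)) - 1 := by
    refine le_trans (norm_prod_sub_one_le _ (fun n _ => hb n)) ?_
    have h3 : ∀ n ∈ t \ Finset.range N, N ≤ n := by
      intro n hn
      rcases Finset.mem_sdiff.1 hn with ⟨-, hn2⟩
      exact Nat.le_of_not_lt (fun hc => hn2 (Finset.mem_range.2 hc))
    have := sum_le_tail hu h0 N _ h3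
    have h4 := prod_one_add_le_exp h0 (t \ Finset.range N)
    have h5 := Real.exp_le_exp.2 this
    linarith
  exact mul_le_mul h1 h2 (norm_nonneg _) (Real.exp_nonneg _)


lemma exists_tail_small {u : ℕ → ℝ} (hu : Summable u) {ε : ℝ} (hε : 0 < ε) :
    ∃ N : ℕ, Real.exp (∑' n, u n) * (Real.exp (∑' k, u (k + N)) - 1) < ε := by
  have h1 : Tendsto (fun N : ℕ => ∑' k, u (k + N)) atTop (𝓝 0) := tendsto_sum_nat_add u
  have h2 : Tendsto (fun N : ℕ =>
      Real.exp (∑' n, u n) * (Real.exp (∑' k, u (k + N)) - 1)) atTop (𝓝 0) := by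
    have h3 := ((Real.continuous_exp.tendsto 0).comp h1).sub (tendsto_const_nhds (x := (1:ℝ)))
    have h4 := h3.const_mul (Real.exp (∑' n, u n))
    simpa using h4
  exact (h2.eventually (gt_mem_nhds hε)).exists

lemma multipliable_of_bound {f : ℕ → ℂ} {u : ℕ → ℝ} (hu : Summable u) (h0 : ∀ n, 0 ≤ u n)
    (hb : ∀ n, ‖f n - 1‖ ≤ u n) : Multipliable f := by
  classical
  have hc : CauchySeq (fun t : Finset ℕ => ∏ n ∈ t, f n) := by
    rw [Metric.cauchySeq_iff']
    intro ε hε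
    obtain ⟨N, hN⟩ := exists_tail_small hu hε
    refine ⟨Finset.range N, fun t htt => lt_of_le_of_lt ?_ hN⟩
    exact dist_prod_est hu h0 hb N t htt
  obtain ⟨a, ha⟩ := cauchySeq_tendsto_of_complete hc
  exact ⟨a, ha⟩

lemma uniformCauchy_of_bound {f : ℕ → ℂ → ℂ} {u : ℕ → ℝ} {s : Set ℂ} (hu : Summable u)
    (h0 : ∀ n, 0 ≤ u n) (hb : ∀ n, ∀ x ∈ s, ‖f n x - 1‖ ≤ u n) :
    UniformCauchySeqOn (fun (N : ℕ) x => ∏ n ∈ Finset.range N, f n x) atTop s := by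
  rw [Metric.uniformCauchySeqOn_iff]
  intro ε hε
  obtain ⟨N, hN⟩ := exists_tail_small hu (half_pos hε)
  refine ⟨N, fun m hm n hn x hx => ?_⟩
  have est : ∀ k, N ≤ k → dist (∏ i ∈ Finset.range k, f i x) (∏ i ∈ Finset.range N, f i x)
      ≤ Real.exp (∑' n, u n) * (Real.exp (∑' j, u (j + N)) - 1) := fun k hk =>
    dist_prod_est hu h0 (fun i => hb i x hx) N (Finset.range k) (Finset.range_subset_range.2 hk)
  calc dist (∏ i ∈ Finset.range m, f i x) (∏ i ∈ Finset.range n, f i x)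
      ≤ dist (∏ i ∈ Finset.range m, f i x) (∏ i ∈ Finset.range N, f i x)
        + dist (∏ i ∈ Finset.range n, f i x) (∏ i ∈ Finset.range N, f i x) :=
        dist_triangle_right _ _ _
    _ < ε := by
        have e1 := lt_of_le_of_lt (est m hm) hN
        have e2 := lt_of_le_of_lt (est n hn) hN
        linarith

lemma tendstoUniformlyOn_of_bound {f : ℕ → ℂ → ℂ} {u : ℕ → ℝ} {s : Set ℂ} (hu : Summable u)
    (h0 : ∀ n, 0 ≤ u n) (hb : ∀ n, ∀ x ∈ s, ‖f n x - 1‖ ≤ u n) :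
    TendstoUniformlyOn (fun (N : ℕ) x => ∏ n ∈ Finset.range N, f n x)
      (fun x => ∏' n, f n x) atTop s :=
  (uniformCauchy_of_bound hu h0 hb).tendstoUniformlyOn_of_tendsto
    (fun x hx => (multipliable_of_bound hu h0 (fun n => hb n x hx)).hasProd.tendsto_prod_nat)

lemma analyticAt_finset_prod {f : ℕ → ℂ → ℂ} {x : ℂ} (t : Finset ℕ)
    (hf : ∀ n ∈ t, AnalyticAt ℂ (f n) x) :
    AnalyticAt ℂ (fun y => ∏ n ∈ t, f n y) x := by
  classical
  induction t using Finset.cons_induction with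
  | empty => simpa using analyticAt_const (v := (1:ℂ))
  | cons a t ha ih =>
    simp only [Finset.prod_cons]
    exact (hf a (Finset.mem_cons_self a t)).mul (ih (fun n hn => hf n (Finset.mem_cons_of_mem hn)))

lemma analyticOnNhd_tprod {f : ℕ → ℂ → ℂ} {u : ℕ → ℝ} {s : Set ℂ} (hs : IsOpen s)
    (hf : ∀ n, ∀ x ∈ s, AnalyticAt ℂ (f n) x) (hu : Summable u) (h0 : ∀ n, 0 ≤ u n)
    (hb : ∀ n, ∀ x ∈ s, ‖f n x - 1‖ ≤ u n) :
    AnalyticOnNhd ℂ (fun x => ∏' n, f n x) s := by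
  have htu := tendstoUniformlyOn_of_bound hu h0 hb
  have hdiff : DifferentiableOn ℂ (fun x => ∏' n, f n x) s := by
    refine htu.tendstoLocallyUniformlyOn.differentiableOn
      (Filter.Eventually.of_forall fun N => ?_) hs
    intro x hx
    exact (analyticAt_finset_prod (Finset.range N)
      (fun n _ => hf n x hx)).differentiableAt.differentiableWithinAt
  exact hdiff.analyticOnNhd hs

lemma tprod_ne_zero {f : ℕ → ℂ} {u : ℕ → ℝ} (hu : Summable u) (h0 : ∀ n, 0 ≤ u n)
    (hb : ∀ n, ‖f n - 1‖ ≤ u n) (hnz : ∀ n, f n ≠ 0) : (∏' n, f n) ≠ 0 := by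
  have hsmall : ∀ᶠ n in atTop, u n < 1/2 :=
    hu.tendsto_atTop_zero.eventually (gt_mem_nhds (by norm_num))
  obtain ⟨N, hN⟩ := eventually_atTop.1 hsmall
  have hlog : Summable (fun n => Complex.log (f n)) := by
    rw [← summable_nat_add_iff N]
    refine Summable.of_norm_bounded (g := fun n => 3/2 * u (n + N))
      (((summable_nat_add_iff N).2 hu).mul_left _) (fun n => ?_)
    have h1 : ‖f (n + N) - 1‖ ≤ u (n + N) := hb (n + N)
    have h2 : u (n + N) < 1/2 := hN (n + N) (Nat.le_add_left _ _)
    have h3 : ‖f (n + N) - 1‖ ≤ 1/2 := le_of_lt (lt_of_le_of_lt h1 h2)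
    have h4 := Complex.norm_log_one_add_half_le_self h3
    calc ‖Complex.log (f (n + N))‖ = ‖Complex.log (1 + (f (n + N) - 1))‖ := by ring_nf
      _ ≤ 3/2 * ‖f (n + N) - 1‖ := h4
      _ ≤ 3/2 * u (n + N) := by linarith
  rw [← Complex.cexp_tsum_eq_tprod hnz hlog]
  exact Complex.exp_ne_zero _


noncomputable def Gf (h : ℂ → ℂ) (α : ℂ) (μ : ℕ) : ℂ → ℂ :=
  fun w => if w = 0 then 1 else h w / (α * w ^ μ)

noncomputable def Af (q : ℂ) : ℂ → ℂ := fun z => ∏' n : ℕ, (1 + q⁻¹ ^ n * z)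
noncomputable def Bf (q : ℂ) : ℂ → ℂ := fun z => ∏' n : ℕ, (1 + q⁻¹ ^ (n + 1) * z⁻¹)
noncomputable def Tf (q : ℂ) : ℂ → ℂ := fun z => Af q z * Bf q z
noncomputable def Ff (q : ℂ) (h : ℂ → ℂ) (α : ℂ) (μ : ℕ) : ℂ → ℂ :=
  fun x => ∏' n : ℕ, Gf h α μ (q⁻¹ ^ (n + 1) * x)

section Geom

variable {q : ℂ} (hq : 1 < ‖q‖)

include hq

lemma q_ne_zero : q ≠ 0 := by
  intro hc
  rw [hc] at hq; simp at hq; linarith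

lemma r_lt_one : ‖q⁻¹‖ < 1 := by
  rw [norm_inv]
  rw [inv_lt_one_iff₀]
  right; exact hq

lemma summable_geom_shift (c : ℝ) (k : ℕ) :
    Summable (fun n : ℕ => ‖q⁻¹‖ ^ (n + k) * c) := by
  have h1 : Summable (fun n : ℕ => (‖q⁻¹‖ ^ k * c) * ‖q⁻¹‖ ^ n) :=
    (summable_geometric_of_lt_one (norm_nonneg _) (r_lt_one hq)).mul_left _
  exact h1.congr (fun n => by rw [pow_add]; ring)

lemma multipliable_one_add (k : ℕ) (w : ℂ) :
    Multipliable (fun n : ℕ => 1 + q⁻¹ ^ (n + k) * w) := by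
  refine multipliable_of_bound (u := fun n => ‖q⁻¹‖ ^ (n + k) * ‖w‖)
    (summable_geom_shift hq _ _) (fun n => by positivity) (fun n => ?_)
  rw [add_sub_cancel_left, norm_mul, norm_pow]

lemma analyticOnNhd_Af : AnalyticOnNhd ℂ (Af q) Set.univ := by
  intro x _
  have hR : (0:ℝ) < ‖x‖ + 1 := by positivity
  show AnalyticAt ℂ (fun z => ∏' n : ℕ, (1 + q⁻¹ ^ n * z)) x
  refine analyticOnNhd_tprod (f := fun n z => 1 + q⁻¹ ^ n * z)
    (u := fun n => ‖q⁻¹‖ ^ n * (‖x‖ + 1)) (s := Metric.ball (0:ℂ) (‖x‖ + 1))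
    Metric.isOpen_ball (fun n z _ => ?_) (by simpa using summable_geom_shift hq (‖x‖ + 1) 0)
    (fun n => by positivity) (fun n z hz => ?_) x ?_
  · exact analyticAt_const.add (analyticAt_const.mul analyticAt_id)
  · show ‖1 + q⁻¹ ^ n * z - 1‖ ≤ ‖q⁻¹‖ ^ n * (‖x‖ + 1)
    rw [add_sub_cancel_left, norm_mul, norm_pow]
    have hz' : ‖z‖ ≤ ‖x‖ + 1 := le_of_lt (mem_ball_zero_iff.1 hz)
    exact mul_le_mul_of_nonneg_left hz' (by positivity)
  · exact mem_ball_zero_iff.2 (by linarith)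

lemma analyticAt_Bf {z : ℂ} (hz : z ≠ 0) : AnalyticAt ℂ (Bf q) z := by
  have hz0 : (0:ℝ) < ‖z‖ := norm_pos_iff.2 hz
  have hs : IsOpen {w : ℂ | ‖z‖ / 2 < ‖w‖} := isOpen_lt continuous_const continuous_norm
  show AnalyticAt ℂ (fun z => ∏' n : ℕ, (1 + q⁻¹ ^ (n + 1) * z⁻¹)) z
  refine analyticOnNhd_tprod (f := fun n w => 1 + q⁻¹ ^ (n + 1) * w⁻¹)
    (u := fun n => ‖q⁻¹‖ ^ (n + 1) * (‖z‖ / 2)⁻¹)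
    (s := {w : ℂ | ‖z‖ / 2 < ‖w‖})
    hs (fun n w hw => ?_) (summable_geom_shift hq _ _)
    (fun n => by positivity) (fun n w hw => ?_) z ?_
  · simp only [Set.mem_setOf_eq] at hw
    have hw0 : w ≠ 0 := by
      intro hc
      rw [hc, norm_zero] at hw
      linarith
    exact analyticAt_const.add (analyticAt_const.mul (analyticAt_id.inv hw0))
  · simp only [Set.mem_setOf_eq] at hw
    show ‖1 + q⁻¹ ^ (n + 1) * w⁻¹ - 1‖ ≤ ‖q⁻¹‖ ^ (n + 1) * (‖z‖ / 2)⁻¹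
    rw [add_sub_cancel_left, norm_mul, norm_pow]
    have hwi : ‖w⁻¹‖ = ‖w‖⁻¹ := norm_inv w
    have h2 : ‖w‖⁻¹ ≤ (‖z‖ / 2)⁻¹ := by
      apply inv_anti₀ (by linarith) (le_of_lt hw)
    rw [hwi]
    exact mul_le_mul_of_nonneg_left h2 (by positivity)
  · show ‖z‖ / 2 < ‖z‖
    linarith

lemma analyticAt_Tf {z : ℂ} (hz : z ≠ 0) : AnalyticAt ℂ (Tf q) z :=
  ((analyticOnNhd_Af hq) z (Set.mem_univ z)).mul (analyticAt_Bf hq hz)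

lemma Af_ne_zero {z : ℂ} (hsp : ∀ m : ℤ, z ≠ -q ^ m) : Af q z ≠ 0 := by
  have hq0 : q ≠ 0 := q_ne_zero hq
  refine tprod_ne_zero (u := fun n => ‖q⁻¹‖ ^ n * ‖z‖)
    (by simpa using summable_geom_shift hq ‖z‖ 0) (fun n => by positivity)
    (fun n => ?_) (fun n => ?_)
  · show ‖1 + q⁻¹ ^ n * z - 1‖ ≤ ‖q⁻¹‖ ^ n * ‖z‖
    rw [add_sub_cancel_left, norm_mul, norm_pow]
  · intro hc
    apply hsp n
    have h1 : q⁻¹ ^ n * z = -1 := by linear_combination hc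
    have hpow : q ^ n * q⁻¹ ^ n = 1 := by
      rw [← mul_pow, mul_inv_cancel₀ hq0, one_pow]
    have h2 : z = -q ^ n := by linear_combination q ^ n * h1 - z * hpow
    rw [h2, zpow_natCast]

lemma Bf_ne_zero {z : ℂ} (hz : z ≠ 0) (hsp : ∀ m : ℤ, z ≠ -q ^ m) : Bf q z ≠ 0 := by
  have hq0 : q ≠ 0 := q_ne_zero hq
  refine tprod_ne_zero (u := fun n => ‖q⁻¹‖ ^ (n + 1) * ‖z⁻¹‖)
    (summable_geom_shift hq _ _) (fun n => by positivity) (fun n => ?_) (fun n => ?_)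
  · show ‖1 + q⁻¹ ^ (n + 1) * z⁻¹ - 1‖ ≤ ‖q⁻¹‖ ^ (n + 1) * ‖z⁻¹‖
    rw [add_sub_cancel_left, norm_mul, norm_pow]
  · intro hc
    apply hsp (-((n : ℤ) + 1))
    have h1 : q⁻¹ ^ (n + 1) * z⁻¹ = -1 := by linear_combination hc
    have hpow : q ^ (n + 1) * q⁻¹ ^ (n + 1) = 1 := by
      rw [← mul_pow, mul_inv_cancel₀ hq0, one_pow]
    have h2 : z⁻¹ = -q ^ (n + 1) := by linear_combination q ^ (n + 1) * h1 - z⁻¹ * hpow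
    have h3 : z = -(q ^ (n + 1))⁻¹ := by
      rw [← inv_inv z, h2]
      rw [neg_inv]
    rw [h3]
    have h4 : (q : ℂ) ^ (-((n : ℤ) + 1)) = (q ^ (n + 1))⁻¹ := by
      rw [zpow_neg]
      norm_cast
    rw [h4]

lemma Tf_ne_zero {z : ℂ} (hz : z ≠ 0) (hsp : ∀ m : ℤ, z ≠ -q ^ m) : Tf q z ≠ 0 :=
  mul_ne_zero (Af_ne_zero hq hsp) (Bf_ne_zero hq hz hsp)

lemma Af_eq (z : ℂ) : Af q (q * z) = (1 + q * z) * Af q z := by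
  have hq0 : q ≠ 0 := q_ne_zero hq
  have key : ∀ n : ℕ, (1 + q⁻¹ ^ (n + 1) * (q * z)) = 1 + q⁻¹ ^ n * z := by
    intro n
    congr 1
    rw [pow_succ]
    field_simp
  have hm : Multipliable (fun n : ℕ => (1 + q⁻¹ ^ (n + 1) * (q * z))) := by
    have := multipliable_one_add hq 0 z
    simp only [add_zero] at this
    exact this.congr (fun n => (key n).symm)
  calc Af q (q * z) = ∏' n : ℕ, (1 + q⁻¹ ^ n * (q * z)) := rfl
    _ = (1 + q⁻¹ ^ 0 * (q * z)) * ∏' n : ℕ, (1 + q⁻¹ ^ (n + 1) * (q * z)) :=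
        tprod_eq_zero_mul' hm
    _ = (1 + q * z) * Af q z := by
        rw [pow_zero, one_mul, tprod_congr key]
        rfl

lemma Bf_eq (z : ℂ) : Bf q z = (1 + q⁻¹ * z⁻¹) * Bf q (q * z) := by
  have hq0 : q ≠ 0 := q_ne_zero hq
  have key : ∀ n : ℕ, (1 + q⁻¹ ^ (n + 1) * (q * z)⁻¹) = 1 + q⁻¹ ^ (n + 2) * z⁻¹ := by
    intro n
    congr 1
    rw [mul_inv, pow_succ, pow_succ]
    ring
  have hm : Multipliable (fun n : ℕ => (1 + q⁻¹ ^ (n + 1 + 1) * z⁻¹)) :=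
    (multipliable_one_add hq 2 z⁻¹).congr (fun n => rfl)
  calc Bf q z = ∏' n : ℕ, (1 + q⁻¹ ^ (n + 1) * z⁻¹) := rfl
    _ = (1 + q⁻¹ ^ (0 + 1) * z⁻¹) * ∏' n : ℕ, (1 + q⁻¹ ^ (n + 1 + 1) * z⁻¹) :=
        tprod_eq_zero_mul' hm
    _ = (1 + q⁻¹ * z⁻¹) * Bf q (q * z) := by
        rw [zero_add, pow_one]
        congr 1
        exact (tprod_congr (fun n => (key n).symm))

lemma Tf_eq {z : ℂ} (hz : z ≠ 0) : Tf q (q * z) = q * z * Tf q z := by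
  have hq0 : q ≠ 0 := q_ne_zero hq
  have hA := Af_eq hq z
  have hB := Bf_eq hq z
  show Af q (q * z) * Bf q (q * z) = q * z * (Af q z * Bf q z)
  rw [hA, hB]
  field_simp
  ring

end Geom


section GLemmas

lemma Gf_zero (h : ℂ → ℂ) (α : ℂ) (μ : ℕ) : Gf h α μ 0 = 1 := if_pos rfl

lemma h_eq_Gf {h : ℂ → ℂ} {α : ℂ} {μ : ℕ} (hα : α ≠ 0) {x : ℂ} (hx : x ≠ 0) :
    h x = α * x ^ μ * Gf h α μ x := by
  unfold Gf
  rw [if_neg hx]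
  field_simp

lemma Gf_analytic {h : ℂ → ℂ} (hh : AnalyticOnNhd ℂ h Set.univ) {μ : ℕ} {α : ℂ} (hα : α ≠ 0)
    (hμ : analyticOrderAt h 0 = (μ : ℕ∞))
    (hlim : Filter.Tendsto (fun x : ℂ => h x / x ^ μ) (nhdsWithin 0 {0}ᶜ) (nhds α)) :
    AnalyticOnNhd ℂ (Gf h α μ) Set.univ := by
  intro x _
  by_cases hx : x = 0
  · subst hx
    obtain ⟨φ, hφ, hφ0, hφeq⟩ := ((hh 0 (Set.mem_univ 0)).analyticOrderAt_eq_natCast).1 hμ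
    have hev : ∀ᶠ z in 𝓝 (0:ℂ), h z = z ^ μ * φ z := by
      filter_upwards [hφeq] with z hz
      simpa [smul_eq_mul] using hz
    have hφα : φ 0 = α := by
      have l2 : Tendsto (fun z => h z / z ^ μ) (𝓝[≠] (0:ℂ)) (𝓝 (φ 0)) := by
        have hc : Tendsto φ (𝓝[≠] (0:ℂ)) (𝓝 (φ 0)) :=
          (hφ.continuousAt.tendsto).mono_left nhdsWithin_le_nhds
        refine hc.congr' ?_
        filter_upwards [hev.filter_mono nhdsWithin_le_nhds, self_mem_nhdsWithin] with z hz hz0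
        rw [hz]
        have hz0' : (z: ℂ) ≠ 0 := hz0
        field_simp
      exact tendsto_nhds_unique l2 hlim
    have heq : (fun z => φ z / α) =ᶠ[𝓝 (0:ℂ)] Gf h α μ := by
      filter_upwards [hev] with z hz
      by_cases hz0 : z = 0
      · subst hz0
        rw [hφα]
        simp [Gf, div_self hα]
      · unfold Gf
        rw [if_neg hz0, hz]
        rw [mul_comm α (z ^ μ), mul_div_mul_left _ _ (pow_ne_zero μ hz0)]
    exact ((hφ.div analyticAt_const hα)).congr heq
  · have hev : (fun z => h z / (α * z ^ μ)) =ᶠ[𝓝 x] Gf h α μ := by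
      filter_upwards [eventually_ne_nhds hx] with z hz
      unfold Gf
      rw [if_neg hz]
    exact (((hh x (Set.mem_univ x)).div
      (analyticAt_const.mul (analyticAt_id.pow μ))
      (mul_ne_zero hα (pow_ne_zero μ hx)))).congr hev

lemma G_bound {q : ℂ} (hq : 1 < ‖q‖) {G : ℂ → ℂ}
    (hGA : AnalyticOnNhd ℂ G Set.univ) (hG0 : G 0 = 1) {R : ℝ} (hR : 0 < R) :
    ∃ u : ℕ → ℝ, Summable u ∧ (∀ n, 0 ≤ u n) ∧
      ∀ n, ∀ x ∈ Metric.ball (0:ℂ) R, ‖G (q⁻¹ ^ (n + 1) * x) - 1‖ ≤ u n := by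
  have hrlt := r_lt_one hq
  have hr0 : (0:ℝ) ≤ ‖q⁻¹‖ := norm_nonneg _
  have hdiff : DifferentiableAt ℂ G 0 := (hGA 0 (Set.mem_univ 0)).differentiableAt
  have hO : (fun w => G w - G 0) =O[𝓝 0] (fun w => w - 0) := hdiff.isBigO_sub
  rw [Asymptotics.isBigO_iff] at hO
  obtain ⟨C, hC⟩ := hO
  rw [Metric.eventually_nhds_iff] at hC
  obtain ⟨δ, hδ0, hδ⟩ := hC
  set C' := max C 0 with hC'def
  have hC'0 : 0 ≤ C' := le_max_right _ _
  have hcont : ContinuousOn G (Metric.closedBall (0:ℂ) R) :=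
    (hGA.continuousOn).mono (Set.subset_univ _)
  obtain ⟨M, hM⟩ := (isCompact_closedBall (0:ℂ) R).exists_bound_of_continuousOn hcont
  have hM0 : 0 ≤ M := le_trans (norm_nonneg (G 0)) (hM 0 (by simp [hR.le]))
  have htend : Tendsto (fun n : ℕ => ‖q⁻¹‖ ^ (n + 1) * R) atTop (𝓝 0) := by
    have h1 : Tendsto (fun n : ℕ => ‖q⁻¹‖ ^ n * R) atTop (𝓝 0) := by
      simpa using (tendsto_pow_atTop_nhds_zero_of_lt_one hr0 hrlt).mul_const R
    exact h1.comp (tendsto_add_atTop_nat 1)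
  obtain ⟨N, hN⟩ := eventually_atTop.1 (htend.eventually (gt_mem_nhds hδ0))
  refine ⟨fun n => if n < N then M + 1 else C' * (‖q⁻¹‖ ^ (n + 1) * R), ?_, ?_, ?_⟩
  · rw [← summable_nat_add_iff N]
    refine (((summable_geom_shift hq R (N + 1)).mul_left C')).congr (fun n => ?_)
    show C' * (‖q⁻¹‖ ^ (n + (N + 1)) * R)
      = if n + N < N then M + 1 else C' * (‖q⁻¹‖ ^ (n + N + 1) * R)
    rw [if_neg (by omega), ← Nat.add_assoc]
  · intro n
    show (0:ℝ) ≤ if n < N then M + 1 else C' * (‖q⁻¹‖ ^ (n + 1) * R)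
    by_cases hn : n < N
    · rw [if_pos hn]; linarith
    · rw [if_neg hn]; positivity
  · intro n x hx
    have hxR : ‖x‖ < R := mem_ball_zero_iff.1 hx
    have hpow1 : ‖q⁻¹‖ ^ (n + 1) ≤ 1 := pow_le_one₀ hr0 hrlt.le
    have hwn : ‖q⁻¹ ^ (n + 1) * x‖ = ‖q⁻¹‖ ^ (n + 1) * ‖x‖ := by
      rw [norm_mul, norm_pow]
    have hwR : ‖q⁻¹ ^ (n + 1) * x‖ ≤ ‖q⁻¹‖ ^ (n + 1) * R := by
      rw [hwn]
      exact mul_le_mul_of_nonneg_left hxR.le (by positivity)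
    show ‖G (q⁻¹ ^ (n + 1) * x) - 1‖ ≤ if n < N then M + 1 else C' * (‖q⁻¹‖ ^ (n + 1) * R)
    by_cases hn : n < N
    · rw [if_pos hn]
      have hmem : q⁻¹ ^ (n + 1) * x ∈ Metric.closedBall (0:ℂ) R := by
        rw [Metric.mem_closedBall, dist_zero_right]
        calc ‖q⁻¹ ^ (n + 1) * x‖ ≤ ‖q⁻¹‖ ^ (n + 1) * R := hwR
          _ ≤ 1 * R := mul_le_mul_of_nonneg_right hpow1 hR.le
          _ = R := one_mul R
      calc ‖G (q⁻¹ ^ (n + 1) * x) - 1‖ ≤ ‖G (q⁻¹ ^ (n + 1) * x)‖ + ‖(1:ℂ)‖ := norm_sub_le _ _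
        _ ≤ M + 1 := by
            have := hM _ hmem
            simp only [norm_one]
            linarith
    · rw [if_neg hn]
      have hnN : N ≤ n := Nat.le_of_not_lt hn
      have hlt : ‖q⁻¹ ^ (n + 1) * x‖ < δ := lt_of_le_of_lt hwR (hN n hnN)
      have hball : dist (q⁻¹ ^ (n + 1) * x) 0 < δ := by rwa [dist_zero_right]
      have h1 := hδ hball
      rw [hG0, sub_zero] at h1
      calc ‖G (q⁻¹ ^ (n + 1) * x) - 1‖ ≤ C * ‖q⁻¹ ^ (n + 1) * x‖ := h1
        _ ≤ C' * ‖q⁻¹ ^ (n + 1) * x‖ :=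
            mul_le_mul_of_nonneg_right (le_max_left _ _) (norm_nonneg _)
        _ ≤ C' * (‖q⁻¹‖ ^ (n + 1) * R) := mul_le_mul_of_nonneg_left hwR hC'0

lemma F_multipliable {q : ℂ} (hq : 1 < ‖q‖) {G : ℂ → ℂ}
    (hGA : AnalyticOnNhd ℂ G Set.univ) (hG0 : G 0 = 1) (x : ℂ) :
    Multipliable (fun n : ℕ => G (q⁻¹ ^ (n + 1) * x)) := by
  obtain ⟨u, hu, h0, hb⟩ := G_bound hq hGA hG0 (R := ‖x‖ + 1) (by positivity)
  exact multipliable_of_bound hu h0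
    (fun n => hb n x (mem_ball_zero_iff.2 (by linarith [norm_nonneg x])))

lemma F_analytic {q : ℂ} (hq : 1 < ‖q‖) {G : ℂ → ℂ}
    (hGA : AnalyticOnNhd ℂ G Set.univ) (hG0 : G 0 = 1) :
    AnalyticOnNhd ℂ (fun x => ∏' n : ℕ, G (q⁻¹ ^ (n + 1) * x)) Set.univ := by
  intro x _
  obtain ⟨u, hu, h0, hb⟩ := G_bound hq hGA hG0 (R := ‖x‖ + 1) (by positivity)
  refine analyticOnNhd_tprod (f := fun n z => G (q⁻¹ ^ (n + 1) * z))
    (s := Metric.ball (0:ℂ) (‖x‖ + 1)) Metric.isOpen_ball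
    (fun n z _ => ?_) hu h0 hb x (mem_ball_zero_iff.2 (by linarith [norm_nonneg x]))
  exact (hGA _ (Set.mem_univ _)).comp (analyticAt_const.mul analyticAt_id)

lemma F_eq {q : ℂ} (hq : 1 < ‖q‖) {G : ℂ → ℂ}
    (hGA : AnalyticOnNhd ℂ G Set.univ) (hG0 : G 0 = 1) (x : ℂ) :
    (∏' n : ℕ, G (q⁻¹ ^ (n + 1) * (q * x))) = G x * ∏' n : ℕ, G (q⁻¹ ^ (n + 1) * x) := by
  have hq0 : q ≠ 0 := q_ne_zero hq
  have key : ∀ n : ℕ, q⁻¹ ^ (n + 1) * (q * x) = q⁻¹ ^ n * x := by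
    intro n
    rw [pow_succ]
    field_simp
  have hm : Multipliable (fun n : ℕ => G (q⁻¹ ^ (n + 1) * x)) := F_multipliable hq hGA hG0 x
  calc (∏' n : ℕ, G (q⁻¹ ^ (n + 1) * (q * x))) = ∏' n : ℕ, G (q⁻¹ ^ n * x) :=
        tprod_congr (fun n => by rw [key n])
    _ = G (q⁻¹ ^ 0 * x) * ∏' n : ℕ, G (q⁻¹ ^ (n + 1) * x) := tprod_eq_zero_mul' hm
    _ = G x * ∏' n : ℕ, G (q⁻¹ ^ (n + 1) * x) := by rw [pow_zero, one_mul]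

lemma F_zero {q : ℂ} {G : ℂ → ℂ} (hG0 : G 0 = 1) :
    (∏' n : ℕ, G (q⁻¹ ^ (n + 1) * (0:ℂ))) = 1 := by
  rw [tprod_congr (fun n => by rw [mul_zero, hG0] : ∀ n : ℕ, G (q⁻¹ ^ (n + 1) * (0:ℂ)) = 1)]
  exact tprod_one

end GLemmas

end ProdAux

open ProdAux in
/-- If `h` is entire, not identically zero, with order of vanishing
`μ` at `0` and `α = lim_{x→0} h(x)/x^μ ≠ 0`, then the equation `y(qx) = h(x) y(x)` has
a solution meromorphic on `ℂ ∖ {0}`, not identically zero there, analytic away from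
the spirals `−q^ℤ` and `α q^ℤ`; if moreover `h(0) = 1`, an entire solution with
`y(0) = 1` exists. -/
theorem meromorphic_solution_homogeneous_entire_coeff (q : ℂ) (hq : 1 < ‖q‖)
    (h : ℂ → ℂ) (hh : AnalyticOnNhd ℂ h Set.univ) (hne : ∃ x : ℂ, h x ≠ 0)
    (μ : ℕ) (hμ : analyticOrderAt h 0 = (μ : ℕ∞))
    (α : ℂ) (hα : α ≠ 0)
    (hlim : Filter.Tendsto (fun x : ℂ => h x / x ^ μ) (nhdsWithin 0 {0}ᶜ) (nhds α)) :
    (∃ y : ℂ → ℂ, MeromorphicOn y {x : ℂ | x ≠ 0} ∧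
      (∃ x : ℂ, x ≠ 0 ∧ y x ≠ 0) ∧
      (∀ x : ℂ, x ≠ 0 → AnalyticAt ℂ y x → AnalyticAt ℂ y (q * x) →
        y (q * x) = h x * y x) ∧
      (∀ x : ℂ, x ≠ 0 → (∀ n : ℤ, x ≠ -q ^ n) → (∀ n : ℤ, x ≠ α * q ^ n) →
        AnalyticAt ℂ y x)) ∧
    (h 0 = 1 → ∃ y : ℂ → ℂ, AnalyticOnNhd ℂ y Set.univ ∧ y 0 = 1 ∧
      ∀ x : ℂ, y (q * x) = h x * y x) := by
  have hq0 : q ≠ 0 := q_ne_zero hq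
  have hGA : AnalyticOnNhd ℂ (Gf h α μ) Set.univ := Gf_analytic hh hα hμ hlim
  have hG0 : Gf h α μ 0 = 1 := Gf_zero h α μ
  set G : ℂ → ℂ := Gf h α μ with hGdef
  set F : ℂ → ℂ := fun x => ∏' n : ℕ, G (q⁻¹ ^ (n + 1) * x) with hFdef
  have hFA : AnalyticOnNhd ℂ F Set.univ := F_analytic hq hGA hG0
  have hFeq : ∀ x : ℂ, F (q * x) = G x * F x := fun x => F_eq hq hGA hG0 x
  have hF0 : F 0 = 1 := F_zero hG0
  constructor
  · -- first part
    set Nn : ℂ → ℂ := fun x => F x * (Tf q (q⁻¹ * x)) ^ μ * Tf q (-x) with hNdef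
    set D : ℂ → ℂ := fun x => Tf q (-x / α) with hDdef
    have hNA : ∀ x : ℂ, x ≠ 0 → AnalyticAt ℂ Nn x := by
      intro x hx
      have h1 : AnalyticAt ℂ (fun z : ℂ => Tf q (q⁻¹ * z)) x :=
        (analyticAt_Tf hq (mul_ne_zero (inv_ne_zero hq0) hx)).comp
          (analyticAt_const.mul analyticAt_id)
      have h2 : AnalyticAt ℂ (fun z : ℂ => Tf q (-z)) x :=
        (analyticAt_Tf hq (neg_ne_zero.2 hx)).comp analyticAt_id.neg
      exact ((hFA x (Set.mem_univ x)).mul (h1.pow μ)).mul h2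
    have hDA : ∀ x : ℂ, x ≠ 0 → AnalyticAt ℂ D x := by
      intro x hx
      have hinner : AnalyticAt ℂ (fun z : ℂ => -z / α) x :=
        AnalyticAt.div (analyticAt_id.neg) analyticAt_const hα
      have hcomp := AnalyticAt.comp (f := fun z : ℂ => -z / α) (g := Tf q) (x := x)
        (analyticAt_Tf hq (div_ne_zero (neg_ne_zero.2 hx) hα)) hinner
      exact hcomp
    refine ⟨fun x => Nn x / D x, ?_, ?_, ?_, ?_⟩
    · -- meromorphic
      intro x hx
      have hx' : x ≠ 0 := hx
      exact ((hNA x hx').meromorphicAt).div ((hDA x hx').meromorphicAt)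
    · -- not identically zero
      have hFne : ∀ᶠ z in 𝓝 (0:ℂ), F z ≠ 0 :=
        ((hFA 0 (Set.mem_univ 0)).continuousAt).eventually_ne (hF0 ▸ one_ne_zero)
      rw [Metric.eventually_nhds_iff] at hFne
      obtain ⟨δ, hδ0, hδ⟩ := hFne
      set S : Set ℂ := {(0:ℂ)} ∪ (Set.range fun m : ℤ => -q ^ m)
        ∪ (Set.range fun m : ℤ => q ^ m) ∪ (Set.range fun m : ℤ => α * q ^ m) with hSdef
      have hSc : S.Countable :=
        (((Set.countable_singleton (0:ℂ)).union (Set.countable_range _)).union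
          (Set.countable_range _)).union (Set.countable_range _)
      have hex : ∃ t : ℝ, t ∈ Set.Ioo (0:ℝ) (min δ 1) ∧ (t:ℂ) ∉ S := by
        by_contra hcon
        push_neg at hcon
        have hsub : Set.Ioo (0:ℝ) (min δ 1) ⊆ Complex.ofReal ⁻¹' S :=
          fun t ht => hcon t ht
        have hctble : (Set.Ioo (0:ℝ) (min δ 1)).Countable :=
          Set.Countable.mono hsub (hSc.preimage Complex.ofReal_injective)
        have hvol := hctble.measure_zero MeasureTheory.volume
        rw [Real.volume_Ioo, ENNReal.ofReal_eq_zero] at hvol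
        have hmin : (0:ℝ) < min δ 1 := lt_min hδ0 one_pos
        linarith
      obtain ⟨t, ht, htS⟩ := hex
      set x : ℂ := (t:ℂ) with hxdef
      have hxd : dist x 0 < δ := by
        rw [dist_zero_right, hxdef, Complex.norm_real, Real.norm_eq_abs, abs_of_pos ht.1]
        exact lt_of_lt_of_le ht.2 (min_le_left _ _)
      have hx0 : x ≠ 0 := fun hc => htS (Or.inl (Or.inl (Or.inl hc)))
      have hs1 : ∀ m : ℤ, x ≠ -q ^ m := fun m hc => htS (Or.inl (Or.inl (Or.inr ⟨m, hc.symm⟩)))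
      have hs2 : ∀ m : ℤ, x ≠ q ^ m := fun m hc => htS (Or.inl (Or.inr ⟨m, hc.symm⟩))
      have hs3 : ∀ m : ℤ, x ≠ α * q ^ m := fun m hc => htS (Or.inr ⟨m, hc.symm⟩)
      have hT1 : Tf q (q⁻¹ * x) ≠ 0 := by
        refine Tf_ne_zero hq (mul_ne_zero (inv_ne_zero hq0) hx0) (fun m hc => ?_)
        apply hs1 (m + 1)
        have hx' : x = q * (q⁻¹ * x) := by field_simp
        rw [hx', hc, zpow_add_one₀ hq0]
        ring
      have hT2 : Tf q (-x) ≠ 0 := by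
        refine Tf_ne_zero hq (neg_ne_zero.2 hx0) (fun m hc => ?_)
        exact hs2 m (neg_injective hc)
      have hT3 : D x ≠ 0 := by
        refine Tf_ne_zero hq (div_ne_zero (neg_ne_zero.2 hx0) hα) (fun m hc => ?_)
        apply hs3 m
        have : -x = α * (-q ^ m) := by
          rw [← hc]
          field_simp
        linear_combination -this
      have hFx : F x ≠ 0 := hδ hxd
      exact ⟨x, hx0, div_ne_zero (mul_ne_zero (mul_ne_zero hFx (pow_ne_zero μ hT1)) hT2) hT3⟩
    · -- functional equation
      intro x hx _ _
      have hDq : D (q * x) = q * (-x / α) * D x := by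
        show Tf q (-(q * x) / α) = _
        rw [show -(q * x) / α = q * (-x / α) from by ring,
          Tf_eq hq (div_ne_zero (neg_ne_zero.2 hx) hα)]
      have hNq : Nn (q * x) = G x * x ^ μ * (q * -x) * Nn x := by
        show F (q * x) * (Tf q (q⁻¹ * (q * x))) ^ μ * Tf q (-(q * x)) = _
        have h2 : q⁻¹ * (q * x) = x := by field_simp
        have h3 : -(q * x) = q * (-x) := by ring
        rw [h2, h3, hFeq x, Tf_eq hq (neg_ne_zero.2 hx)]
        have h4 : Tf q x = x * Tf q (q⁻¹ * x) := by
          have h5 := Tf_eq hq (z := q⁻¹ * x) (mul_ne_zero (inv_ne_zero hq0) hx)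
          rw [show q * (q⁻¹ * x) = x from by field_simp] at h5
          exact h5
        rw [h4]
        ring
      show Nn (q * x) / D (q * x) = h x * (Nn x / D x)
      by_cases hD : D x = 0
      · rw [hDq, hD, mul_zero, div_zero, div_zero, mul_zero]
      · have hqα : q * (-x / α) ≠ 0 :=
          mul_ne_zero hq0 (div_ne_zero (neg_ne_zero.2 hx) hα)
        have hxeq : h x = α * x ^ μ * G x := h_eq_Gf hα hx
        rw [hNq, hDq, hxeq]
        field_simp
      -- done
    · -- analyticity away from spirals
      intro x hx hsp1 hsp2
      have hDne : D x ≠ 0 := by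
        refine Tf_ne_zero hq (div_ne_zero (neg_ne_zero.2 hx) hα) (fun m hc => ?_)
        apply hsp2 m
        have : -x = α * (-q ^ m) := by
          rw [← hc]
          field_simp
        linear_combination -this
      exact (hNA x hx).div (hDA x hx) hDne
  · -- entire solution when h 0 = 1
    intro hone
    have hμ0 : μ = 0 := by
      by_contra hc
      obtain ⟨φ, hφ, hφ0, hφeq⟩ := ((hh 0 (Set.mem_univ 0)).analyticOrderAt_eq_natCast).1 hμ
      have h00 := hφeq.self_of_nhds
      rw [hone] at h00
      simp only [sub_zero, smul_eq_mul] at h00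
      rw [zero_pow hc, zero_mul] at h00
      exact one_ne_zero h00
    subst hμ0
    have hα1 : α = 1 := by
      have l2 : Tendsto (fun z : ℂ => h z / z ^ 0) (𝓝[≠] (0:ℂ)) (𝓝 (h 0)) := by
        have hc := (hh 0 (Set.mem_univ 0)).continuousAt.tendsto.mono_left
          (nhdsWithin_le_nhds (s := {(0:ℂ)}ᶜ))
        exact hc.congr (fun z => by rw [pow_zero, div_one])
      have := tendsto_nhds_unique hlim l2
      rw [hone] at this
      exact this
    subst hα1
    have hGh : G = h := by
      funext w
      by_cases hw : w = 0
      · subst hw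
        rw [hG0, hone]
      · show Gf h 1 0 w = h w
        unfold Gf
        rw [if_neg hw]
        simp
    refine ⟨F, hFA, hF0, fun x => ?_⟩
    have := hFeq x
    rwa [hGh] at this
end

section
/- Let R be meromorphic on ℂ ∖ {0}, let P denote the set of poles of R, and let ρ > 0. Set S = {q^n : n ∈ ℤ} ∪ {a q^n : a ∈ P, |a| > ρ, n an integer ≥ 1} ∪ {a q^{−n} : a ∈ P, |a| ≤ ρ, n an integer ≥ 0}. Then there exists a function y meromorphic on ℂ ∖ {0} such that y is analytic at every point of (ℂ ∖ {0}) ∖ S, and y(qx) = y(x) + R(x) holds for every x ∈ ℂ ∖ {0} at which R is analytic at x and y is analytic at x and at qx. -/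
open Filter Metric Set Complex intervalIntegral
open scoped Topology Real


lemma aux_order_congr {f g : ℂ → ℂ} {x : ℂ} (hf : MeromorphicAt f x) (hg : MeromorphicAt g x)
    (h : f =ᶠ[𝓝[≠] x] g) : meromorphicOrderAt f x = meromorphicOrderAt g x := by
  rcases eq_or_ne (meromorphicOrderAt f x) ⊤ with ht | ht
  · rw [ht, eq_comm, meromorphicOrderAt_eq_top_iff]
    rw [meromorphicOrderAt_eq_top_iff] at ht
    filter_upwards [ht, h] with z h1 h2
    rw [← h2]; exact h1
  · obtain ⟨n, hn⟩ := WithTop.ne_top_iff_exists.mp ht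
    rw [← hn, eq_comm, meromorphicOrderAt_eq_int_iff hg]
    obtain ⟨gg, h1, h2, h3⟩ := (meromorphicOrderAt_eq_int_iff (n := n) hf).mp hn.symm
    exact ⟨gg, h1, h2, by filter_upwards [h3, h] with z hz1 hz2; rw [← hz2]; exact hz1⟩

lemma aux_comp_const_mul {f : ℂ → ℂ} {c x : ℂ} (hc : c ≠ 0)
    (hf : MeromorphicAt f (c * x)) : MeromorphicAt (fun z => f (c * z)) x := by
  obtain ⟨n, hn⟩ := hf
  refine ⟨n, ?_⟩
  have h1 : AnalyticAt ℂ (fun z => (c * z - c * x) ^ n • f (c * z)) x := by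
    have := hn.comp (f := fun z : ℂ => c * z) (x := x) (analyticAt_const.mul analyticAt_id)
    simpa [Function.comp_def] using this
  have h2 : AnalyticAt ℂ (fun z => (c ^ n)⁻¹ • (c * z - c * x) ^ n • f (c * z)) x :=
    analyticAt_const.fun_smul h1
  refine h2.congr ?_
  filter_upwards with z
  simp only [smul_eq_mul, ← mul_sub c z x, mul_pow]
  field_simp

lemma aux_finite_of_discrete {D K : Set ℂ} (hK : IsCompact K)
    (h : ∀ z ∈ K, ∀ᶠ w in 𝓝[≠] z, w ∉ D) : (D ∩ K).Finite := by
  have h' : ∀ z ∈ K, ∃ U : Set ℂ, U ∈ 𝓝 z ∧ ∀ w ∈ U, w ≠ z → w ∉ D := by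
    intro z hz
    have := (h z hz)
    rw [eventually_nhdsWithin_iff] at this
    obtain ⟨U, hU1, hU2, hU3⟩ := _root_.eventually_nhds_iff.mp this
    exact ⟨U, hU2.mem_nhds hU3, fun w hw hne => hU1 w hw hne⟩
  choose U hU1 hU2 using h'
  obtain ⟨t, hcover⟩ := hK.elim_nhds_subcover' (fun z hz => U z hz) hU1
  refine Set.Finite.subset ((t.finite_toSet).image (fun z : K => (z : ℂ))) ?_
  rintro w ⟨hwD, hwK⟩
  obtain ⟨z, hz⟩ := Set.mem_iUnion.mp (hcover hwK)
  simp only [Set.mem_iUnion] at hz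
  obtain ⟨hzt, hwU⟩ := hz
  by_cases hwz : w = (z : ℂ)
  · exact ⟨z, hzt, hwz.symm⟩
  · exact absurd hwD (hU2 _ _ _ hwU hwz)


lemma aux_cauchy_analyticAt {g : ℂ → ℂ} {r : ℝ} (hr : 0 < r)
    (hg : ContinuousOn g (sphere (0:ℂ) r)) {x : ℂ} (hx : ‖x‖ ≠ r) :
    AnalyticAt ℂ (fun w => ∮ z in C(0, r), g z / (z - w)) x := by
  obtain ⟨M, hM⟩ := (isCompact_sphere (0:ℂ) r).exists_bound_of_continuousOn hg
  have hM0 : 0 ≤ M := by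
    have : (r : ℂ) ∈ sphere (0:ℂ) r := by simp [Complex.norm_of_nonneg hr.le, hr.le]
    exact le_trans (norm_nonneg _) (hM _ this)
  set U : Set ℂ := {w : ℂ | ‖w‖ ≠ r} with hU
  have hUopen : IsOpen U := isOpen_ne.preimage continuous_norm
  have hdiff : DifferentiableOn ℂ (fun w => ∮ z in C(0, r), g z / (z - w)) U := by
    intro w₀ hw₀
    refine DifferentiableAt.differentiableWithinAt ?_
    set ε : ℝ := |‖w₀‖ - r| / 2 with hε
    have hε0 : 0 < ε := by
      have : ‖w₀‖ - r ≠ 0 := sub_ne_zero.mpr hw₀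
      positivity
    have hsep : ∀ w ∈ ball w₀ ε, ∀ θ : ℝ, ε ≤ ‖circleMap 0 r θ - w‖ := by
      intro w hw θ
      have h1 : ‖circleMap 0 r θ‖ = r := by
        simpa [abs_of_pos hr] using norm_circleMap_zero r θ
      have h2 : |‖w‖ - ‖w₀‖| ≤ ‖w - w₀‖ :=
        abs_norm_sub_norm_le w w₀
      have h3 : ‖w - w₀‖ < ε := by
        rwa [mem_ball, dist_eq_norm] at hw
      have h4 : |r - ‖w‖| ≤ ‖circleMap 0 r θ - w‖ := by
        calc |r - ‖w‖| = |‖circleMap 0 r θ‖ - ‖w‖| := by rw [h1]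
        _ ≤ ‖circleMap 0 r θ - w‖ := abs_norm_sub_norm_le _ _
      have h6 : |‖w₀‖ - r| ≤ |‖w₀‖ - ‖w‖| + |‖w‖ - r| :=
        abs_sub_le _ _ _
      have h7 : |‖w₀‖ - ‖w‖| < ε := by
        rw [abs_sub_comm]; exact lt_of_le_of_lt h2 h3
      have h8 : |‖w₀‖ - r| = 2 * ε := by rw [hε]; ring
      have h9 : ε ≤ |‖w‖ - r| := by linarith
      rw [abs_sub_comm] at h9
      linarith
    have hnesep : ∀ w ∈ ball w₀ ε, ∀ θ : ℝ, circleMap 0 r θ - w ≠ 0 := by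
      intro w hw θ h
      have := hsep w hw θ
      rw [h] at this
      simpa using this.trans_lt' hε0
    have hgc : Continuous (fun θ : ℝ => g (circleMap 0 r θ)) :=
      hg.comp_continuous (continuous_circleMap 0 r) (fun θ => circleMap_mem_sphere 0 hr.le θ)
    have hcont : ∀ w ∈ ball w₀ ε,
        Continuous (fun θ : ℝ => deriv (circleMap 0 r) θ •
          (g (circleMap 0 r θ) / (circleMap 0 r θ - w))) := by
      intro w hw
      simp only [deriv_circleMap]
      exact ((continuous_circleMap 0 r).mul continuous_const).smul
        (hgc.div ((continuous_circleMap 0 r).sub continuous_const) (hnesep w hw))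
    have key := intervalIntegral.hasDerivAt_integral_of_dominated_loc_of_deriv_le
      (F := fun w θ => deriv (circleMap 0 r) θ •
          (g (circleMap 0 r θ) / (circleMap 0 r θ - w)))
      (F' := fun w θ => deriv (circleMap 0 r) θ •
          (g (circleMap 0 r θ) * (-(-1) / (circleMap 0 r θ - w) ^ 2)))
      (x₀ := w₀) (a := 0) (b := 2 * π) (μ := MeasureTheory.volume)
      (bound := fun _ => r * (M / ε ^ 2)) (ball_mem_nhds w₀ hε0)
      ?_ ?_ ?_ ?_ ?_ ?_
    · have hd := key.2
      have heq : (fun w => ∮ z in C(0, r), g z / (z - w)) =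
          (fun w => ∫ θ in (0:ℝ)..(2*π), deriv (circleMap 0 r) θ •
            (g (circleMap 0 r θ) / (circleMap 0 r θ - w))) := by
        funext w; rfl
      rw [heq]
      exact hd.differentiableAt
    · filter_upwards [ball_mem_nhds w₀ hε0] with w hw
      exact ((hcont w hw).aestronglyMeasurable).restrict
    · exact (hcont w₀ (mem_ball_self hε0)).intervalIntegrable 0 (2*π)
    · refine Continuous.aestronglyMeasurable ?_ |>.restrict
      simp only [deriv_circleMap]
      exact ((continuous_circleMap 0 r).mul continuous_const).smul
        (hgc.mul (continuous_const.div
          (((continuous_circleMap 0 r).sub continuous_const).pow 2)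
          (fun θ => pow_ne_zero 2 (hnesep w₀ (mem_ball_self hε0) θ))))
    · refine MeasureTheory.ae_of_all _ (fun θ _ w hw => ?_)
      have h1 : ‖deriv (circleMap 0 r) θ‖ = r := by
        simp [deriv_circleMap, norm_mul, norm_circleMap_zero,
          abs_of_pos hr, Complex.norm_I]
      have h2 : ‖g (circleMap 0 r θ) * (-(-1) / (circleMap 0 r θ - w) ^ 2)‖ ≤ M / ε ^ 2 := by
        rw [norm_mul, norm_div]
        have hb : ‖g (circleMap 0 r θ)‖ ≤ M := hM _ (circleMap_mem_sphere 0 hr.le θ)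
        have h3 : ε ^ 2 ≤ ‖(circleMap 0 r θ - w) ^ 2‖ := by
          rw [norm_pow]
          exact pow_le_pow_left₀ hε0.le (hsep w hw θ) 2
        have h4 : ‖(-(-1:ℂ))‖ = 1 := by norm_num
        rw [h4, mul_one_div]
        exact div_le_div₀ hM0 hb (by positivity) h3
      rw [norm_smul, h1]
      exact mul_le_mul_of_nonneg_left h2 hr.le
    · exact intervalIntegrable_const
    · refine MeasureTheory.ae_of_all _ (fun θ _ w hw => ?_)
      have hne := hnesep w hw θ
      have h1 : HasDerivAt (fun w : ℂ => circleMap 0 r θ - w) (-1) w := by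
        simpa using (hasDerivAt_id w).const_sub (circleMap 0 r θ)
      have h2 : HasDerivAt (fun w : ℂ => (circleMap 0 r θ - w)⁻¹)
          (-(-1) / (circleMap 0 r θ - w) ^ 2) w := h1.inv hne
      have h3 := (h2.const_mul (g (circleMap 0 r θ))).const_smul (deriv (circleMap 0 r) θ)
      simp only [div_eq_mul_inv] at h3 ⊢
      convert h3 using 2
      rfl
  exact (hdiff.analyticAt (hUopen.mem_nhds hx))


lemma aux_annulus_cauchy {f : ℂ → ℂ} {r1 r2 : ℝ} (h1 : 0 < r1) (h12 : r1 < r2) {x : ℂ}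
    (hx1 : r1 < ‖x‖) (hx2 : ‖x‖ < r2)
    (hf : ∀ z : ℂ, r1 ≤ ‖z‖ → ‖z‖ ≤ r2 → AnalyticAt ℂ f z) :
    (∮ z in C(0, r2), f z / (z - x)) - (∮ z in C(0, r1), f z / (z - x))
      = (2 * ↑π * Complex.I) * f x := by
  have h2pos : (0:ℝ) < r2 := h1.trans h12
  have habs : ∀ z : ℂ, ‖z‖ = ‖z‖ := fun z => rfl
  set g : ℂ → ℂ := Function.update (fun z => (f z - f x) / (z - x)) x (deriv f x) with hg
  have g_off : ∀ z : ℂ, z ≠ x → g z = (f z - f x) / (z - x) := by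
    intro z hz
    simp [hg, Function.update_of_ne hz]
  -- continuity of g on the closed annulus
  have hcont : ContinuousOn g (closedBall (0:ℂ) r2 \ ball (0:ℂ) r1) := by
    intro z hz
    obtain ⟨hz2, hz1⟩ := hz
    rw [mem_closedBall_zero_iff] at hz2
    rw [mem_ball_zero_iff, not_lt] at hz1
    by_cases hzx : z = x
    · refine ContinuousAt.continuousWithinAt ?_
      rw [hzx, hg, continuousAt_update_same]
      have hslope : (fun w => (f w - f x) / (w - x)) = slope f x := by
        funext w
        rw [slope_def_field]
      rw [hslope]
      exact hasDerivAt_iff_tendsto_slope.mp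
        ((hf x hx1.le hx2.le).differentiableAt.hasDerivAt)
    · refine ContinuousAt.continuousWithinAt ?_
      have hev : (fun w => (f w - f x) / (w - x)) =ᶠ[𝓝 z] g := by
        filter_upwards [eventually_ne_nhds hzx] with w hw
        rw [g_off w hw]
      refine ContinuousAt.congr ?_ hev
      exact (((hf z hz1 hz2).continuousAt.sub continuousAt_const).div
        (continuousAt_id.sub continuousAt_const) (sub_ne_zero.mpr hzx))
  have hdiffg : ∀ z ∈ (ball (0:ℂ) r2 \ closedBall (0:ℂ) r1) \ {x}, DifferentiableAt ℂ g z := by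
    intro z hz
    obtain ⟨⟨hz2, hz1⟩, hzx⟩ := hz
    rw [mem_ball_zero_iff] at hz2
    rw [mem_closedBall_zero_iff, not_le] at hz1
    rw [Set.mem_singleton_iff] at hzx
    have hev : (fun w => (f w - f x) / (w - x)) =ᶠ[𝓝 z] g := by
      filter_upwards [eventually_ne_nhds hzx] with w hw
      rw [g_off w hw]
    refine DifferentiableAt.congr_of_eventuallyEq ?_ hev.symm
    exact (((hf z hz1.le hz2.le).differentiableAt.sub (differentiableAt_const _)).div
      (differentiableAt_id.sub (differentiableAt_const _)) (sub_ne_zero.mpr hzx))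
  have key := circleIntegral_eq_of_differentiable_on_annulus_off_countable h1 h12.le
    (Set.countable_singleton x) hcont hdiffg
  -- integrability facts
  have hfs : ∀ r : ℝ, 0 < r → r ≠ ‖x‖ →
      (∀ z ∈ sphere (0:ℂ) r, r1 ≤ ‖z‖ ∧ ‖z‖ ≤ r2) →
      CircleIntegrable (fun z => f z / (z - x)) 0 r ∧
      CircleIntegrable (fun z => f x * (z - x)⁻¹) 0 r := by
    intro r hr hrx hsub
    have hzx : ∀ z ∈ sphere (0:ℂ) r, z - x ≠ 0 := by
      intro z hzs h
      rw [mem_sphere_zero_iff_norm] at hzs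
      rw [sub_eq_zero] at h
      exact hrx (by rw [← hzs, h])
    constructor
    · refine ContinuousOn.circleIntegrable hr.le ?_
      intro z hzs
      exact (((hf z (hsub z hzs).1 (hsub z hzs).2).continuousAt.continuousWithinAt).div
        ((continuousAt_id.sub continuousAt_const).continuousWithinAt) (hzx z hzs))
    · refine ContinuousOn.circleIntegrable hr.le ?_
      intro z hzs
      exact (continuousAt_const.continuousWithinAt.mul
        (((continuousAt_id.sub continuousAt_const).inv₀
          (hzx z hzs)).continuousWithinAt))
  have hsphere1 : ∀ z ∈ sphere (0:ℂ) r1, r1 ≤ ‖z‖ ∧ ‖z‖ ≤ r2 := by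
    intro z hzs
    rw [mem_sphere_zero_iff_norm] at hzs
    have hzz : ‖z‖ = r1 := by rw [← hzs]
    exact ⟨le_of_eq hzz.symm, by rw [hzz]; exact h12.le⟩
  have hsphere2 : ∀ z ∈ sphere (0:ℂ) r2, r1 ≤ ‖z‖ ∧ ‖z‖ ≤ r2 := by
    intro z hzs
    rw [mem_sphere_zero_iff_norm] at hzs
    have hzz : ‖z‖ = r2 := by rw [← hzs]
    exact ⟨by rw [hzz]; exact h12.le, le_of_eq hzz⟩
  obtain ⟨hint1a, hint1b⟩ := hfs r1 h1 hx1.ne hsphere1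
  obtain ⟨hint2a, hint2b⟩ := hfs r2 h2pos hx2.ne' hsphere2
  -- expand the two integrals of g
  have hexp : ∀ r : ℝ, 0 < r → r ≠ ‖x‖ →
      CircleIntegrable (fun z => f z / (z - x)) 0 r →
      CircleIntegrable (fun z => f x * (z - x)⁻¹) 0 r →
      (∮ z in C(0, r), g z) =
        (∮ z in C(0, r), f z / (z - x)) - f x * (∮ z in C(0, r), (z - x)⁻¹) := by
    intro r hr hrx hia hib
    have heq : Set.EqOn g (fun z => f z / (z - x) - f x * (z - x)⁻¹) (sphere (0:ℂ) r) := by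
      intro z hzs
      rw [mem_sphere_zero_iff_norm] at hzs
      have hzx : z ≠ x := by
        intro h
        exact hrx (by rw [← hzs, h])
      rw [g_off z hzx, sub_div, div_eq_mul_inv (f x)]
    rw [circleIntegral.integral_congr hr.le heq, circleIntegral.integral_sub hia hib,
      circleIntegral.integral_const_mul]
  rw [hexp r1 h1 hx1.ne hint1a hint1b, hexp r2 h2pos hx2.ne' hint2a hint2b] at key
  -- the two kernel integrals
  have hker2 : (∮ z in C(0, r2), (z - x)⁻¹) = 2 * ↑π * Complex.I := by
    refine circleIntegral.integral_sub_inv_of_mem_ball ?_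
    rw [mem_ball_zero_iff]
    exact hx2
  have hker1 : (∮ z in C(0, r1), (z - x)⁻¹) = 0 := by
    refine circleIntegral_eq_zero_of_differentiable_on_off_countable h1.le
      (Set.countable_empty) ?_ ?_
    · intro z hzs
      rw [mem_closedBall_zero_iff] at hzs
      have hzx : z - x ≠ 0 := by
        intro h
        rw [sub_eq_zero] at h
        subst h
        exact absurd hzs (not_le.mpr hx1)
      exact ((continuousAt_id.sub continuousAt_const).inv₀ hzx).continuousWithinAt
    · intro z hzs
      obtain ⟨hzb, -⟩ := hzs
      rw [mem_ball_zero_iff] at hzb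
      have hzx : z - x ≠ 0 := by
        intro h
        rw [sub_eq_zero] at h
        subst h
        exact absurd hzb (not_lt.mpr hx1.le)
      exact (differentiableAt_id.sub (differentiableAt_const _)).inv hzx
  rw [hker1, hker2] at key
  linear_combination key


lemma aux_finset_mero {f : ℕ → ℂ → ℂ} {x₀ : ℂ} (t : Finset ℕ)
    (h : ∀ i ∈ t, MeromorphicAt (f i) x₀) :
    MeromorphicAt (fun x => ∑ i ∈ t, f i x) x₀ := by
  classical
  induction t using Finset.induction_on with
  | empty => simpa using MeromorphicAt.const 0 x₀
  | @insert a s ha ih =>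
    have h1 : MeromorphicAt (f a) x₀ := h a (Finset.mem_insert_self a s)
    have h2 : MeromorphicAt (fun x => ∑ i ∈ s, f i x) x₀ :=
      ih (fun i hi => h i (Finset.mem_insert_of_mem hi))
    have := h1.add h2
    refine this.congr ?_
    filter_upwards with x
    simp [Finset.sum_insert ha]

lemma aux_finset_an {f : ℕ → ℂ → ℂ} {x₀ : ℂ} (t : Finset ℕ)
    (h : ∀ i ∈ t, AnalyticAt ℂ (f i) x₀) :
    AnalyticAt ℂ (fun x => ∑ i ∈ t, f i x) x₀ := by
  classical
  induction t using Finset.induction_on with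
  | empty => simpa using analyticAt_const (v := (0:ℂ))
  | @insert a s ha ih =>
    have h1 : AnalyticAt ℂ (f a) x₀ := h a (Finset.mem_insert_self a s)
    have h2 : AnalyticAt ℂ (fun x => ∑ i ∈ s, f i x) x₀ :=
      ih (fun i hi => h i (Finset.mem_insert_of_mem hi))
    have := h1.add h2
    refine this.congr ?_
    filter_upwards with x
    simp [Finset.sum_insert ha]

lemma aux_tsum_tail_analytic {f : ℕ → ℂ → ℂ} {x₀ : ℂ} {r : ℝ} (hr : 0 < r) (N : ℕ) {u : ℕ → ℝ}
    (hu : Summable u)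
    (hf_an : ∀ n, N ≤ n → ∀ x ∈ ball x₀ r, AnalyticAt ℂ (f n) x)
    (hf_bd : ∀ n, N ≤ n → ∀ x ∈ ball x₀ r, ‖f n x‖ ≤ u n) :
    AnalyticAt ℂ (fun x => ∑' n : ℕ, f (n + N) x) x₀ := by
  have hu' : Summable (fun n => u (n + N)) := (summable_nat_add_iff N).mpr hu
  have huni : TendstoUniformlyOn (fun (t : Finset ℕ) x => ∑ n ∈ t, f (n + N) x)
      (fun x => ∑' n : ℕ, f (n + N) x) atTop (ball x₀ r) :=
    tendstoUniformlyOn_tsum hu' (fun n x hx => hf_bd (n + N) (Nat.le_add_left N n) x hx)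
  have hdiff : DifferentiableOn ℂ (fun x => ∑' n : ℕ, f (n + N) x) (ball x₀ r) := by
    refine (huni.tendstoLocallyUniformlyOn).differentiableOn ?_ isOpen_ball
    filter_upwards with t
    intro x hx
    refine DifferentiableAt.differentiableWithinAt ?_
    exact DifferentiableAt.fun_sum (fun i _ =>
      (hf_an (i + N) (Nat.le_add_left N i) x hx).differentiableAt)
  exact hdiff.analyticAt (isOpen_ball.mem_nhds (mem_ball_self hr))

lemma aux_tsum_summable {f : ℕ → ℂ → ℂ} {x₀ : ℂ} {r : ℝ} (N : ℕ) {u : ℕ → ℝ}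
    (hu : Summable u)
    (hf_bd : ∀ n, N ≤ n → ∀ x ∈ ball x₀ r, ‖f n x‖ ≤ u n)
    {x : ℂ} (hx : x ∈ ball x₀ r) : Summable (fun n => f n x) := by
  rw [← summable_nat_add_iff N]
  refine Summable.of_norm_bounded (g := fun n => u (n + N)) ((summable_nat_add_iff N).mpr hu) ?_
  intro n
  exact hf_bd (n + N) (Nat.le_add_left N n) x hx

lemma aux_tsum_mero {f : ℕ → ℂ → ℂ} {x₀ : ℂ} {r : ℝ} (hr : 0 < r) (N : ℕ) {u : ℕ → ℝ}
    (hu : Summable u)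
    (hf_an : ∀ n, N ≤ n → ∀ x ∈ ball x₀ r, AnalyticAt ℂ (f n) x)
    (hf_bd : ∀ n, N ≤ n → ∀ x ∈ ball x₀ r, ‖f n x‖ ≤ u n)
    (hmero : ∀ n, n < N → MeromorphicAt (f n) x₀) :
    MeromorphicAt (fun x => ∑' n : ℕ, f n x) x₀ ∧
    ((∀ n, n < N → AnalyticAt ℂ (f n) x₀) → AnalyticAt ℂ (fun x => ∑' n : ℕ, f n x) x₀) := by
  have htail := aux_tsum_tail_analytic hr N hu hf_an hf_bd
  have heq : (fun x => ∑' n : ℕ, f n x) =ᶠ[𝓝 x₀]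
      (fun x => (∑ i ∈ Finset.range N, f i x) + ∑' n : ℕ, f (n + N) x) := by
    filter_upwards [isOpen_ball.mem_nhds (mem_ball_self hr)] with x hx
    exact (Summable.sum_add_tsum_nat_add N (aux_tsum_summable N hu hf_bd hx)).symm
  constructor
  · have h1 : MeromorphicAt (fun x => ∑ i ∈ Finset.range N, f i x) x₀ :=
      aux_finset_mero _ (fun i hi => hmero i (Finset.mem_range.mp hi))
    have := h1.add htail.meromorphicAt
    refine this.congr ?_
    exact (heq.symm.filter_mono nhdsWithin_le_nhds)
  · intro han
    have h1 : AnalyticAt ℂ (fun x => ∑ i ∈ Finset.range N, f i x) x₀ :=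
      aux_finset_an _ (fun i hi => han i (Finset.mem_range.mp hi))
    exact ((h1.add htail).congr heq.symm)


lemma aux_lim_eq_of_eqOn {R h' : ℂ → ℂ} {U : Set ℂ} (hU : IsOpen U) {z : ℂ} (hz : z ∈ U)
    (heq : ∀ w ∈ U, w ≠ z → R w = h' w) (hcont : ∀ w ∈ U, ContinuousAt h' w) :
    ∀ w ∈ U, limUnder (𝓝[≠] w) R = h' w := by
  intro w hw
  have hUz : ∀ᶠ w' in 𝓝[≠] w, R w' = h' w' := by
    have hUmem : ∀ᶠ w' in 𝓝[≠] w, w' ∈ U :=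
      eventually_nhdsWithin_of_eventually_nhds (hU.eventually_mem hw)
    have hne : ∀ᶠ w' in 𝓝[≠] w, w' ≠ z := by
      rcases eq_or_ne w z with rfl | hwz
      · exact eventually_mem_nhdsWithin
      · exact eventually_nhdsWithin_of_eventually_nhds (eventually_ne_nhds hwz)
    filter_upwards [hUmem, hne] with w' h1 h2
    exact heq w' h1 h2
  have ht : Tendsto R (𝓝[≠] w) (𝓝 (h' w)) := by
    refine Tendsto.congr' ?_ (((hcont w hw).tendsto).mono_left nhdsWithin_le_nhds)
    filter_upwards [hUz] with w' h
    exact h.symm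
  exact ht.limUnder_eq

lemma aux_Rt_analyticAt {R : ℂ → ℂ} {z : ℂ} (h : MeromorphicAt R z) (h0 : 0 ≤ meromorphicOrderAt R z) :
    AnalyticAt ℂ (fun w => limUnder (𝓝[≠] w) R) z := by
  rcases eq_or_ne (meromorphicOrderAt R z) ⊤ with htop | hne
  · obtain ⟨U, hU1, hU2, hU3⟩ := _root_.eventually_nhds_iff.mp
      (eventually_nhdsWithin_iff.mp (meromorphicOrderAt_eq_top_iff.mp htop))
    have hkey := aux_lim_eq_of_eqOn (h' := fun _ => (0:ℂ)) hU2 hU3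
      (fun w hw hwz => hU1 w hw (Set.mem_compl_singleton_iff.mpr hwz))
      (fun w _ => continuousAt_const)
    refine (analyticAt_const (v := (0:ℂ))).congr ?_
    filter_upwards [hU2.eventually_mem hU3] with w hw
    exact (hkey w hw).symm
  · obtain ⟨n, hn⟩ := WithTop.ne_top_iff_exists.mp hne
    have h0n : 0 ≤ n := by
      have := h0
      rw [← hn] at this
      exact_mod_cast this
    obtain ⟨m, rfl⟩ := Int.eq_ofNat_of_zero_le h0n
    obtain ⟨g, hg_an, hg_ne, hg_eq⟩ := (meromorphicOrderAt_eq_int_iff (n := m) h).mp hn.symm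
    set h' : ℂ → ℂ := fun w => (w - z) ^ (m : ℕ) * g w with hh'
    have hh'_an : AnalyticAt ℂ h' z :=
      ((analyticAt_id.sub analyticAt_const).pow m).mul hg_an
    have hev : ∀ᶠ w in 𝓝 z, (w ≠ z → R w = h' w) ∧ AnalyticAt ℂ g w := by
      refine Filter.Eventually.and ?_ hg_an.eventually_analyticAt
      have := eventually_nhdsWithin_iff.mp hg_eq
      filter_upwards [this] with w hw hwz
      have := hw (Set.mem_compl_singleton_iff.mpr hwz)
      rw [this, hh']
      simp [smul_eq_mul, zpow_natCast]
    obtain ⟨U, hU1, hU2, hU3⟩ := _root_.eventually_nhds_iff.mp hev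
    have hkey := aux_lim_eq_of_eqOn hU2 hU3
      (fun w hw hwz => (hU1 w hw).1 hwz)
      (fun w hw => (((continuousAt_id.sub continuousAt_const).pow m).mul
        ((hU1 w hw).2.continuousAt)))
    refine hh'_an.congr ?_
    filter_upwards [hU2.eventually_mem hU3] with w hw
    exact (hkey w hw).symm


lemma aux_geom_summable {c : ℝ} (hc : 1 < c) (K : ℝ) :
    Summable (fun n : ℕ => K * (c⁻¹) ^ n) := by
  have h0 : (0:ℝ) < c := lt_trans zero_lt_one hc
  have h1 : c⁻¹ < 1 := by
    rw [inv_lt_one₀ h0]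
    exact hc
  exact (summable_geometric_of_lt_one (by positivity) h1).mul_left K

lemma aux_pow_large {c : ℝ} (hc : 1 < c) (K : ℝ) : ∃ N : ℕ, ∀ n, N ≤ n → K ≤ c ^ n := by
  obtain ⟨N, hN⟩ := eventually_atTop.mp
    ((tendsto_pow_atTop_atTop_of_one_lt hc).eventually_ge_atTop K)
  exact ⟨N, fun n hn => hN n hn⟩

lemma aux_pow_small {c : ℝ} (hc : 1 < c) {ε : ℝ} (hε : 0 < ε) :
    ∃ N : ℕ, ∀ n, N ≤ n → (c⁻¹) ^ n ≤ ε := by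
  obtain ⟨N, hN⟩ := aux_pow_large hc (1/ε)
  refine ⟨N, fun n hn => ?_⟩
  have h0 : (0:ℝ) < c := lt_trans zero_lt_one hc
  have h2 : 1/ε ≤ c ^ n := hN n hn
  rw [inv_pow, inv_le_comm₀ (by positivity) hε]
  rwa [one_div] at h2
  
-- the `q`-logarithm: meromorphic on ℂ*, poles only on qᶻ, ℓ(qx) = ℓ(x) + 1
lemma aux_ell (q : ℂ) (hq : 1 < ‖q‖) :
    ∃ l : ℂ → ℂ,
      (∀ x : ℂ, x ≠ 0 → MeromorphicAt l x) ∧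
      (∀ x : ℂ, x ≠ 0 → (∀ n : ℤ, x ≠ q ^ n) → AnalyticAt ℂ l x) ∧
      (∀ x : ℂ, x ≠ 0 → x ≠ 1 → l (q * x) = l x + 1) := by
  have hq0 : q ≠ 0 := by
    intro h
    rw [h] at hq
    simp at hq
    linarith
  have habs : ∀ k : ℤ, ‖q ^ k‖ = ‖q‖ ^ k := fun k => norm_zpow q k
  have hqpos : (0:ℝ) < ‖q‖ := lt_trans zero_lt_one hq
  set A : ℂ → ℂ := fun x => ∑' n : ℕ, x / (x - q ^ ((n:ℤ) + 1)) with hA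
  set B : ℂ → ℂ := fun x => ∑' n : ℕ, q ^ (-(n:ℤ)) / (x - q ^ (-(n:ℤ))) with hB
  -- uniform bounds on balls
  -- For series A : on ball x₀ (|x₀|/2), for n large
  have hAball : ∀ x₀ : ℂ, x₀ ≠ 0 → ∃ N : ℕ,
      (∀ n, N ≤ n → ∀ x ∈ ball x₀ (‖x₀‖ / 2),
        AnalyticAt ℂ (fun w => w / (w - q ^ ((n:ℤ) + 1))) x) ∧
      (∀ n, N ≤ n → ∀ x ∈ ball x₀ (‖x₀‖ / 2),
        ‖x / (x - q ^ ((n:ℤ) + 1))‖ ≤ (4 * ‖x₀‖) * ((‖q‖)⁻¹) ^ n) := by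
    intro x₀ hx₀
    have hx₀pos : 0 < ‖x₀‖ := by
      simpa [norm_pos_iff] using hx₀
    obtain ⟨N, hN⟩ := aux_pow_large hq (4 * ‖x₀‖)
    have hball : ∀ x ∈ ball x₀ (‖x₀‖ / 2), ‖x‖ ≤ 2 * ‖x₀‖ := by
      intro x hx
      rw [mem_ball, dist_eq_norm] at hx
      have h1 : ‖x - x₀‖ < ‖x₀‖ / 2 := hx
      have h2 := norm_sub_le x x₀  -- not the right lemma; use triangle
      have h3 : ‖x‖ ≤ ‖x - x₀‖ + ‖x₀‖ := by
        simpa using norm_add_le (x - x₀) x₀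
      linarith
    have hden : ∀ n, N ≤ n → ∀ x ∈ ball x₀ (‖x₀‖ / 2),
        ‖q‖ ^ ((n:ℤ) + 1) / 2 ≤ ‖x - q ^ ((n:ℤ)+1)‖ := by
      intro n hn x hx
      have h1 : 4 * ‖x₀‖ ≤ ‖q‖ ^ n := hN n hn
      have h2 : ‖q‖ ^ n ≤ ‖q‖ ^ ((n:ℤ)+1) := by
        rw [zpow_add_one₀ (ne_of_gt hqpos), ← zpow_natCast (‖q‖) n]
        nlinarith [zpow_pos hqpos (n:ℤ)]
      have h3 : ‖x‖ ≤ 2 * ‖x₀‖ := hball x hx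
      have h4 : ‖q‖ ^ ((n:ℤ)+1) - ‖x‖ ≤ ‖x - q ^ ((n:ℤ)+1)‖ := by
        rw [← habs ((n:ℤ)+1)]
        have := norm_sub_le (x - q ^ ((n:ℤ)+1)) x
        have h5 : ‖q ^ ((n:ℤ)+1)‖ ≤ ‖x - q^((n:ℤ)+1)‖ + ‖x‖ := by
          calc ‖q ^ ((n:ℤ)+1)‖ = ‖(q ^ ((n:ℤ)+1) - x) + x‖ := by ring_nf
          _ ≤ ‖q ^ ((n:ℤ)+1) - x‖ + ‖x‖ := norm_add_le _ _
          _ = ‖x - q ^ ((n:ℤ)+1)‖ + ‖x‖ := by rw [norm_sub_rev]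
        linarith
      nlinarith [zpow_pos hqpos ((n:ℤ)+1)]
    refine ⟨N, ?_, ?_⟩
    · intro n hn x hx
      have hne : x - q ^ ((n:ℤ)+1) ≠ 0 := by
        intro h
        have := hden n hn x hx
        rw [h] at this
        simp at this
        nlinarith [zpow_pos hqpos ((n:ℤ)+1)]
      exact analyticAt_id.div (analyticAt_id.sub analyticAt_const) hne
    · intro n hn x hx
      have h1 := hden n hn x hx
      have h2 := hball x hx
      have hpow : (0:ℝ) < ‖q‖ ^ ((n:ℤ)+1) := zpow_pos hqpos _
      rw [norm_div]
      have hden_pos : (0:ℝ) < ‖q‖ ^ ((n:ℤ)+1) / 2 := by positivity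
      have h3 : ‖x‖ / ‖x - q ^ ((n:ℤ)+1)‖ ≤ (2 * ‖x₀‖) / (‖q‖ ^ ((n:ℤ)+1) / 2) := by
        apply div_le_div₀ (by positivity) h2 hden_pos h1
      refine h3.trans ?_
      have h4 : ((‖q‖)⁻¹ : ℝ) ^ n = (‖q‖ ^ n)⁻¹ := by rw [inv_pow]
      have h5 : ‖q‖ ^ ((n:ℤ)+1) = ‖q‖ ^ n * ‖q‖ := by
        rw [zpow_add_one₀ (ne_of_gt hqpos), zpow_natCast]
      have h6 : (0:ℝ) < ‖q‖ ^ n := by positivity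
      calc 2 * ‖x₀‖ / (‖q‖ ^ ((n:ℤ)+1) / 2)
          = 4 * ‖x₀‖ / ‖q‖ ^ ((n:ℤ)+1) := by
            rw [div_div_eq_mul_div]; congr 1; ring
        _ ≤ 4 * ‖x₀‖ / ‖q‖ ^ n := by
            rw [h5]
            exact div_le_div_of_nonneg_left (by positivity) h6 (by nlinarith)
        _ = 4 * ‖x₀‖ * ((‖q‖)⁻¹) ^ n := by
            rw [inv_pow, div_eq_mul_inv]
  have hBball : ∀ x₀ : ℂ, x₀ ≠ 0 → ∃ N : ℕ,
      (∀ n, N ≤ n → ∀ x ∈ ball x₀ (‖x₀‖ / 2),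
        AnalyticAt ℂ (fun w => q ^ (-(n:ℤ)) / (w - q ^ (-(n:ℤ)))) x) ∧
      (∀ n, N ≤ n → ∀ x ∈ ball x₀ (‖x₀‖ / 2),
        ‖q ^ (-(n:ℤ)) / (x - q ^ (-(n:ℤ)))‖ ≤ (4 / ‖x₀‖) * ((‖q‖)⁻¹) ^ n) := by
    intro x₀ hx₀
    have hx₀pos : 0 < ‖x₀‖ := by
      simpa [norm_pos_iff] using hx₀
    obtain ⟨N, hN⟩ := aux_pow_small hq (show (0:ℝ) < ‖x₀‖ / 4 by positivity)
    have habs_neg : ∀ n : ℕ, ‖q ^ (-(n:ℤ))‖ = ((‖q‖)⁻¹) ^ n := by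
      intro n
      rw [habs, zpow_neg, zpow_natCast, inv_pow]
    have hball : ∀ x ∈ ball x₀ (‖x₀‖ / 2), ‖x₀‖ / 2 ≤ ‖x‖ := by
      intro x hx
      rw [mem_ball, dist_eq_norm] at hx
      have h1 : ‖x - x₀‖ < ‖x₀‖ / 2 := hx
      have h3 : ‖x₀‖ ≤ ‖x - x₀‖ + ‖x‖ := by
        calc ‖x₀‖ = ‖x - (x - x₀)‖ := by ring_nf
        _ ≤ ‖x‖ + ‖x - x₀‖ := by
              simpa using norm_sub_le x (x - x₀)
        _ = ‖x - x₀‖ + ‖x‖ := by ring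
      linarith
    have hden : ∀ n, N ≤ n → ∀ x ∈ ball x₀ (‖x₀‖ / 2),
        ‖x₀‖ / 4 ≤ ‖x - q ^ (-(n:ℤ))‖ := by
      intro n hn x hx
      have h1 : ‖q ^ (-(n:ℤ))‖ ≤ ‖x₀‖ / 4 := by
        rw [habs_neg]; exact hN n hn
      have h2 := hball x hx
      have h3 : ‖x‖ - ‖q ^ (-(n:ℤ))‖ ≤ ‖x - q ^ (-(n:ℤ))‖ := by
        have := abs_norm_sub_norm_le x (q ^ (-(n:ℤ)))
        have h4 := le_abs_self (‖x‖ - ‖q ^ (-(n:ℤ))‖)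
        linarith
      linarith
    refine ⟨N, ?_, ?_⟩
    · intro n hn x hx
      have hne : x - q ^ (-(n:ℤ)) ≠ 0 := by
        intro h
        have := hden n hn x hx
        rw [h] at this
        simp at this
        linarith
      exact analyticAt_const.div (analyticAt_id.sub analyticAt_const) hne
    · intro n hn x hx
      rw [norm_div]
      have h1 := hden n hn x hx
      have h2 : ‖q ^ (-(n:ℤ))‖ = ((‖q‖)⁻¹) ^ n := habs_neg n
      rw [h2]
      have hinvpos : (0:ℝ) < ((‖q‖)⁻¹) ^ n := by positivity
      calc ((‖q‖)⁻¹) ^ n / ‖x - q ^ (-(n:ℤ))‖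
          ≤ ((‖q‖)⁻¹) ^ n / (‖x₀‖ / 4) :=
            div_le_div_of_nonneg_left hinvpos.le (by positivity) h1
        _ = (4 / ‖x₀‖) * ((‖q‖)⁻¹) ^ n := by
            field_simp
  -- meromorphy and analyticity of A and B
  have hA_mero : ∀ x : ℂ, x ≠ 0 → MeromorphicAt A x ∧
      ((∀ k : ℤ, x ≠ q ^ k) → AnalyticAt ℂ A x) := by
    intro x hx
    have hx₀pos : 0 < ‖x‖ / 2 := by
      have : 0 < ‖x‖ := by simpa [norm_pos_iff] using hx
      positivity
    obtain ⟨N, hN1, hN2⟩ := hAball x hx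
    have := aux_tsum_mero (f := fun n w => w / (w - q ^ ((n:ℤ) + 1))) hx₀pos N
      (aux_geom_summable hq (4 * ‖x‖)) hN1 hN2
      (fun n _ => (MeromorphicAt.id x).div
        ((MeromorphicAt.id x).sub (MeromorphicAt.const _ x)))
    refine ⟨this.1, fun hk => this.2 (fun n _ => ?_)⟩
    exact analyticAt_id.div (analyticAt_id.sub analyticAt_const)
      (sub_ne_zero.mpr (hk ((n:ℤ)+1)))
  have hB_mero : ∀ x : ℂ, x ≠ 0 → MeromorphicAt B x ∧
      ((∀ k : ℤ, x ≠ q ^ k) → AnalyticAt ℂ B x) := by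
    intro x hx
    have hx₀pos : 0 < ‖x‖ / 2 := by
      have : 0 < ‖x‖ := by simpa [norm_pos_iff] using hx
      positivity
    obtain ⟨N, hN1, hN2⟩ := hBball x hx
    have := aux_tsum_mero (f := fun n w => q ^ (-(n:ℤ)) / (w - q ^ (-(n:ℤ)))) hx₀pos N
      (aux_geom_summable hq (4 / ‖x‖)) hN1 hN2
      (fun n _ => (MeromorphicAt.const _ x).div
        ((MeromorphicAt.id x).sub (MeromorphicAt.const _ x)))
    refine ⟨this.1, fun hk => this.2 (fun n _ => ?_)⟩
    exact analyticAt_const.div (analyticAt_id.sub analyticAt_const)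
      (sub_ne_zero.mpr (hk (-(n:ℤ))))
  -- summability
  have hA_sum : ∀ x : ℂ, x ≠ 0 → Summable (fun n : ℕ => x / (x - q ^ ((n:ℤ) + 1))) := by
    intro x hx
    have hx₀pos : 0 < ‖x‖ / 2 := by
      have : 0 < ‖x‖ := by simpa [norm_pos_iff] using hx
      positivity
    obtain ⟨N, hN1, hN2⟩ := hAball x hx
    exact aux_tsum_summable N (aux_geom_summable hq (4 * ‖x‖)) hN2
      (mem_ball_self hx₀pos)
  have hB_sum : ∀ x : ℂ, x ≠ 0 → Summable (fun n : ℕ => q ^ (-(n:ℤ)) / (x - q ^ (-(n:ℤ)))) := by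
    intro x hx
    have hx₀pos : 0 < ‖x‖ / 2 := by
      have : 0 < ‖x‖ := by simpa [norm_pos_iff] using hx
      positivity
    obtain ⟨N, hN1, hN2⟩ := hBball x hx
    exact aux_tsum_summable N (aux_geom_summable hq (4 / ‖x‖)) hN2
      (mem_ball_self hx₀pos)
  have hA_sum0 : ∀ x : ℂ, x ≠ 0 → Summable (fun n : ℕ => x / (x - q ^ (n:ℤ))) := by
    intro x hx
    have h1 : (fun n : ℕ => x / (x - q ^ ((n+1 : ℕ) : ℤ))) =
        (fun n : ℕ => x / (x - q ^ ((n:ℤ) + 1))) := by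
      funext n
      have hcast : ((n+1 : ℕ) : ℤ) = (n:ℤ) + 1 := by push_cast; ring
      rw [hcast]
    rw [← summable_nat_add_iff 1]
    rw [h1]
    exact hA_sum x hx
  -- functional equation
  refine ⟨fun x => A x + B x, ?_, ?_, ?_⟩
  · intro x hx
    have := ((hA_mero x hx).1).add ((hB_mero x hx).1)
    exact this.congr (Filter.Eventually.of_forall (fun w => rfl))
  · intro x hx hk
    exact ((hA_mero x hx).2 hk).add ((hB_mero x hx).2 hk)
  · intro x hx0 hx1
    have hqx0 : q * x ≠ 0 := mul_ne_zero hq0 hx0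
    have hxm1 : x - 1 ≠ 0 := sub_ne_zero.mpr hx1
    have e1 : A (q * x) = x / (x - 1) + A x := by
      have ht : ∀ n : ℕ, (q * x) / (q * x - q ^ ((n:ℤ) + 1)) = x / (x - q ^ (n:ℤ)) := by
        intro n
        have h : q * x - q ^ ((n:ℤ)+1) = q * (x - q ^ (n:ℤ)) := by
          rw [zpow_add_one₀ hq0]
          ring
        rw [h, mul_div_mul_left _ _ hq0]
      have h2 : A (q * x) = ∑' n : ℕ, x / (x - q ^ (n:ℤ)) := by
        rw [hA]
        exact tsum_congr ht
      rw [h2, Summable.tsum_eq_zero_add (hA_sum0 x hx0)]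
      have hz : x / (x - q ^ ((0:ℕ):ℤ)) = x / (x - 1) := by norm_num
      have hs : (∑' n : ℕ, x / (x - q ^ (((n+1:ℕ)):ℤ))) = A x := by
        rw [hA]
        refine tsum_congr (fun n => ?_)
        have hcast : (((n+1:ℕ)):ℤ) = (n:ℤ) + 1 := by push_cast; ring
        rw [hcast]
      rw [hz, hs]
    have e2 : B (q * x) = B x - 1 / (x - 1) := by
      have ht : ∀ n : ℕ, q ^ (-(n:ℤ)) / (q * x - q ^ (-(n:ℤ)))
          = q ^ (-(n:ℤ) - 1) / (x - q ^ (-(n:ℤ) - 1)) := by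
        intro n
        have h0 : q ^ (-(n:ℤ)) = q ^ (-(n:ℤ) - 1) * q := by
          rw [← zpow_add_one₀ hq0]
          norm_num
        have h : q * x - q ^ (-(n:ℤ)) = q * (x - q ^ (-(n:ℤ) - 1)) := by
          rw [h0]
          ring
        rw [h, h0, mul_comm (q ^ (-(n:ℤ) - 1)) q, mul_div_mul_left _ _ hq0]
      have h2 : B (q * x) = ∑' n : ℕ, q ^ (-((n+1:ℕ):ℤ)) / (x - q ^ (-((n+1:ℕ):ℤ))) := by
        rw [hB]
        refine tsum_congr (fun n => ?_)
        rw [ht n]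
        have hcast : -((n+1:ℕ):ℤ) = -(n:ℤ) - 1 := by push_cast; ring
        rw [hcast]
      have h3 := Summable.tsum_eq_zero_add (hB_sum x hx0)
      have h4 : q ^ (-((0:ℕ):ℤ)) / (x - q ^ (-((0:ℕ):ℤ))) = 1 / (x - 1) := by
        norm_num
      rw [h2]
      rw [h4] at h3
      have := eq_sub_of_add_eq' h3.symm
      rw [← this]
    show A (q * x) + B (q * x) = A x + B x + 1
    rw [e1, e2]
    have h5 : x / (x - 1) - 1 / (x - 1) = 1 := by
      rw [div_sub_div_same, div_self hxm1]
    linear_combination h5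

set_option maxHeartbeats 1000000 in
lemma aux_split (Rt : ℂ → ℂ) (ρ m : ℝ) (hρ : 0 < ρ) (hm1 : ρ < m)
    (hmero : ∀ z : ℂ, z ≠ 0 → MeromorphicAt Rt z)
    (han : ∀ z : ℂ, ρ < ‖z‖ → ‖z‖ < m → AnalyticAt ℂ Rt z) :
    ∃ (Rm : ℂ → ℂ) (c0 : ℂ) (s2 A B : ℝ),
      ρ < s2 ∧ s2 < m ∧ 0 ≤ A ∧ 0 ≤ B ∧
      (∀ x : ℂ, x ≠ 0 → MeromorphicAt Rm x) ∧
      (∀ x : ℂ, x ≠ 0 → (ρ < ‖x‖ ∨ AnalyticAt ℂ Rt x) → AnalyticAt ℂ Rm x) ∧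
      (∀ x : ℂ, (‖x‖ < m ∨ (x ≠ 0 ∧ AnalyticAt ℂ Rt x)) →
        AnalyticAt ℂ (fun w => Rt w - Rm w) x) ∧
      (∀ x : ℂ, 2 * m ≤ ‖x‖ → ‖Rm x‖ ≤ A / ‖x‖) ∧
      (∀ x : ℂ, ‖x‖ ≤ s2 → ‖(Rt x - Rm x) - c0‖ ≤ B * ‖x‖) := by
  have habs : ∀ z : ℂ, ‖z‖ = ‖z‖ := fun z => rfl
  obtain ⟨r₁, s, r₂, h0r₁, hρr₁, hr₁s, hsr₂, hr₂m⟩ :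
      ∃ r₁ s r₂ : ℝ, 0 < r₁ ∧ ρ < r₁ ∧ r₁ < s ∧ s < r₂ ∧ r₂ < m :=
    ⟨ρ + (m-ρ)/4, ρ + (m-ρ)/2, ρ + 3*(m-ρ)/4, by linarith, by linarith, by linarith,
      by linarith, by linarith⟩
  have hr₁r₂ : r₁ < r₂ := lt_trans hr₁s hsr₂
  have h0r₂ : 0 < r₂ := lt_trans h0r₁ hr₁r₂
  have hsm : s < m := lt_trans hsr₂ hr₂m
  have hρs : ρ < s := lt_trans hρr₁ hr₁s
  have h0m : 0 < m := lt_trans hρ hm1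
  have hpi : (2 * ↑π * Complex.I : ℂ) ≠ 0 :=
    mul_ne_zero (mul_ne_zero two_ne_zero
      (Complex.ofReal_ne_zero.mpr Real.pi_ne_zero)) Complex.I_ne_zero
  have htri1 : ∀ x w : ℂ, ‖w‖ ≤ ‖x‖ + ‖w - x‖ := by
    intro x w
    calc ‖w‖ = ‖x + (w - x)‖ := by ring_nf
    _ ≤ ‖x‖ + ‖w - x‖ := norm_add_le _ _
  have htri2 : ∀ x w : ℂ, ‖x‖ - ‖w - x‖ ≤ ‖w‖ := by
    intro x w
    have h1 := htri1 w x
    have h2 : ‖x - w‖ = ‖w - x‖ := norm_sub_rev _ _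
    linarith
  have hcont : ∀ r : ℝ, ρ < r → r < m → ContinuousOn Rt (sphere (0:ℂ) r) := by
    intro r h1 h2 z hz
    rw [mem_sphere_zero_iff_norm] at hz
    have hza : ‖z‖ = r := by rw [habs]; exact hz
    exact ((han z (by rw [hza]; exact h1) (by rw [hza]; exact h2)).continuousAt).continuousWithinAt
  set C1 : ℂ → ℂ := fun w => (2 * ↑π * Complex.I)⁻¹ * ∮ z in C(0, r₁), Rt z / (z - w) with hC1def
  set C2 : ℂ → ℂ := fun w => (2 * ↑π * Complex.I)⁻¹ * ∮ z in C(0, r₂), Rt z / (z - w) with hC2def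
  have hC1_an : ∀ x : ℂ, ‖x‖ ≠ r₁ → AnalyticAt ℂ C1 x := fun x hx =>
    analyticAt_const.mul (aux_cauchy_analyticAt h0r₁ (hcont r₁ hρr₁ (lt_trans hr₁r₂ hr₂m)) hx)
  have hC2_an : ∀ x : ℂ, ‖x‖ ≠ r₂ → AnalyticAt ℂ C2 x := fun x hx =>
    analyticAt_const.mul (aux_cauchy_analyticAt h0r₂ (hcont r₂ (lt_trans hρr₁ hr₁r₂) hr₂m) hx)
  have hFor : ∀ x : ℂ, r₁ < ‖x‖ → ‖x‖ < r₂ → Rt x = C2 x - C1 x := by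
    intro x h1 h2
    have hann := aux_annulus_cauchy (f := Rt) h0r₁ hr₁r₂ h1 h2
      (fun z hz1 hz2 => han z (lt_of_lt_of_le hρr₁ hz1) (lt_of_le_of_lt hz2 hr₂m))
    have hdiff : C2 x - C1 x = (2 * ↑π * Complex.I)⁻¹ *
        ((∮ z in C(0, r₂), Rt z / (z - x)) - (∮ z in C(0, r₁), Rt z / (z - x))) := by
      simp only [hC1def, hC2def]
      ring
    rw [hdiff, hann, inv_mul_cancel_left₀ hpi]
  set Rm : ℂ → ℂ := fun x => if ‖x‖ ≤ s then Rt x - C2 x else -C1 x with hRmdef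
  have hifp : ∀ x : ℂ, ‖x‖ ≤ s → Rm x = Rt x - C2 x := by
    intro x hx
    simp only [hRmdef]
    rw [if_pos hx]
  have hifn : ∀ x : ℂ, ¬(‖x‖ ≤ s) → Rm x = -C1 x := by
    intro x hx
    simp only [hRmdef]
    rw [if_neg hx]
  have hout : ∀ x : ℂ, s ≤ ‖x‖ → ∀ᶠ w in 𝓝 x, Rm w = -C1 w := by
    intro x hx
    filter_upwards [Metric.ball_mem_nhds x (show (0:ℝ) < s - r₁ by linarith)] with w hw
    rw [mem_ball, dist_eq_norm] at hw
    have hwx : ‖w - x‖ < s - r₁ := hw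
    have hw1 : r₁ < ‖w‖ := by
      have := htri2 x w
      linarith
    rcases le_or_gt (‖w‖) s with h | h
    · rw [hifp w h]
      have hw2 : ‖w‖ < r₂ := lt_of_le_of_lt h hsr₂
      linear_combination hFor w hw1 hw2
    · rw [hifn w (not_le.mpr h)]
  have hin : ∀ x : ℂ, ‖x‖ < s → ∀ᶠ w in 𝓝 x, Rm w = Rt w - C2 w := by
    intro x hx
    filter_upwards [Metric.ball_mem_nhds x (show (0:ℝ) < s - ‖x‖ by linarith)] with w hw
    rw [mem_ball, dist_eq_norm] at hw
    have hwx : ‖w - x‖ < s - ‖x‖ := hw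
    have h1 : ‖w‖ ≤ s := by
      have := htri1 x w
      linarith
    exact hifp w h1
  have hpin : ∀ x : ℂ, ‖x‖ ≤ s → ∀ᶠ w in 𝓝 x, Rt w - Rm w = C2 w := by
    intro x hx
    filter_upwards [Metric.ball_mem_nhds x (show (0:ℝ) < r₂ - s by linarith)] with w hw
    rw [mem_ball, dist_eq_norm] at hw
    have hwx : ‖w - x‖ < r₂ - s := hw
    rcases le_or_gt (‖w‖) s with h | h
    · rw [hifp w h]; ring
    · rw [hifn w (not_le.mpr h)]
      have hw1 : r₁ < ‖w‖ := lt_trans hr₁s h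
      have hw2 : ‖w‖ < r₂ := by
        have := htri1 x w
        linarith
      linear_combination hFor w hw1 hw2
  have hpout : ∀ x : ℂ, s < ‖x‖ → ∀ᶠ w in 𝓝 x, Rt w - Rm w = Rt w + C1 w := by
    intro x hx
    filter_upwards [Metric.ball_mem_nhds x (show (0:ℝ) < ‖x‖ - s by linarith)] with w hw
    rw [mem_ball, dist_eq_norm] at hw
    have hwx : ‖w - x‖ < ‖x‖ - s := hw
    have h1 : s < ‖w‖ := by
      have := htri2 x w
      linarith
    rw [hifn w (not_le.mpr h1)]
    ring
  obtain ⟨M₁, hM₁⟩ := (isCompact_sphere (0:ℂ) r₁).exists_bound_of_continuousOn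
    (hcont r₁ hρr₁ (lt_trans hr₁r₂ hr₂m))
  obtain ⟨M₂, hM₂⟩ := (isCompact_sphere (0:ℂ) r₂).exists_bound_of_continuousOn
    (hcont r₂ (lt_trans hρr₁ hr₁r₂) hr₂m)
  have hmem₁ : ((r₁:ℝ):ℂ) ∈ sphere (0:ℂ) r₁ := by
    rw [mem_sphere_zero_iff_norm, ← habs, Complex.norm_real]
    exact abs_of_pos h0r₁
  have hmem₂ : ((r₂:ℝ):ℂ) ∈ sphere (0:ℂ) r₂ := by
    rw [mem_sphere_zero_iff_norm, ← habs, Complex.norm_real]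
    exact abs_of_pos h0r₂
  have hM₁0 : 0 ≤ M₁ := le_trans (norm_nonneg _) (hM₁ _ hmem₁)
  have hM₂0 : 0 ≤ M₂ := le_trans (norm_nonneg _) (hM₂ _ hmem₂)
  have hnorm2pi : ‖(2 * ↑π * Complex.I : ℂ)‖ = 2 * π := by
    rw [← habs]
    rw [norm_mul, norm_mul, Complex.norm_I, Complex.norm_two, Complex.norm_real,
      Real.norm_of_nonneg Real.pi_pos.le]
    ring
  refine ⟨Rm, C2 0, s, 2*r₁*M₁, M₂/(r₂ - s), hρs, hsm, by positivity,
    div_nonneg hM₂0 (by linarith), ?_, ?_, ?_, ?_, ?_⟩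
  · -- meromorphy of Rm
    intro x hx
    rcases lt_or_ge (‖x‖) s with h | h
    · have h1 : MeromorphicAt (fun w => Rt w - C2 w) x :=
        (hmero x hx).sub (hC2_an x (ne_of_lt (lt_trans h hsr₂))).meromorphicAt
      exact h1.congr (((hin x h).mono (fun w hw => hw.symm)).filter_mono nhdsWithin_le_nhds)
    · exact (((hC1_an x (ne_of_gt (lt_of_lt_of_le hr₁s h))).neg).congr
        ((hout x h).mono (fun w hw => hw.symm))).meromorphicAt
  · -- analyticity of Rm
    intro x hx hcase
    rcases lt_or_ge (‖x‖) s with h | h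
    · have hRt_an : AnalyticAt ℂ Rt x := by
        rcases hcase with hc | hc
        · exact han x hc (lt_trans h hsm)
        · exact hc
      exact (hRt_an.sub (hC2_an x (ne_of_lt (lt_trans h hsr₂)))).congr
        ((hin x h).mono (fun w hw => hw.symm))
    · exact ((hC1_an x (ne_of_gt (lt_of_lt_of_le hr₁s h))).neg).congr
        ((hout x h).mono (fun w hw => hw.symm))
  · -- analyticity of Rt - Rm
    intro x hcase
    rcases le_or_gt (‖x‖) s with h | h
    · exact (hC2_an x (ne_of_lt (lt_of_le_of_lt h hsr₂))).congr
        ((hpin x h).mono (fun w hw => hw.symm))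
    · have hRt_an : AnalyticAt ℂ Rt x := by
        rcases hcase with hc | hc
        · exact han x (lt_trans hρs h) hc
        · exact hc.2
      exact (hRt_an.add (hC1_an x (ne_of_gt (lt_trans hr₁s h)))).congr
        ((hpout x h).mono (fun w hw => hw.symm))
  · -- bound on Rm for large |x|
    intro x hx
    have hx0 : 0 < ‖x‖ := by linarith
    have hxs : ¬ (‖x‖ ≤ s) := by
      push_neg
      linarith
    rw [hifn x hxs, norm_neg]
    have hxr₁ : 0 < ‖x‖ - r₁ := by linarith
    have hint : ‖∮ z in C(0, r₁), Rt z / (z - x)‖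
        ≤ 2 * π * r₁ * (M₁ / (‖x‖ - r₁)) := by
      refine circleIntegral.norm_integral_le_of_norm_le_const h0r₁.le ?_
      intro z hz
      have hza : ‖z‖ = r₁ := by
        rw [mem_sphere_zero_iff_norm] at hz
        rw [habs]; exact hz
      have hzx : ‖x‖ - r₁ ≤ ‖z - x‖ := by
        have := htri2 x z
        linarith
      rw [norm_div]
      exact div_le_div₀ hM₁0 (hM₁ z hz) hxr₁ hzx
    have hnormC1 : ‖C1 x‖ = (2*π)⁻¹ * ‖∮ z in C(0, r₁), Rt z / (z - x)‖ := by
      simp only [hC1def]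
      rw [norm_mul, norm_inv, hnorm2pi]
    rw [hnormC1]
    calc (2*π)⁻¹ * ‖∮ z in C(0, r₁), Rt z / (z - x)‖
        ≤ (2*π)⁻¹ * (2 * π * r₁ * (M₁ / (‖x‖ - r₁))) :=
          mul_le_mul_of_nonneg_left hint (by positivity)
      _ = r₁ * M₁ / (‖x‖ - r₁) := by
          field_simp
      _ ≤ 2 * r₁ * M₁ / ‖x‖ := by
          rw [div_le_div_iff₀ hxr₁ hx0]
          have hkey : 0 ≤ r₁ * M₁ * (‖x‖ - 2*r₁) :=
            mul_nonneg (mul_nonneg h0r₁.le hM₁0) (by linarith)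
          nlinarith [hkey]
  · -- bound on (Rt - Rm) - C2 0 for small |x|
    intro x hx
    have hval : Rt x - Rm x = C2 x := (hpin x hx).self_of_nhds
    rw [hval]
    have hxr₂ : ‖x‖ < r₂ := lt_of_le_of_lt hx hsr₂
    have hzx_ne : ∀ z : ℂ, z ∈ sphere (0:ℂ) r₂ → z - x ≠ 0 := by
      intro z hz h
      have hza : ‖z‖ = r₂ := by
        rw [mem_sphere_zero_iff_norm] at hz
        rw [habs]; exact hz
      rw [sub_eq_zero] at h
      rw [h] at hza
      linarith
    have hz0_ne : ∀ z : ℂ, z ∈ sphere (0:ℂ) r₂ → z ≠ 0 := by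
      intro z hz h
      have hza : ‖z‖ = r₂ := by
        rw [mem_sphere_zero_iff_norm] at hz
        rw [habs]; exact hz
      rw [h] at hza
      simp at hza
      linarith
    have hint_x : CircleIntegrable (fun z => Rt z / (z - x)) 0 r₂ := by
      refine ContinuousOn.circleIntegrable h0r₂.le ?_
      intro z hz
      exact ((hcont r₂ (lt_trans hρr₁ hr₁r₂) hr₂m z hz).div
        ((continuousAt_id.sub continuousAt_const).continuousWithinAt) (hzx_ne z hz))
    have hint_0 : CircleIntegrable (fun z => Rt z / (z - 0)) 0 r₂ := by
      refine ContinuousOn.circleIntegrable h0r₂.le ?_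
      intro z hz
      refine ((hcont r₂ (lt_trans hρr₁ hr₁r₂) hr₂m z hz).div
        ((continuousAt_id.sub continuousAt_const).continuousWithinAt) ?_)
      rw [sub_zero]
      exact hz0_ne z hz
    have hC2diff : C2 x - C2 0 = (2 * ↑π * Complex.I)⁻¹ *
        ∮ z in C(0, r₂), (Rt z / (z - x) - Rt z / (z - 0)) := by
      simp only [hC2def]
      rw [← mul_sub, ← circleIntegral.integral_sub hint_x hint_0]
    have hint : ‖∮ z in C(0, r₂), (Rt z / (z - x) - Rt z / (z - 0))‖
        ≤ 2 * π * r₂ * (M₂ * ‖x‖ / ((r₂ - s) * r₂)) := by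
      refine circleIntegral.norm_integral_le_of_norm_le_const h0r₂.le ?_
      intro z hz
      have hza : ‖z‖ = r₂ := by
        rw [mem_sphere_zero_iff_norm] at hz
        rw [habs]; exact hz
      have h1 : Rt z / (z - x) - Rt z / (z - 0) = Rt z * x / ((z - x) * z) := by
        rw [sub_zero, div_sub_div _ _ (hzx_ne z hz) (hz0_ne z hz)]
        congr 1
        ring
      rw [h1, norm_div, norm_mul, norm_mul]
      have h2 : r₂ - s ≤ ‖z - x‖ := by
        have := htri1 x z
        linarith
      have h3 : (r₂ - s) * r₂ ≤ ‖z - x‖ * ‖z‖ := by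
        rw [← habs, ← habs, hza]
        exact mul_le_mul_of_nonneg_right h2 h0r₂.le
      have h4 : ‖Rt z‖ * ‖x‖ ≤ M₂ * ‖x‖ := by
        rw [← habs]
        exact mul_le_mul_of_nonneg_right (hM₂ z hz) (norm_nonneg x)
      refine div_le_div₀ (by positivity) h4 (by nlinarith) h3
    rw [hC2diff, norm_mul, norm_inv, hnorm2pi]
    calc (2*π)⁻¹ * ‖∮ z in C(0, r₂), (Rt z / (z - x) - Rt z / (z - 0))‖
        ≤ (2*π)⁻¹ * (2 * π * r₂ * (M₂ * ‖x‖ / ((r₂ - s) * r₂))) :=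
          mul_le_mul_of_nonneg_left hint (by positivity)
      _ = M₂ / (r₂ - s) * ‖x‖ := by
          have hne1 : r₂ - s ≠ 0 := by linarith
          field_simp

lemma aux_abs_ball {x₀ x : ℂ} (hx : x ∈ ball x₀ (‖x₀‖ / 2)) :
    ‖x₀‖ / 2 ≤ ‖x‖ ∧ ‖x‖ ≤ 2 * ‖x₀‖ := by
  rw [mem_ball, dist_eq_norm] at hx
  have hwx : ‖x - x₀‖ < ‖x₀‖ / 2 := hx
  have h1 : ‖x‖ ≤ ‖x₀‖ + ‖x - x₀‖ := by
    calc ‖x‖ = ‖x₀ + (x - x₀)‖ := by ring_nf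
    _ ≤ _ := norm_add_le _ _
  have h2 : ‖x₀‖ ≤ ‖x‖ + ‖x - x₀‖ := by
    have h3 : ‖x₀‖ ≤ ‖x‖ + ‖x₀ - x‖ := by
      calc ‖x₀‖ = ‖x + (x₀ - x)‖ := by ring_nf
      _ ≤ _ := norm_add_le _ _
    have h4 : ‖x₀ - x‖ = ‖x - x₀‖ := norm_sub_rev _ _
    linarith
  constructor <;> linarith

set_option maxHeartbeats 1600000 in
lemma aux_sum_back (q : ℂ) (hq : 1 < ‖q‖) (f : ℂ → ℂ) (T A : ℝ)
    (hT : 0 < T) (hA : 0 ≤ A)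
    (hmero : ∀ x : ℂ, x ≠ 0 → MeromorphicAt f x)
    (han : ∀ x : ℂ, T ≤ ‖x‖ → AnalyticAt ℂ f x)
    (hbd : ∀ x : ℂ, T ≤ ‖x‖ → ‖f x‖ ≤ A / ‖x‖) :
    ∃ g : ℂ → ℂ,
      (∀ x : ℂ, x ≠ 0 → MeromorphicAt g x) ∧
      (∀ x : ℂ, x ≠ 0 → (∀ n : ℕ, AnalyticAt ℂ f (q ^ n * x)) → AnalyticAt ℂ g x) ∧
      (∀ x : ℂ, x ≠ 0 → g (q * x) = g x - f x) := by
  have hq0 : q ≠ 0 := by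
    intro hc
    rw [hc] at hq
    simp at hq
    linarith
  have hqpos : (0:ℝ) < ‖q‖ := lt_trans zero_lt_one hq
  have habs : ∀ (n : ℕ) (x : ℂ), ‖q ^ n * x‖
      = ‖q‖ ^ n * ‖x‖ := by
    intro n x
    rw [norm_mul, norm_pow]
  have hball : ∀ x₀ : ℂ, x₀ ≠ 0 → ∃ N : ℕ,
      (∀ n, N ≤ n → ∀ x ∈ ball x₀ (‖x₀‖/2),
        AnalyticAt ℂ (fun w => f (q ^ n * w)) x) ∧
      (∀ n, N ≤ n → ∀ x ∈ ball x₀ (‖x₀‖/2),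
        ‖f (q ^ n * x)‖ ≤ (2*A/‖x₀‖) * ((‖q‖)⁻¹)^n) := by
    intro x₀ hx₀
    have hx₀pos : 0 < ‖x₀‖ := by simpa [norm_pos_iff] using hx₀
    obtain ⟨N, hN⟩ := aux_pow_large hq (2 * T / ‖x₀‖)
    have hkey : ∀ n, N ≤ n → ∀ x ∈ ball x₀ (‖x₀‖/2),
        T ≤ ‖q ^ n * x‖ := by
      intro n hn x hx
      obtain ⟨h1, h2⟩ := aux_abs_ball hx
      rw [habs]
      have h3 := hN n hn
      have h5 : 2 * T / ‖x₀‖ * (‖x₀‖ / 2) ≤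
          ‖q‖ ^ n * ‖x‖ :=
        mul_le_mul h3 h1 (by positivity) (by positivity)
      have h6 : 2 * T / ‖x₀‖ * (‖x₀‖ / 2) = T := by
        field_simp
      linarith
    refine ⟨N, ?_, ?_⟩
    · intro n hn x hx
      have h1 := han _ (hkey n hn x hx)
      have := h1.comp (f := fun w : ℂ => q ^ n * w) (x := x)
        (analyticAt_const.mul analyticAt_id)
      exact this
    · intro n hn x hx
      obtain ⟨h1, h2⟩ := aux_abs_ball hx
      have h3 := hbd _ (hkey n hn x hx)
      refine h3.trans ?_
      rw [habs]
      have h4 : (0:ℝ) < ‖q‖ ^ n := by positivity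
      have h5 : ‖x₀‖ / 2 * ‖q‖ ^ n ≤ ‖q‖ ^ n * ‖x‖ := by
        rw [mul_comm]
        exact mul_le_mul_of_nonneg_left h1 h4.le
      have h6 : 0 < ‖x₀‖ / 2 * ‖q‖ ^ n := by positivity
      calc A / (‖q‖ ^ n * ‖x‖)
          ≤ A / (‖x₀‖ / 2 * ‖q‖ ^ n) :=
            div_le_div_of_nonneg_left hA h6 h5
        _ = (2*A/‖x₀‖) * ((‖q‖)⁻¹)^n := by
            rw [inv_pow]
            field_simp
  refine ⟨fun x => ∑' n : ℕ, f (q ^ n * x), ?_, ?_, ?_⟩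
  · intro x hx
    have hx₀pos : 0 < ‖x‖ / 2 := by
      have : 0 < ‖x‖ := by simpa [norm_pos_iff] using hx
      positivity
    obtain ⟨N, h1, h2⟩ := hball x hx
    exact (aux_tsum_mero (f := fun n w => f (q ^ n * w)) hx₀pos N
      (aux_geom_summable hq (2*A/‖x‖)) h1 h2
      (fun n _ => aux_comp_const_mul (pow_ne_zero n hq0)
        (hmero _ (mul_ne_zero (pow_ne_zero n hq0) hx)))).1
  · intro x hx hterm
    have hx₀pos : 0 < ‖x‖ / 2 := by
      have : 0 < ‖x‖ := by simpa [norm_pos_iff] using hx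
      positivity
    obtain ⟨N, h1, h2⟩ := hball x hx
    refine (aux_tsum_mero (f := fun n w => f (q ^ n * w)) hx₀pos N
      (aux_geom_summable hq (2*A/‖x‖)) h1 h2
      (fun n _ => aux_comp_const_mul (pow_ne_zero n hq0)
        (hmero _ (mul_ne_zero (pow_ne_zero n hq0) hx)))).2 (fun n _ => ?_)
    have := (hterm n).comp (f := fun w : ℂ => q ^ n * w) (x := x)
      (analyticAt_const.mul analyticAt_id)
    exact this
  · intro x hx
    have hsum : ∀ z : ℂ, z ≠ 0 → Summable (fun n : ℕ => f (q ^ n * z)) := by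
      intro z hz
      have hx₀pos : 0 < ‖z‖ / 2 := by
        have : 0 < ‖z‖ := by simpa [norm_pos_iff] using hz
        positivity
      obtain ⟨N, h1, h2⟩ := hball z hz
      exact aux_tsum_summable N (aux_geom_summable hq (2*A/‖z‖)) h2
        (mem_ball_self hx₀pos)
    show (∑' n : ℕ, f (q ^ n * (q * x))) = (∑' n : ℕ, f (q ^ n * x)) - f x
    have h1 : (∑' n : ℕ, f (q ^ n * (q * x))) = ∑' n : ℕ, f (q ^ (n+1) * x) := by
      refine tsum_congr (fun n => ?_)
      congr 1
      rw [pow_succ]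
      ring
    have h2 := Summable.tsum_eq_zero_add (hsum x hx)
    have h3 : f (q ^ 0 * x) = f x := by
      congr 1
      rw [pow_zero, one_mul]
    rw [h1]
    rw [h3] at h2
    linear_combination -h2

set_option maxHeartbeats 1600000 in
lemma aux_sum_fwd (q : ℂ) (hq : 1 < ‖q‖) (h : ℂ → ℂ) (s2 B : ℝ)
    (hs2 : 0 < s2) (hB : 0 ≤ B)
    (hmero : ∀ x : ℂ, x ≠ 0 → MeromorphicAt h x)
    (han : ∀ x : ℂ, ‖x‖ ≤ s2 → AnalyticAt ℂ h x)
    (hbd : ∀ x : ℂ, ‖x‖ ≤ s2 → ‖h x‖ ≤ B * ‖x‖) :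
    ∃ g : ℂ → ℂ,
      (∀ x : ℂ, x ≠ 0 → MeromorphicAt g x) ∧
      (∀ x : ℂ, x ≠ 0 → (∀ n : ℕ, AnalyticAt ℂ h ((q ^ (n+1))⁻¹ * x)) → AnalyticAt ℂ g x) ∧
      (∀ x : ℂ, x ≠ 0 → g (q * x) = g x + h x) := by
  have hq0 : q ≠ 0 := by
    intro hc
    rw [hc] at hq
    simp at hq
    linarith
  have hqpos : (0:ℝ) < ‖q‖ := lt_trans zero_lt_one hq
  have habs : ∀ (n : ℕ) (x : ℂ), ‖(q ^ n)⁻¹ * x‖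
      = ((‖q‖)⁻¹) ^ n * ‖x‖ := by
    intro n x
    rw [norm_mul, norm_inv, norm_pow, inv_pow]
  have hball : ∀ x₀ : ℂ, x₀ ≠ 0 → ∃ N : ℕ,
      (∀ n, N ≤ n → ∀ x ∈ ball x₀ (‖x₀‖/2),
        AnalyticAt ℂ (fun w => h ((q ^ n)⁻¹ * w)) x) ∧
      (∀ n, N ≤ n → ∀ x ∈ ball x₀ (‖x₀‖/2),
        ‖h ((q ^ n)⁻¹ * x)‖ ≤ (2*B*‖x₀‖) * ((‖q‖)⁻¹)^n) := by
    intro x₀ hx₀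
    have hx₀pos : 0 < ‖x₀‖ := by simpa [norm_pos_iff] using hx₀
    obtain ⟨N, hN⟩ := aux_pow_small hq (show (0:ℝ) < s2 / (2 * ‖x₀‖) by positivity)
    have hkey : ∀ n, N ≤ n → ∀ x ∈ ball x₀ (‖x₀‖/2),
        ‖(q ^ n)⁻¹ * x‖ ≤ s2 := by
      intro n hn x hx
      obtain ⟨h1, h2⟩ := aux_abs_ball hx
      rw [habs]
      have h3 := hN n hn
      have h4 : ((‖q‖)⁻¹ : ℝ) ^ n * ‖x‖
          ≤ (s2 / (2 * ‖x₀‖)) * (2 * ‖x₀‖) := by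
        apply mul_le_mul h3 h2 (by positivity) (by positivity)
      calc ((‖q‖)⁻¹ : ℝ) ^ n * ‖x‖
          ≤ (s2 / (2 * ‖x₀‖)) * (2 * ‖x₀‖) := h4
        _ = s2 := by field_simp
    refine ⟨N, ?_, ?_⟩
    · intro n hn x hx
      have h1 := han _ (hkey n hn x hx)
      have := h1.comp (f := fun w : ℂ => (q ^ n)⁻¹ * w) (x := x)
        (analyticAt_const.mul analyticAt_id)
      exact this
    · intro n hn x hx
      obtain ⟨h1, h2⟩ := aux_abs_ball hx
      have h3 := hbd _ (hkey n hn x hx)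
      refine h3.trans ?_
      rw [habs]
      have h5 : ‖x‖ ≤ 2 * ‖x₀‖ := h2
      have h6 : (0:ℝ) ≤ ((‖q‖)⁻¹) ^ n := by positivity
      calc B * (((‖q‖)⁻¹) ^ n * ‖x‖)
          ≤ B * (((‖q‖)⁻¹) ^ n * (2 * ‖x₀‖)) := by
            apply mul_le_mul_of_nonneg_left (mul_le_mul_of_nonneg_left h5 h6) hB
        _ = (2*B*‖x₀‖) * ((‖q‖)⁻¹)^n := by ring
  have hsum : ∀ z : ℂ, z ≠ 0 → Summable (fun n : ℕ => h ((q ^ n)⁻¹ * z)) := by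
    intro z hz
    have hx₀pos : 0 < ‖z‖ / 2 := by
      have : 0 < ‖z‖ := by simpa [norm_pos_iff] using hz
      positivity
    obtain ⟨N, h1, h2⟩ := hball z hz
    exact aux_tsum_summable N (aux_geom_summable hq (2*B*‖z‖)) h2
      (mem_ball_self hx₀pos)
  refine ⟨fun x => ∑' n : ℕ, h ((q ^ (n+1))⁻¹ * x), ?_, ?_, ?_⟩
  · intro x hx
    have hx₀pos : 0 < ‖x‖ / 2 := by
      have : 0 < ‖x‖ := by simpa [norm_pos_iff] using hx
      positivity
    obtain ⟨N, h1, h2⟩ := hball x hx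
    have hu : Summable (fun n : ℕ => (2*B*‖x‖) * ((‖q‖)⁻¹)^(n+1)) := by
      have := (aux_geom_summable hq (2*B*‖x‖))
      exact (summable_nat_add_iff 1).mpr this
    exact (aux_tsum_mero (f := fun n w => h ((q ^ (n+1))⁻¹ * w)) hx₀pos N
      hu (fun n hn => h1 (n+1) (by omega)) (fun n hn => h2 (n+1) (by omega))
      (fun n _ => aux_comp_const_mul (inv_ne_zero (pow_ne_zero (n+1) hq0))
        (hmero _ (mul_ne_zero (inv_ne_zero (pow_ne_zero (n+1) hq0)) hx)))).1
  · intro x hx hterm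
    have hx₀pos : 0 < ‖x‖ / 2 := by
      have : 0 < ‖x‖ := by simpa [norm_pos_iff] using hx
      positivity
    obtain ⟨N, h1, h2⟩ := hball x hx
    have hu : Summable (fun n : ℕ => (2*B*‖x‖) * ((‖q‖)⁻¹)^(n+1)) := by
      have := (aux_geom_summable hq (2*B*‖x‖))
      exact (summable_nat_add_iff 1).mpr this
    refine (aux_tsum_mero (f := fun n w => h ((q ^ (n+1))⁻¹ * w)) hx₀pos N
      hu (fun n hn => h1 (n+1) (by omega)) (fun n hn => h2 (n+1) (by omega))
      (fun n _ => aux_comp_const_mul (inv_ne_zero (pow_ne_zero (n+1) hq0))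
        (hmero _ (mul_ne_zero (inv_ne_zero (pow_ne_zero (n+1) hq0)) hx)))).2 (fun n _ => ?_)
    have := (hterm n).comp (f := fun w : ℂ => (q ^ (n+1))⁻¹ * w) (x := x)
      (analyticAt_const.mul analyticAt_id)
    exact this
  · intro x hx
    show (∑' n : ℕ, h ((q ^ (n+1))⁻¹ * (q * x))) = (∑' n : ℕ, h ((q ^ (n+1))⁻¹ * x)) + h x
    have h1 : (∑' n : ℕ, h ((q ^ (n+1))⁻¹ * (q * x))) = ∑' n : ℕ, h ((q ^ n)⁻¹ * x) := by
      refine tsum_congr (fun n => ?_)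
      congr 1
      rw [pow_succ, mul_inv]
      field_simp
    have h2 := Summable.tsum_eq_zero_add (hsum x hx)
    have h3 : h ((q ^ 0)⁻¹ * x) = h x := by
      congr 1
      rw [pow_zero, inv_one, one_mul]
    rw [h1, h2, h3]
    ring

set_option maxHeartbeats 1600000 in
/-- If `R` is meromorphic on `ℂ ∖ {0}` with pole set `P` and
`ρ > 0`, then the equation `y(qx) = y(x) + R(x)` has a solution meromorphic on
`ℂ ∖ {0}`, analytic outside the set
`S = q^ℤ ∪ {a qⁿ : a ∈ P, |a| > ρ, n ≥ 1} ∪ {a q⁻ⁿ : a ∈ P, |a| ≤ ρ, n ≥ 0}`. -/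
theorem meromorphic_solution_inhomogeneous_shift (q : ℂ) (hq : 1 < ‖q‖)
    (R : ℂ → ℂ) (hR : MeromorphicOn R {x : ℂ | x ≠ 0}) (ρ : ℝ) (hρ : 0 < ρ)
    (S : Set ℂ)
    (hS : S = {z : ℂ | (∃ n : ℤ, z = q ^ n) ∨
      (∃ a : ℂ, ∃ ha : a ≠ 0, meromorphicOrderAt R a < 0 ∧ ρ < ‖a‖ ∧
        ∃ n : ℕ, 1 ≤ n ∧ z = a * q ^ (n : ℤ)) ∨
      (∃ a : ℂ, ∃ ha : a ≠ 0, meromorphicOrderAt R a < 0 ∧ ‖a‖ ≤ ρ ∧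
        ∃ n : ℕ, z = a * q ^ (-(n : ℤ)))}) :
    ∃ y : ℂ → ℂ, MeromorphicOn y {x : ℂ | x ≠ 0} ∧
      (∀ x : ℂ, x ≠ 0 → x ∉ S → AnalyticAt ℂ y x) ∧
      (∀ x : ℂ, x ≠ 0 → AnalyticAt ℂ R x → AnalyticAt ℂ y x → AnalyticAt ℂ y (q * x) →
        y (q * x) = y x + R x) := by
  classical
  have hq0 : q ≠ 0 := by
    intro hc
    rw [hc] at hq
    simp at hq
    linarith
  have habs0 : ∀ z : ℂ, z ≠ 0 → 0 < ‖z‖ := by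
    intro z hz
    simpa [norm_pos_iff] using hz
  set Rt : ℂ → ℂ := fun w => limUnder (𝓝[≠] w) R with hRtdef
  have hRtR : ∀ x : ℂ, AnalyticAt ℂ R x → Rt x = R x := by
    intro x hx
    exact (hx.continuousAt.tendsto.mono_left nhdsWithin_le_nhds).limUnder_eq
  have hRt_ev : ∀ z : ℂ, z ≠ 0 → Rt =ᶠ[𝓝[≠] z] R := by
    intro z hz
    filter_upwards [(hR z hz).eventually_analyticAt] with w hw
    exact hRtR w hw
  have hRt_mero : ∀ z : ℂ, z ≠ 0 → MeromorphicAt Rt z := fun z hz =>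
    (hR z hz).congr (hRt_ev z hz).symm
  have hRt_an : ∀ z : ℂ, ∀ hz : z ≠ 0, ¬(meromorphicOrderAt R z < 0) → AnalyticAt ℂ Rt z := by
    intro z hz h
    exact aux_Rt_analyticAt (hR z hz) (not_lt.mp h)
  have hpole : ∀ z : ℂ, ∀ hz : z ≠ 0, ¬ AnalyticAt ℂ Rt z → meromorphicOrderAt R z < 0 := by
    intro z hz h
    by_contra hc
    exact h (hRt_an z hz hc)
  -- choose a good outer radius m
  have hgood : ∃ m : ℝ, ρ < m ∧
      ∀ z : ℂ, ρ < ‖z‖ → ‖z‖ < m → AnalyticAt ℂ Rt z := by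
    set D : Set ℂ := {z : ℂ | z ≠ 0 ∧ ¬ AnalyticAt ℂ Rt z} with hDdef
    set K : Set ℂ := closedBall (0:ℂ) (ρ+1) \ ball (0:ℂ) ρ with hKdef
    have hKfin : (D ∩ K).Finite := by
      refine aux_finite_of_discrete ((isCompact_closedBall _ _).diff isOpen_ball) ?_
      intro z hz
      have hz0 : z ≠ 0 := by
        intro hc
        rw [hKdef] at hz
        obtain ⟨-, h2⟩ := hz
        refine h2 ?_
        rw [hc, mem_ball_zero_iff]
        simpa using hρ
      filter_upwards [(hRt_mero z hz0).eventually_analyticAt] with w hw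
      intro hcon
      exact hcon.2 hw
    set G : Set ℝ := ((fun z : ℂ => ‖z‖) '' (D ∩ K)) ∩ Set.Ioo ρ (ρ+1) with hGdef
    have hGfin : G.Finite := Set.Finite.subset (hKfin.image _) Set.inter_subset_left
    have hmemK : ∀ z : ℂ, ρ < ‖z‖ → ‖z‖ < ρ + 1 → z ∈ K := by
      intro z h1 h2
      rw [hKdef]
      constructor
      · rw [mem_closedBall_zero_iff]
        exact le_of_lt h2
      · rw [mem_ball_zero_iff]
        exact not_lt.mpr (le_of_lt h1)
    by_cases hGne : G.Nonempty
    · have hmemInf : sInf G ∈ G := Set.Nonempty.csInf_mem hGne hGfin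
      obtain ⟨-, hInf1, hInf2⟩ := hmemInf
      refine ⟨sInf G, hInf1, ?_⟩
      intro z h1 h2
      by_contra hna
      have hz0 : z ≠ 0 := by
        intro hc
        rw [hc] at h1
        simp at h1
        linarith
      have hmem : ‖z‖ ∈ G := by
        refine ⟨⟨z, ⟨⟨hz0, hna⟩, hmemK z h1 (by linarith)⟩, rfl⟩, h1, by linarith⟩
      have := csInf_le hGfin.bddBelow hmem
      linarith
    · refine ⟨ρ + 1, by linarith, ?_⟩
      intro z h1 h2
      by_contra hna
      have hz0 : z ≠ 0 := by
        intro hc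
        rw [hc] at h1
        simp at h1
        linarith
      exact hGne ⟨‖z‖, ⟨z, ⟨⟨hz0, hna⟩, hmemK z h1 h2⟩, rfl⟩, h1, h2⟩
  obtain ⟨m, hρm, hman⟩ := hgood
  have h0m : 0 < m := lt_trans hρ hρm
  -- split Rt
  obtain ⟨Rm, c0, s2, A, B, hρs2, hs2m, hA, hB, hRm_mero, hRm_an, hRp_an, hRm_bd, hRp_bd⟩ :=
    aux_split Rt ρ m hρ hρm hRt_mero hman
  -- backward sum
  obtain ⟨g1, hg1_mero, hg1_an, hg1_eq⟩ := aux_sum_back q hq Rm (2*m) A (by linarith) hA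
    hRm_mero
    (fun x hx => hRm_an x
      (by
        intro hc
        rw [hc] at hx
        simp at hx
        linarith)
      (Or.inl (by linarith)))
    hRm_bd
  -- forward sum
  set h2f : ℂ → ℂ := fun x => (Rt x - Rm x) - c0 with hh2f
  have hmero_h : ∀ x : ℂ, x ≠ 0 → MeromorphicAt h2f x := by
    intro x hx
    have := ((hRt_mero x hx).sub (hRm_mero x hx)).sub (MeromorphicAt.const c0 x)
    exact this.congr (Filter.Eventually.of_forall (fun w => rfl))
  have han_h : ∀ x : ℂ, ‖x‖ ≤ s2 → AnalyticAt ℂ h2f x := by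
    intro x hx
    have h1 := hRp_an x (Or.inl (lt_of_le_of_lt hx hs2m))
    have := h1.sub (analyticAt_const (v := c0))
    exact this
  obtain ⟨g2, hg2_mero, hg2_an, hg2_eq⟩ := aux_sum_fwd q hq h2f s2 B (lt_trans hρ hρs2) hB
    hmero_h han_h hRp_bd
  -- the q-logarithm
  obtain ⟨l, hl_mero, hl_an, hl_eq⟩ := aux_ell q hq
  refine ⟨fun x => -g1 x + g2 x + c0 * l x, ?_, ?_, ?_⟩
  · -- meromorphic on ℂ ∖ {0}
    intro x hx
    have hx' : x ≠ 0 := hx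
    have := ((hg1_mero x hx').neg.add (hg2_mero x hx')).add
      ((MeromorphicAt.const c0 x).mul (hl_mero x hx'))
    exact this.congr (Filter.Eventually.of_forall (fun w => rfl))
  · -- analytic off S
    intro x hx hxS
    rw [hS] at hxS
    have hg1a : AnalyticAt ℂ g1 x := by
      refine hg1_an x hx (fun n => ?_)
      have hne0 : q ^ n * x ≠ 0 := mul_ne_zero (pow_ne_zero n hq0) hx
      by_cases hAn : AnalyticAt ℂ Rt (q ^ n * x)
      · exact hRm_an _ hne0 (Or.inr hAn)
      · rcases le_or_gt (‖q ^ n * x‖) ρ with hle | hlt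
        · exfalso
          refine hxS (Or.inr (Or.inr ⟨q ^ n * x, hne0, hpole _ hne0 hAn, hle, n, ?_⟩))
          rw [zpow_neg, zpow_natCast]
          field_simp
        · exact hRm_an _ hne0 (Or.inl hlt)
    have han_h2 : ∀ pt : ℂ, (‖pt‖ < m ∨ (pt ≠ 0 ∧ AnalyticAt ℂ Rt pt)) →
        AnalyticAt ℂ h2f pt := by
      intro pt hcond
      have := (hRp_an pt hcond).sub (analyticAt_const (v := c0))
      exact this
    have hg2a : AnalyticAt ℂ g2 x := by
      refine hg2_an x hx (fun n => ?_)
      have hne0 : (q ^ (n+1))⁻¹ * x ≠ 0 :=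
        mul_ne_zero (inv_ne_zero (pow_ne_zero (n+1) hq0)) hx
      by_cases hAn : AnalyticAt ℂ Rt ((q ^ (n+1))⁻¹ * x)
      · exact han_h2 ((q ^ (n+1))⁻¹ * x) (Or.inr ⟨hne0, hAn⟩)
      · rcases lt_or_ge (‖(q ^ (n+1))⁻¹ * x‖) m with hlt | hge
        · exact han_h2 _ (Or.inl hlt)
        · exfalso
          refine hxS (Or.inr (Or.inl ⟨(q ^ (n+1))⁻¹ * x, hne0, hpole _ hne0 hAn,
            by linarith, n+1, Nat.succ_le_succ (Nat.zero_le n), ?_⟩))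
          rw [zpow_natCast]
          field_simp
    have hla : AnalyticAt ℂ l x := by
      refine hl_an x hx (fun n hxe => ?_)
      exact hxS (Or.inl ⟨n, hxe⟩)
    exact (hg1a.neg.add hg2a).add (analyticAt_const.mul hla)
  · -- functional equation
    intro x hx hRx hyx hyqx
    have heqn : ∀ w : ℂ, w ≠ 0 → w ≠ 1 →
        (-g1 (q*w) + g2 (q*w) + c0 * l (q*w)) = (-g1 w + g2 w + c0 * l w) + Rt w := by
      intro w hw0 hw1
      rw [hg1_eq w hw0, hg2_eq w hw0, hl_eq w hw0 hw1]
      simp only [hh2f]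
      ring
    by_cases hx1 : x = 1
    · subst hx1
      have hev : ∀ᶠ w in 𝓝[≠] (1:ℂ),
          (-g1 (q*w) + g2 (q*w) + c0 * l (q*w)) = (-g1 w + g2 w + c0 * l w) + R w := by
        have h1 : ∀ᶠ w in 𝓝 (1:ℂ), AnalyticAt ℂ R w := hRx.eventually_analyticAt
        have h2 : ∀ᶠ w in 𝓝 (1:ℂ), w ≠ 0 := eventually_ne_nhds (by norm_num)
        filter_upwards [eventually_nhdsWithin_of_eventually_nhds h1,
          eventually_nhdsWithin_of_eventually_nhds h2, eventually_mem_nhdsWithin]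
          with w hw1 hw2 hw3
        have hw1' : w ≠ 1 := hw3
        rw [← hRtR w hw1]
        exact heqn w hw2 hw1'
      have ht1 : Filter.Tendsto (fun w => -g1 (q*w) + g2 (q*w) + c0 * l (q*w))
          (𝓝[≠] (1:ℂ)) (𝓝 (-g1 (q*1) + g2 (q*1) + c0 * l (q*1))) := by
        have hc : ContinuousAt (fun w => -g1 (q*w) + g2 (q*w) + c0 * l (q*w)) 1 := by
          have hy : ContinuousAt (fun z => -g1 z + g2 z + c0 * l z) (q*1) := hyqx.continuousAt
          have hmul : ContinuousAt (fun w : ℂ => q * w) 1 := by fun_prop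
          exact hy.comp hmul
        exact hc.tendsto.mono_left nhdsWithin_le_nhds
      have ht2 : Filter.Tendsto (fun w => (-g1 w + g2 w + c0 * l w) + R w)
          (𝓝[≠] (1:ℂ)) (𝓝 ((-g1 1 + g2 1 + c0 * l 1) + R 1)) := by
        have hc : ContinuousAt (fun w => (-g1 w + g2 w + c0 * l w) + R w) 1 :=
          hyx.continuousAt.add hRx.continuousAt
        exact hc.tendsto.mono_left nhdsWithin_le_nhds
      have := tendsto_nhds_unique (ht1.congr' hev) ht2
      exact this
    · have := heqn x hx hx1
      rw [hRtR x hRx] at this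
      exact this
end
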